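/- arXiv:2312.10000 — 6 statements merged into one kernel-verified Lean document; each statement's English description precedes it below -/
import Mathlib

section
/- Let λ be a cardinal, (p_n)_{n<ω} a sequence of conditions in the countable support product S^λ and (F_n)_{n<ω} a sequence with F_n a finite subset of dom(p_n), such that: (1) p_{n+1} ≤_{F_n,n} p_n for all n < ω; (2) F_n ⊆ F_{n+1} for all n < ω and ⋃_{n<ω} F_n = ⋃_{n<ω} dom(p_n). Then p := ⋂_{n<ω} p_n, defined by dom(p) := ⋃_{n<ω} dom(p_n) and p(α) := ⋂{p_n(α) : n < ω, α ∈ dom(p_n)}, is a condition in S^λ and p ≤_{F_n,n} p_n for all n < ω. -/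
/-- A tree on `2`: a set of finite binary sequences closed under initial segments. -/
def IsBinTree (T : Set (List Bool)) : Prop :=
  ∀ s ∈ T, ∀ t : List Bool, t <+: s → t ∈ T

/-- `s` is a splitting node of `T`. -/
def IsSplitNode (T : Set (List Bool)) (s : List Bool) : Prop :=
  s ∈ T ∧ s ++ [false] ∈ T ∧ s ++ [true] ∈ T

/-- `T` is a perfect tree (a condition of Sacks forcing). -/
def IsPerfectTree (T : Set (List Bool)) : Prop :=
  IsBinTree T ∧ T.Nonempty ∧ ∀ s ∈ T, ∃ t, s <+: t ∧ IsSplitNode T t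

/-- `t` is the (unique) minimal splitting node of `T` extending `s`, i.e. `t = sucspl_T(s)`. -/
def IsMinSplit (T : Set (List Bool)) (s t : List Bool) : Prop :=
  IsSplitNode T t ∧ s <+: t ∧ ∀ t', IsSplitNode T t' → s <+: t' → t <+: t'

/-- The `n`-th splitting level `spl_n(T)`. -/
def splLevel (T : Set (List Bool)) : ℕ → Set (List Bool)
  | 0 => {t | IsMinSplit T [] t}
  | n + 1 => {t | ∃ s ∈ splLevel T n, ∃ i : Bool, IsMinSplit T (s ++ [i]) t}

/-- `S ≤ₙ T` iff `S ⊆ T` and `spl_n(S) = spl_n(T)`. -/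
def SacksLeN (S T : Set (List Bool)) (n : ℕ) : Prop :=
  S ⊆ T ∧ splLevel S n = splLevel T n

/-- A condition of the countable support product `S^λ` (over the index type `ι` of size `λ`),
given by its domain `D` and values `f`: the domain is countable and all values on the domain
are perfect trees. -/
def IsCSCond {ι : Type*} (D : Set ι) (f : ι → Set (List Bool)) : Prop :=
  D.Countable ∧ ∀ α ∈ D, IsPerfectTree (f α)

/-- The ordering of `S^λ`: `(D₁, f₁) ≤ (D₂, f₂)` iff `D₂ ⊆ D₁` and
`f₁ α ⊆ f₂ α` for all `α ∈ D₂`. -/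
def CSLe {ι : Type*} (D₁ : Set ι) (f₁ : ι → Set (List Bool))
    (D₂ : Set ι) (f₂ : ι → Set (List Bool)) : Prop :=
  D₂ ⊆ D₁ ∧ ∀ α ∈ D₂, f₁ α ⊆ f₂ α

/-- `p ≤_{F,n} q` iff `p ≤ q` and `p(α) ≤ₙ q(α)` for all `α ∈ F`. -/
def CSLeFN {ι : Type*} (D₁ : Set ι) (f₁ : ι → Set (List Bool))
    (D₂ : Set ι) (f₂ : ι → Set (List Bool)) (F : Finset ι) (n : ℕ) : Prop :=
  CSLe D₁ f₁ D₂ f₂ ∧ ∀ α ∈ F, SacksLeN (f₁ α) (f₂ α) n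

lemma prefix_antisymm {l1 l2 : List Bool} (h1 : l1 <+: l2) (h2 : l2 <+: l1) : l1 = l2 :=
  h1.eq_of_length (le_antisymm h1.length_le h2.length_le)

lemma snoc_prefix_length {x u : List Bool} {b : Bool} (h : x ++ [b] <+: u) :
    x.length < u.length := by
  have := h.length_le; simp at this; omega

lemma snoc_not_prefix_back {x u : List Bool} {b : Bool} (h : x ++ [b] <+: u)
    (h2 : u <+: x) : False := by
  have h1 := snoc_prefix_length h
  have := h2.length_le
  omega

lemma prefix_of_snoc_prefix {x u : List Bool} {b : Bool} (h : x ++ [b] <+: u) : x <+: u :=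
  (List.prefix_append x [b]).trans h

lemma exists_snoc_prefix {t s : List Bool} (h : t <+: s) (hne : t ≠ s) :
    ∃ b, t ++ [b] <+: s := by
  obtain ⟨r, rfl⟩ := h
  cases r with
  | nil => simp at hne
  | cons b r => exact ⟨b, ⟨r, by simp⟩⟩

lemma prefix_cons {x y : List Bool} (a : Bool) (h : x <+: y) : a :: x <+: a :: y := by
  obtain ⟨r, rfl⟩ := h; exact ⟨r, rfl⟩

lemma prefix_trichotomy (x y : List Bool) :
    x <+: y ∨ y <+: x ∨
      ∃ w b, w ++ [b] <+: x ∧ w ++ [!b] <+: y ∧ ∀ u, u <+: x → u <+: y → u <+: w := by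
  induction x generalizing y with
  | nil => exact Or.inl List.nil_prefix
  | cons a x ih =>
    cases y with
    | nil => exact Or.inr (Or.inl List.nil_prefix)
    | cons c y =>
      by_cases hac : a = c
      · subst hac
        rcases ih y with h | h | ⟨w, b, h1, h2, h3⟩
        · exact Or.inl (prefix_cons a h)
        · exact Or.inr (Or.inl (prefix_cons a h))
        · refine Or.inr (Or.inr ⟨a :: w, b, prefix_cons a h1, prefix_cons a h2, ?_⟩)
          intro u hu1 hu2
          cases u with
          | nil => exact List.nil_prefix
          | cons e u =>
            obtain ⟨r1, hr1⟩ := hu1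
            obtain ⟨r2, hr2⟩ := hu2
            simp only [List.cons_append, List.cons.injEq] at hr1 hr2
            rw [hr1.1]
            exact prefix_cons a (h3 u ⟨r1, hr1.2⟩ ⟨r2, hr2.2⟩)
      · have hc : c = !a := by cases a <;> cases c <;> simp_all
        refine Or.inr (Or.inr ⟨[], a, ⟨x, by simp⟩, ⟨y, by simp [hc]⟩, fun u hu1 hu2 => ?_⟩)
        cases u with
        | nil => exact List.nil_prefix
        | cons e u =>
          obtain ⟨r1, hr1⟩ := hu1
          obtain ⟨r2, hr2⟩ := hu2
          simp only [List.cons_append, List.cons.injEq] at hr1 hr2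
          rw [hr1.1] at hr2
          exact absurd hr2.1 hac

lemma split_of_bits {T : Set (List Bool)} (hT : IsBinTree T) {w : List Bool} {b : Bool}
    (h1 : w ++ [b] ∈ T) (h2 : w ++ [!b] ∈ T) : IsSplitNode T w := by
  refine ⟨hT _ h1 _ (List.prefix_append _ _), ?_, ?_⟩ <;> cases b <;> simp_all

lemma split_mono {S T : Set (List Bool)} (hST : S ⊆ T) {s : List Bool}
    (h : IsSplitNode S s) : IsSplitNode T s :=
  ⟨hST h.1, hST h.2.1, hST h.2.2⟩

lemma minsplit_unique {T : Set (List Bool)} {s t t' : List Bool}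
    (h : IsMinSplit T s t) (h' : IsMinSplit T s t') : t = t' :=
  prefix_antisymm (h.2.2 t' h'.1 h'.2.1) (h'.2.2 t h.1 h.2.1)

/-- existence of the minimal splitting node extending `s` in a perfect tree -/
lemma exists_minsplit {T : Set (List Bool)} (hT : IsPerfectTree T) {s : List Bool}
    (hs : s ∈ T) : ∃ t, IsMinSplit T s t := by
  obtain ⟨hTree, -, hperf⟩ := hT
  obtain ⟨t0, ht0s, ht0⟩ := hperf s hs
  have hP : ∃ n, ∃ w : List Bool, w.length = n ∧ IsSplitNode T w ∧ s <+: w :=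
    ⟨t0.length, t0, rfl, ht0, ht0s⟩
  classical
  obtain ⟨w, hwlen, hwsplit, hsw⟩ := Nat.find_spec hP
  refine ⟨w, hwsplit, hsw, fun v hv hsv => ?_⟩
  rcases prefix_trichotomy w v with h | h | ⟨u, b, h1, h2, h3⟩
  · exact h
  · -- v <+: w : then v has length ≥ find, so v = w
    have hge : ¬ v.length < Nat.find hP := fun hlt => Nat.find_min hP hlt ⟨v, rfl, hv, hsv⟩
    have : v = w := h.eq_of_length (le_antisymm h.length_le (by omega))
    rw [this]
  · -- incomparable: common split node u shorter than w, contradiction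
    exfalso
    have husplit : IsSplitNode T u :=
      split_of_bits hTree (hTree _ hwsplit.1 _ h1) (hTree _ hv.1 _ h2)
    have hsu : s <+: u := h3 s hsw hsv
    have : u.length < Nat.find hP := by
      have := snoc_prefix_length h1; omega
    exact Nat.find_min hP this ⟨u, rfl, husplit, hsu⟩

lemma splLevel_split {T : Set (List Bool)} {n : ℕ} {t : List Bool}
    (h : t ∈ splLevel T n) : IsSplitNode T t := by
  cases n with
  | zero => exact h.1
  | succ n => obtain ⟨s, -, i, hm⟩ := h; exact hm.1

lemma splLevel_length {T : Set (List Bool)} {n : ℕ} {t : List Bool}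
    (h : t ∈ splLevel T n) : n ≤ t.length := by
  induction n generalizing t with
  | zero => exact Nat.zero_le _
  | succ n ih =>
    obtain ⟨s, hs, i, hm⟩ := h
    have h1 := ih hs
    have h2 := snoc_prefix_length hm.2.1
    omega

/-- membership in `splLevel (n+1)` unfolded -/
lemma splLevel_succ_mem {T : Set (List Bool)} {n : ℕ} {u : List Bool} :
    u ∈ splLevel T (n + 1) ↔ ∃ s ∈ splLevel T n, ∃ i : Bool, IsMinSplit T (s ++ [i]) u :=
  Iff.rfl

/-- If `S ⊆ T` (both perfect) agree on splitting level `k+1`, they agree on level `k`. -/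
lemma level_down {S T : Set (List Bool)} (hS : IsPerfectTree S) (hT : IsPerfectTree T)
    (hST : S ⊆ T) {k : ℕ} (h : splLevel S (k + 1) = splLevel T (k + 1)) :
    splLevel S k = splLevel T k := by
  have hTk_sub_Sk : splLevel T k ⊆ splLevel S k := by
    intro t ht
    have htsplit : IsSplitNode T t := splLevel_split ht
    -- children in T
    obtain ⟨u, hu⟩ := exists_minsplit hT htsplit.2.1   -- minsplit of t ++ [false]
    obtain ⟨u1, hu1⟩ := exists_minsplit hT htsplit.2.2 -- minsplit of t ++ [true]
    have huS : u ∈ splLevel S (k + 1) := by rw [h]; exact ⟨t, ht, false, hu⟩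
    have hu1S : u1 ∈ splLevel S (k + 1) := by rw [h]; exact ⟨t, ht, true, hu1⟩
    -- t is a splitting node of S
    have huinS : u ∈ S := (splLevel_split huS).1
    have hu1inS : u1 ∈ S := (splLevel_split hu1S).1
    have htS : IsSplitNode S t :=
      ⟨hS.1 _ huinS _ (prefix_of_snoc_prefix hu.2.1),
       hS.1 _ huinS _ hu.2.1, hS.1 _ hu1inS _ hu1.2.1⟩
    -- the S-parent of u
    obtain ⟨s, hsS, j, hmS⟩ := huS
    -- show t = s
    have htu : t ++ [false] <+: u := hu.2.1
    have hsu : s ++ [j] <+: u := hmS.2.1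
    have hcomp := List.prefix_or_prefix_of_prefix (prefix_of_snoc_prefix htu)
      (prefix_of_snoc_prefix hsu)
    have hts : t = s := by
      rcases hcomp with hc | hc
      · -- t <+: s
        by_contra hne
        have : t ++ [false] <+: s := by
          refine List.prefix_of_prefix_length_le htu (prefix_of_snoc_prefix hsu) ?_
          have h1 := hc.length_le
          have h2 : t.length ≠ s.length := fun hl => hne (hc.eq_of_length hl)
          simp; omega
        have := hu.2.2 s (split_mono hST (splLevel_split hsS)) this
        exact snoc_not_prefix_back hsu this
      · -- s <+: t
        by_contra hne
        have : s ++ [j] <+: t := by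
          refine List.prefix_of_prefix_length_le hsu (prefix_of_snoc_prefix htu) ?_
          have h1 := hc.length_le
          have h2 : s.length ≠ t.length := fun hl => (hne (hc.eq_of_length hl).symm)
          simp; omega
        have := hmS.2.2 t htS this
        exact snoc_not_prefix_back htu this
    rw [hts]; exact hsS
  refine Set.Subset.antisymm ?_ hTk_sub_Sk
  intro s hs
  have hssplit : IsSplitNode S s := splLevel_split hs
  obtain ⟨u, hu⟩ := exists_minsplit hS hssplit.2.1  -- minsplit in S of s ++ [false]
  have huT : u ∈ splLevel T (k + 1) := by rw [← h]; exact ⟨s, hs, false, hu⟩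
  obtain ⟨t, htT, j, hmT⟩ := huT
  have htS : t ∈ splLevel S k := hTk_sub_Sk htT
  have hsu : s ++ [false] <+: u := hu.2.1
  have htu : t ++ [j] <+: u := hmT.2.1
  have hcomp := List.prefix_or_prefix_of_prefix (prefix_of_snoc_prefix hsu)
    (prefix_of_snoc_prefix htu)
  have hst : s = t := by
    rcases hcomp with hc | hc
    · by_contra hne
      have : s ++ [false] <+: t := by
        refine List.prefix_of_prefix_length_le hsu (prefix_of_snoc_prefix htu) ?_
        have h1 := hc.length_le
        have h2 : s.length ≠ t.length := fun hl => hne (hc.eq_of_length hl)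
        simp; omega
      have := hu.2.2 t (splLevel_split htS) this
      exact snoc_not_prefix_back htu this
    · by_contra hne
      have : t ++ [j] <+: s := by
        refine List.prefix_of_prefix_length_le htu (prefix_of_snoc_prefix hsu) ?_
        have h1 := hc.length_le
        have h2 : t.length ≠ s.length := fun hl => hne (hc.eq_of_length hl).symm
        simp; omega
      have := hmT.2.2 s (split_mono hST hssplit) this
      exact snoc_not_prefix_back hsu this
  rw [hst]; exact htT

/-- `≤ₘ` implies `≤ₙ` for `n ≤ m` between perfect trees. -/
lemma sacksLeN_down {S T : Set (List Bool)} (hS : IsPerfectTree S) (hT : IsPerfectTree T)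
    {m n : ℕ} (hnm : n ≤ m) (h : SacksLeN S T m) : SacksLeN S T n := by
  obtain ⟨k, rfl⟩ := Nat.exists_eq_add_of_le hnm
  induction k with
  | zero => simpa using h
  | succ k ih =>
    refine ih (Nat.le_add_right _ _) ?_
    exact ⟨h.1, level_down hS hT h.1 h.2⟩
lemma splLevel_zero_mem {T : Set (List Bool)} {t : List Bool} :
    t ∈ splLevel T 0 ↔ IsMinSplit T [] t := Iff.rfl

lemma splLevel_succ_mem' {T : Set (List Bool)} {n : ℕ} {u : List Bool} :
    u ∈ splLevel T (n + 1) ↔ ∃ s ∈ splLevel T n, ∃ i : Bool, IsMinSplit T (s ++ [i]) u :=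
  Iff.rfl

/-- Fusion for a single descending chain of perfect trees. -/
lemma chain_fusion (T : ℕ → Set (List Bool)) (hperf : ∀ m, IsPerfectTree (T m))
    (hchain : ∀ m, SacksLeN (T (m + 1)) (T m) m) :
    IsPerfectTree (⋂ m, T m) ∧ ∀ n, SacksLeN (⋂ m, T m) (T n) n := by
  have hdec : ∀ m n, m ≤ n → T n ⊆ T m := by
    intro m n hmn
    induction n with
    | zero => rw [Nat.le_zero.1 hmn]
    | succ n ih =>
      rcases Nat.lt_or_ge m (n+1) with h | h
      · exact ((hchain n).1).trans (ih (Nat.lt_succ_iff.1 h))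
      · rw [Nat.le_antisymm hmn h]
  set Tω := ⋂ m, T m with hTω
  have hsub : ∀ m, Tω ⊆ T m := fun m => Set.iInter_subset T m
  have hbin : IsBinTree Tω := by
    intro s hs t ht
    exact Set.mem_iInter.2 fun m => (hperf m).1 s (Set.mem_iInter.1 hs m) t ht
  have hlev : ∀ n m, n ≤ m → splLevel (T m) n = splLevel (T n) n := by
    intro n m hnm
    induction m with
    | zero => rw [Nat.le_zero.1 hnm]
    | succ m ih =>
      rcases Nat.lt_or_ge n (m+1) with h | h
      · have hn : n ≤ m := Nat.lt_succ_iff.1 h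
        rw [(sacksLeN_down (hperf (m+1)) (hperf m) hn (hchain m)).2, ih hn]
      · rw [Nat.le_antisymm hnm h]
  have hmemω : ∀ n t, t ∈ splLevel (T n) n → IsSplitNode Tω t := by
    intro n t ht
    have key : ∀ m, IsSplitNode (T m) t := by
      intro m
      rcases Nat.le_total n m with h | h
      · exact splLevel_split (by rw [hlev n m h]; exact ht)
      · exact split_mono (hdec m n h) (splLevel_split ht)
    exact ⟨Set.mem_iInter.2 fun m => (key m).1, Set.mem_iInter.2 fun m => (key m).2.1,
      Set.mem_iInter.2 fun m => (key m).2.2⟩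
  have hstem : ∃ t0, t0 ∈ splLevel (T 0) 0 := by
    obtain ⟨x, hx⟩ := (hperf 0).2.1
    have hnil : [] ∈ T 0 := (hperf 0).1 x hx [] List.nil_prefix
    obtain ⟨t0, ht0⟩ := exists_minsplit (hperf 0) hnil
    exact ⟨t0, ht0⟩
  have heq : ∀ n, splLevel Tω n = splLevel (T n) n := by
    intro n
    induction n with
    | zero =>
      obtain ⟨t0, ht0mem⟩ := hstem
      have ht0 : IsMinSplit (T 0) [] t0 := ht0mem
      have ht0ω : IsMinSplit Tω [] t0 :=
        ⟨hmemω 0 t0 ht0mem, List.nil_prefix,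
          fun v hv _ => ht0.2.2 v (split_mono (hsub 0) hv) List.nil_prefix⟩
      ext t
      constructor
      · intro ht
        rw [splLevel_zero_mem] at ht ⊢
        rw [minsplit_unique ht ht0ω]
        exact ht0
      · intro ht
        rw [splLevel_zero_mem] at ht ⊢
        rw [minsplit_unique ht ht0]
        exact ht0ω
    | succ n ih =>
      ext u
      constructor
      · intro hu
        obtain ⟨s, hsω, i, hmω⟩ := hu
        have hs' : s ∈ splLevel (T (n+1)) n := by
          rw [hlev n (n+1) (Nat.le_succ n), ← ih]; exact hsω
        have hssplit : IsSplitNode (T (n+1)) s := splLevel_split hs'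
        have hsi : s ++ [i] ∈ T (n+1) := by cases i; exacts [hssplit.2.1, hssplit.2.2]
        obtain ⟨u', hu'⟩ := exists_minsplit (hperf (n+1)) hsi
        have hu'Lvl : u' ∈ splLevel (T (n+1)) (n+1) := ⟨s, hs', i, hu'⟩
        have hu'ω : IsMinSplit Tω (s ++ [i]) u' :=
          ⟨hmemω (n+1) u' hu'Lvl, hu'.2.1,
            fun v hv hx => hu'.2.2 v (split_mono (hsub (n+1)) hv) hx⟩
        rw [minsplit_unique hmω hu'ω]
        exact hu'Lvl
      · intro hu
        obtain ⟨s, hs, i, hm⟩ := hu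
        have hsω : s ∈ splLevel Tω n := by
          rw [ih, ← hlev n (n+1) (Nat.le_succ n)]; exact hs
        exact ⟨s, hsω, i,
          ⟨hmemω (n+1) u ⟨s, hs, i, hm⟩, hm.2.1,
            fun v hv hx => hm.2.2 v (split_mono (hsub (n+1)) hv) hx⟩⟩
  -- existence of minimal splits in `Tω` above each splitting level
  have hchild : ∀ n t, t ∈ splLevel Tω n → ∀ i : Bool,
      ∃ u, u ∈ splLevel Tω (n+1) ∧ IsMinSplit Tω (t ++ [i]) u := by
    intro n t ht i
    have ht' : t ∈ splLevel (T (n+1)) n := by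
      rw [hlev n (n+1) (Nat.le_succ n), ← heq n]; exact ht
    have htsplit : IsSplitNode (T (n+1)) t := splLevel_split ht'
    have hti : t ++ [i] ∈ T (n+1) := by cases i; exacts [htsplit.2.1, htsplit.2.2]
    obtain ⟨u, hu⟩ := exists_minsplit (hperf (n+1)) hti
    have huLvl : u ∈ splLevel (T (n+1)) (n+1) := ⟨t, ht', i, hu⟩
    refine ⟨u, by rw [heq (n+1)]; exact huLvl,
      ⟨hmemω (n+1) u huLvl, hu.2.1,
        fun v hv hx => hu.2.2 v (split_mono (hsub (n+1)) hv) hx⟩⟩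
  -- comparability with minimal splits
  have hcompat : ∀ (x t s : List Bool), IsMinSplit Tω x t → x <+: s → s ∈ Tω →
      t <+: s ∨ s <+: t := by
    intro x t s hmin hxs hs
    rcases prefix_trichotomy t s with h | h | ⟨w, b, h1, h2, h3⟩
    · exact Or.inl h
    · exact Or.inr h
    · exfalso
      have hwsplit : IsSplitNode Tω w :=
        split_of_bits hbin (hbin _ hmin.1.1 _ h1) (hbin _ hs _ h2)
      have hxw : x <+: w := h3 x hmin.2.1 hxs
      exact snoc_not_prefix_back h1 (hmin.2.2 w hwsplit hxw)
  -- every node of Tω is comparable with some node on each splitting level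
  have hcomp2 : ∀ n, ∀ s ∈ Tω, ∃ t, t ∈ splLevel Tω n ∧ (t <+: s ∨ s <+: t) := by
    intro n
    induction n with
    | zero =>
      intro s hs
      obtain ⟨t0, ht0mem⟩ := hstem
      have ht0ω : t0 ∈ splLevel Tω 0 := by rw [heq 0]; exact ht0mem
      exact ⟨t0, ht0ω, hcompat [] t0 s ht0ω List.nil_prefix hs⟩
    | succ n ih =>
      intro s hs
      obtain ⟨t, ht, hcomp⟩ := ih s hs
      rcases hcomp with h | h
      · -- t <+: s
        by_cases hts : t = s
        · obtain ⟨u, huLvl, humin⟩ := hchild n t ht false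
          exact ⟨u, huLvl, Or.inr (hts ▸ prefix_of_snoc_prefix humin.2.1)⟩
        · obtain ⟨b, hb⟩ := exists_snoc_prefix h hts
          obtain ⟨u, huLvl, humin⟩ := hchild n t ht b
          exact ⟨u, huLvl, (hcompat (t ++ [b]) u s humin hb hs).symm.imp id id |>.symm⟩
      · -- s <+: t
        obtain ⟨u, huLvl, humin⟩ := hchild n t ht false
        exact ⟨u, huLvl, Or.inr (h.trans (prefix_of_snoc_prefix humin.2.1))⟩
  have hperfω : IsPerfectTree Tω := by
    refine ⟨hbin, ?_, ?_⟩
    · obtain ⟨t0, ht0mem⟩ := hstem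
      exact ⟨t0, (hmemω 0 t0 ht0mem).1⟩
    · intro s hs
      obtain ⟨t, htLvl, hcomp⟩ := hcomp2 s.length s hs
      rcases hcomp with h | h
      · have hlen : s.length ≤ t.length := splLevel_length htLvl
        have : t = s := h.eq_of_length (le_antisymm h.length_le hlen)
        exact ⟨s, List.prefix_refl s, this ▸ splLevel_split htLvl⟩
      · exact ⟨t, h, splLevel_split htLvl⟩
  exact ⟨hperfω, fun n => ⟨hsub n, heq n⟩⟩

/-- Fusion for the countable support product of Sacks forcing: given a fusion sequence
`(p n)` with finite sets `(F n)` as side conditions, the "intersection" condition, with domain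
`⋃ n, dom (p n)` and value at `α` the intersection of all `p n (α)` with `α ∈ dom (p n)`,
is a condition of `S^λ` and satisfies `p ≤_{F n, n} p n` for all `n`. -/
theorem csProduct_fusion {ι : Type*} (D : ℕ → Set ι) (p : ℕ → ι → Set (List Bool))
    (F : ℕ → Finset ι)
    (hcond : ∀ n, IsCSCond (D n) (p n))
    (hFdom : ∀ n, ↑(F n) ⊆ D n)
    (hstep : ∀ n, CSLeFN (D (n + 1)) (p (n + 1)) (D n) (p n) (F n) n)
    (hFmono : ∀ n, F n ⊆ F (n + 1))
    (hFcover : (⋃ n, (F n : Set ι)) = ⋃ n, D n) :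
    IsCSCond (⋃ n, D n) (fun α => ⋂ m, ⋂ (_ : α ∈ D m), p m α) ∧
      ∀ n, CSLeFN (⋃ m, D m) (fun α => ⋂ m, ⋂ (_ : α ∈ D m), p m α) (D n) (p n) (F n) n := by
  have hDle : ∀ {m n : ℕ}, m ≤ n → D m ⊆ D n := by
    intro m n hmn
    induction n with
    | zero => rw [Nat.le_zero.1 hmn]
    | succ n ih =>
      rcases Nat.lt_or_ge m (n+1) with h | h
      · exact (ih (Nat.lt_succ_iff.1 h)).trans (hstep n).1.1
      · rw [Nat.le_antisymm hmn h]
  have hFle : ∀ {m n : ℕ} {α : ι}, α ∈ F m → m ≤ n → α ∈ F n := by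
    intro m n α hm hmn
    induction n with
    | zero => rw [Nat.le_zero.1 hmn] at hm; exact hm
    | succ n ih =>
      rcases Nat.lt_or_ge m (n+1) with h | h
      · exact hFmono n (ih (Nat.lt_succ_iff.1 h))
      · rw [← Nat.le_antisymm hmn h]; exact hm
  have hFD : ∀ {n : ℕ} {α : ι}, α ∈ F n → α ∈ D n := fun {n α} h => hFdom n h
  have hanti : ∀ (α : ι) {m n : ℕ}, m ≤ n → α ∈ D m → p n α ⊆ p m α := by
    intro α m n hmn hα
    induction n with
    | zero => rw [Nat.le_zero.1 hmn]
    | succ n ih =>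
      rcases Nat.lt_or_ge m (n+1) with h | h
      · have hn : m ≤ n := Nat.lt_succ_iff.1 h
        exact ((hstep n).1.2 α (hDle hn hα)).trans (ih hn)
      · rw [Nat.le_antisymm hmn h]
  have hqeq : ∀ (α : ι) (k : ℕ), α ∈ D k →
      (⋂ m, ⋂ (_ : α ∈ D m), p m α) = ⋂ m, p (k + m) α := by
    intro α k hk
    apply Set.Subset.antisymm
    · intro x hx
      refine Set.mem_iInter.2 fun m => ?_
      exact Set.mem_iInter.1 (Set.mem_iInter.1 hx (k + m)) (hDle (Nat.le_add_right k m) hk)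
    · intro x hx
      refine Set.mem_iInter.2 fun m => Set.mem_iInter.2 fun hm => ?_
      rcases Nat.le_total k m with h | h
      · obtain ⟨j, rfl⟩ := Nat.exists_eq_add_of_le h
        exact Set.mem_iInter.1 hx j
      · exact hanti α h hm (by simpa using Set.mem_iInter.1 hx 0)
  have hchainAt : ∀ (α : ι) (k : ℕ), α ∈ F k →
      IsPerfectTree (⋂ m, p (k + m) α) ∧
        ∀ n, SacksLeN (⋂ m, p (k + m) α) (p (k + n) α) n := by
    intro α k hk
    have hFkm : ∀ m, α ∈ F (k + m) := fun m => hFle hk (Nat.le_add_right k m)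
    have hperf : ∀ m, IsPerfectTree (p (k + m) α) :=
      fun m => (hcond (k + m)).2 α (hFD (hFkm m))
    refine chain_fusion (fun m => p (k + m) α) hperf fun m => ?_
    have h1 : SacksLeN (p (k + m + 1) α) (p (k + m) α) (k + m) :=
      (hstep (k + m)).2 α (hFkm m)
    exact sacksLeN_down (hperf (m + 1)) (hperf m) (Nat.le_add_left m k) h1
  constructor
  · constructor
    · exact Set.countable_iUnion fun n => (hcond n).1
    · intro α hα
      have hαF : α ∈ ⋃ n, (F n : Set ι) := hFcover ▸ hα
      obtain ⟨_, ⟨k, rfl⟩, hk⟩ := hαF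
      have hk' : α ∈ F k := hk
      show IsPerfectTree (⋂ m, ⋂ (_ : α ∈ D m), p m α)
      rw [hqeq α k (hFD hk')]
      exact (hchainAt α k hk').1
  · intro n
    refine ⟨⟨Set.subset_iUnion D n, fun α hα x hx => ?_⟩, fun α hα => ?_⟩
    · exact Set.mem_iInter.1 (Set.mem_iInter.1 hx n) hα
    · -- α ∈ F n : SacksLeN (q α) (p n α) n
      have hDn : α ∈ D n := hFD hα
      have hchain := hchainAt α n hα
      have hsubq : (⋂ m, ⋂ (_ : α ∈ D m), p m α) ⊆ p n α := by
        intro x hx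
        exact Set.mem_iInter.1 (Set.mem_iInter.1 hx n) hDn
      refine ⟨hsubq, ?_⟩
      have heq1 : splLevel (⋂ m, p (n + m) α) n = splLevel (p (n + n) α) n :=
        ((hchain.2) n).2
      -- glue: splLevel (p (n + j) α) n = splLevel (p n α) n
      have hglue : ∀ j, splLevel (p (n + j) α) n = splLevel (p n α) n := by
        intro j
        induction j with
        | zero => rfl
        | succ j ih =>
          have hmem : α ∈ F (n + j) := hFle hα (Nat.le_add_right n j)
          have hperf1 : IsPerfectTree (p (n + j + 1) α) :=
            (hcond (n + j + 1)).2 α (hFD (hFmono _ hmem))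
          have hperf2 : IsPerfectTree (p (n + j) α) :=
            (hcond (n + j)).2 α (hFD hmem)
          have h1 : SacksLeN (p (n + j + 1) α) (p (n + j) α) (n + j) :=
            (hstep (n + j)).2 α hmem
          have h2 := (sacksLeN_down hperf1 hperf2 (Nat.le_add_right n j) h1).2
          rw [← ih, ← h2]
          rfl
      show splLevel (⋂ m, ⋂ (_ : α ∈ D m), p m α) n = splLevel (p n α) n
      rw [hqeq α n hDn, heq1, hglue n]
end

section
/- Let λ be a cardinal, p ∈ S^λ, F a finite subset of dom(p), n < ω, and let D ⊆ S^λ be open dense below p. Then there is q ≤_{F,n} p such that q↾σ ∈ D for every σ suitable for p, F and n. -/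
/-- `σ` is suitable for `p = (D, f)`, `F` and `n`:
`σ(α) ∈ spl_n(p(α))⌢2` for every `α ∈ F`. -/
def Suitable {ι : Type*} (f : ι → Set (List Bool)) (F : Finset ι) (n : ℕ)
    (σ : ι → List Bool) : Prop :=
  ∀ α ∈ F, ∃ s ∈ splLevel (f α) n, ∃ i : Bool, σ α = s ++ [i]

/-- The values of the restricted condition `p↾σ`:
`(p↾σ)(α) = p(α)_{σ(α)}` for `α ∈ F`, and `(p↾σ)(α) = p(α)` otherwise. -/
def restrictVal {ι : Type*} [DecidableEq ι] (f : ι → Set (List Bool)) (F : Finset ι)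
    (σ : ι → List Bool) : ι → Set (List Bool) :=
  fun α => if α ∈ F then {t ∈ f α | σ α <+: t ∨ t <+: σ α} else f α


namespace SacksAux

/-- longest common prefix of two binary sequences -/
def lcp : List Bool → List Bool → List Bool
  | a :: s, b :: t => if a = b then a :: lcp s t else []
  | _, _ => []

theorem lcp_prefix_left : ∀ s t : List Bool, lcp s t <+: s
  | [], t => by simp [lcp]
  | a :: s, [] => by simp [lcp]
  | a :: s, b :: t => by
    simp only [lcp]
    split
    · exact List.cons_prefix_cons.2 ⟨rfl, lcp_prefix_left s t⟩
    · exact List.nil_prefix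

theorem lcp_prefix_right : ∀ s t : List Bool, lcp s t <+: t
  | [], t => by simp [lcp]
  | a :: s, [] => by simp [lcp]
  | a :: s, b :: t => by
    simp only [lcp]
    split
    · next h => exact List.cons_prefix_cons.2 ⟨h, lcp_prefix_right s t⟩
    · exact List.nil_prefix

theorem prefix_lcp : ∀ (u s t : List Bool), u <+: s → u <+: t → u <+: lcp s t
  | [], _, _, _, _ => List.nil_prefix
  | a :: u, [], t, hs, ht => by simp at hs
  | a :: u, s, [], hs, ht => by simp at ht
  | a :: u, b :: s, c :: t, hs, ht => by
    obtain ⟨rfl, hs'⟩ := List.cons_prefix_cons.1 hs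
    obtain ⟨rfl, ht'⟩ := List.cons_prefix_cons.1 ht
    simp only [lcp, if_pos rfl]
    exact List.cons_prefix_cons.2 ⟨rfl, prefix_lcp u s t hs' ht'⟩

theorem exists_split_bit {s t : List Bool} (hst : ¬ s <+: t) (hts : ¬ t <+: s) :
    ∃ u b c, b ≠ c ∧ u ++ [b] <+: s ∧ u ++ [c] <+: t ∧
      ∀ w : List Bool, w <+: s → w <+: t → w <+: u := by
  have hus := lcp_prefix_left s t
  have hut := lcp_prefix_right s t
  set u := lcp s t with hu
  obtain ⟨r, hr⟩ := id hus
  obtain ⟨r', hr'⟩ := id hut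
  have hrne : r ≠ [] := by rintro rfl; simp only [List.append_nil] at hr; exact hst (hr ▸ hut)
  have hrne' : r' ≠ [] := by rintro rfl; simp only [List.append_nil] at hr'; exact hts (hr' ▸ hus)
  obtain ⟨b, r, rfl⟩ := List.exists_cons_of_ne_nil hrne
  obtain ⟨c, r', rfl⟩ := List.exists_cons_of_ne_nil hrne'
  have hbs : u ++ [b] <+: s := ⟨r, by rw [← hr]; simp⟩
  have hct : u ++ [c] <+: t := ⟨r', by rw [← hr']; simp⟩
  refine ⟨u, b, c, ?_, hbs, hct, fun w hws hwt => prefix_lcp w s t hws hwt⟩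
  rintro rfl
  have := (prefix_lcp _ s t hbs hct).length_le
  simp [← hu] at this

end SacksAux

section TreeLemmas
open SacksAux

variable {T : Set (List Bool)}

theorem IsMinSplit.unique {s t t' : List Bool}
    (h : IsMinSplit T s t) (h' : IsMinSplit T s t') : t = t' :=
  (h.2.2 t' h'.1 h'.2.1).eq_of_length_le (h'.2.2 t h.1 h.2.1).length_le

theorem splLevel_isSplit : ∀ {m : ℕ} {t : List Bool}, t ∈ splLevel T m → IsSplitNode T t
  | 0, t, h => h.1
  | m + 1, t, h => by obtain ⟨s, hs, i, h⟩ := h; exact h.1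

theorem splitNode_child (h : IsSplitNode T t) (j : Bool) : t ++ [j] ∈ T := by
  cases j
  · exact h.2.1
  · exact h.2.2

theorem nil_mem_of_perfect (hT : IsPerfectTree T) : [] ∈ T := by
  obtain ⟨t, ht⟩ := hT.2.1
  exact hT.1 t ht [] List.nil_prefix

theorem exists_minSplit (hT : IsPerfectTree T) {s : List Bool} (hs : s ∈ T) :
    ∃ t, IsMinSplit T s t := by
  classical
  have hex : ∃ k, ∃ t, IsSplitNode T t ∧ s <+: t ∧ t.length = k := by
    obtain ⟨t, hst, ht⟩ := hT.2.2 s hs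
    exact ⟨t.length, t, ht, hst, rfl⟩
  obtain ⟨t, htsp, hst, hlen⟩ := Nat.find_spec hex
  refine ⟨t, htsp, hst, ?_⟩
  intro t' ht' hst'
  by_cases h1 : t <+: t'
  · exact h1
  exfalso
  by_cases h2 : t' <+: t
  · have hle : t.length ≤ t'.length := hlen ▸ Nat.find_min' hex ⟨t', ht', hst', rfl⟩
    exact h1 ((h2.eq_of_length_le hle) ▸ List.prefix_rfl)
  obtain ⟨u, b, c, hbc, hub, huc, hmax⟩ := exists_split_bit h1 h2
  have hsu : s <+: u := hmax s hst hst'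
  have huT : u ∈ T := hT.1 t htsp.1 u ((List.prefix_append u [b]).trans hub)
  have hall : ∀ j : Bool, u ++ [j] ∈ T := by
    intro j
    have hbT : u ++ [b] ∈ T := hT.1 t htsp.1 _ hub
    have hcT : u ++ [c] ∈ T := hT.1 t' ht'.1 _ huc
    cases b <;> cases c <;> cases j <;> simp_all
  have husplit : IsSplitNode T u := ⟨huT, hall false, hall true⟩
  have hfind : Nat.find hex ≤ u.length := Nat.find_min' hex ⟨u, husplit, hsu, rfl⟩
  have : u.length + 1 ≤ t.length := by simpa using hub.length_le
  omega

theorem splLevel_prefix_le :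
    ∀ (m k : ℕ) {s t : List Bool}, s ∈ splLevel T k → t ∈ splLevel T m → s <+: t →
      k ≤ m ∧ (k = m → s = t) := by
  intro m
  induction m with
  | zero =>
    intro k s t hs ht hst
    cases k with
    | zero => exact ⟨le_refl _, fun _ => IsMinSplit.unique hs ht⟩
    | succ k =>
      exfalso
      obtain ⟨s', hs', i, hmin⟩ := hs
      have h1 : t <+: s' := ht.2.2 s' (splLevel_isSplit hs') List.nil_prefix
      have h2 := hmin.2.1.length_le
      have h3 := hst.length_le
      have h4 := h1.length_le
      simp only [List.length_append, List.length_singleton] at h2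
      omega
  | succ m ih =>
    intro k s t hs ht hst
    obtain ⟨t', ht', j, hjt⟩ := ht
    cases k with
    | zero => exact ⟨Nat.zero_le _, fun h => absurd h (Nat.succ_ne_zero m).symm⟩
    | succ k =>
      obtain ⟨s', hs', i, his⟩ := hs
      have hs's : s' <+: s := (List.prefix_append s' [i]).trans his.2.1
      have hs't : s' <+: t := hs's.trans hst
      have ht't : t' ++ [j] <+: t := hjt.2.1
      have hs'pref : s' <+: t' := by
        rcases List.prefix_or_prefix_of_prefix hs't ((List.prefix_append t' [j]).trans ht't)
          with h | h
        · exact h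
        by_cases he : t' = s'
        · rw [he]
        exfalso
        obtain ⟨r, hr⟩ := id h
        have hrne : r ≠ [] := by rintro rfl; simp only [List.append_nil] at hr; exact he hr
        obtain ⟨b, r, rfl⟩ := List.exists_cons_of_ne_nil hrne
        have hbpre : t' ++ [b] <+: s' := ⟨r, by rw [← hr]; simp⟩
        have hbt : t' ++ [b] <+: t := hbpre.trans hs't
        have hbj : b = j := by
          have := List.prefix_of_prefix_length_le hbt ht't (by simp)
          have := this.eq_of_length (by simp)
          simpa using List.append_inj_right this rfl
        subst hbj
        have htles' : t <+: s' := hjt.2.2 s' (splLevel_isSplit hs') hbpre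
        have l1 := htles'.length_le
        have l2 := his.2.1.length_le
        have l3 := hst.length_le
        simp only [List.length_append, List.length_singleton] at l2
        omega
      obtain ⟨hle, heq⟩ := ih k hs' ht' hs'pref
      refine ⟨Nat.succ_le_succ hle, fun hkm => ?_⟩
      have hkm' : k = m := Nat.succ_injective hkm
      have hs't' : s' = t' := heq hkm'
      subst hs't'
      have hij : i = j := by
        have h1 : s' ++ [i] <+: t := his.2.1.trans hst
        have := List.prefix_of_prefix_length_le h1 hjt.2.1 (by simp)
        have := this.eq_of_length (by simp)
        simpa using List.append_inj_right this rfl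
      subst hij
      exact IsMinSplit.unique his hjt

theorem splLevel_antichain {n : ℕ} {s t : List Bool}
    (hs : s ∈ splLevel T n) (ht : t ∈ splLevel T n) (hst : s <+: t) : s = t :=
  (splLevel_prefix_le n n hs ht hst).2 rfl

theorem splLevel_exists_extend (hT : IsPerfectTree T) :
    ∀ (n m : ℕ), m ≤ n → ∀ s ∈ splLevel T m, ∃ t ∈ splLevel T n, s <+: t := by
  intro n
  induction n with
  | zero =>
    intro m hm s hs
    exact ⟨s, (Nat.le_zero.1 hm) ▸ hs, List.prefix_rfl⟩
  | succ n ih =>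
    intro m hm s hs
    rcases Nat.eq_or_lt_of_le hm with h | h
    · exact ⟨s, h ▸ hs, List.prefix_rfl⟩
    obtain ⟨t, htn, hst⟩ := ih m (Nat.lt_succ_iff.1 h) s hs
    have htT : t ++ [false] ∈ T := (splLevel_isSplit htn).2.1
    obtain ⟨t₁, ht₁⟩ := exists_minSplit hT htT
    exact ⟨t₁, ⟨t, htn, false, ht₁⟩,
      hst.trans ((List.prefix_append t [false]).trans ht₁.2.1)⟩

theorem splLevel_finite : ∀ m : ℕ, (splLevel T m).Finite := by
  intro m
  induction m with
  | zero => exact Set.Subsingleton.finite fun a ha b hb => IsMinSplit.unique ha hb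
  | succ m ih =>
    have hfin : (⋃ s ∈ splLevel T m, ⋃ i : Bool, {t | IsMinSplit T (s ++ [i]) t}).Finite := by
      refine Set.Finite.biUnion ih fun s _ => Set.finite_iUnion fun i => ?_
      exact Set.Subsingleton.finite fun a ha b hb => IsMinSplit.unique ha hb
    refine hfin.subset ?_
    rintro t ⟨s, hs, i, h⟩
    exact Set.mem_biUnion hs (Set.mem_iUnion.2 ⟨i, h⟩)

theorem exists_long (hT : IsPerfectTree T) : ∀ k : ℕ, ∃ t ∈ T, k ≤ t.length := by
  intro k
  induction k with
  | zero => obtain ⟨t, ht⟩ := hT.2.1; exact ⟨t, ht, Nat.zero_le _⟩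
  | succ k ih =>
    obtain ⟨t, htT, hlen⟩ := ih
    obtain ⟨w, htw, hw⟩ := hT.2.2 t htT
    refine ⟨w ++ [true], hw.2.2, ?_⟩
    have := htw.length_le
    simp only [List.length_append, List.length_singleton]
    omega

theorem mem_of_comparable_subtree {R : Set (List Bool)} {x : List Bool} (hR : IsPerfectTree R)
    (hcomp : ∀ t ∈ R, x <+: t ∨ t <+: x) : x ∈ R := by
  obtain ⟨t, htR, hlen⟩ := exists_long hR x.length
  rcases hcomp t htR with h | h
  · exact hR.1 t htR x h
  · exact (h.eq_of_length_le hlen) ▸ htR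

theorem restrict_perfect (hT : IsPerfectTree T) {x : List Bool} (hx : x ∈ T) :
    IsPerfectTree {t ∈ T | x <+: t ∨ t <+: x} := by
  refine ⟨?_, ⟨x, hx, Or.inr List.prefix_rfl⟩, ?_⟩
  · rintro s ⟨hsT, hs⟩ t hts
    refine ⟨hT.1 s hsT t hts, ?_⟩
    rcases hs with h | h
    · exact List.prefix_or_prefix_of_prefix h hts
    · exact Or.inr (hts.trans h)
  · rintro s ⟨hsT, hs⟩
    rcases hs with h | h
    · obtain ⟨w, hsw, hw⟩ := hT.2.2 s hsT
      have hxw : x <+: w := h.trans hsw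
      exact ⟨w, hsw, ⟨hw.1, Or.inl hxw⟩,
        ⟨hw.2.1, Or.inl (hxw.trans (List.prefix_append w [false]))⟩,
        ⟨hw.2.2, Or.inl (hxw.trans (List.prefix_append w [true]))⟩⟩
    · obtain ⟨w, hxw, hw⟩ := hT.2.2 x hx
      exact ⟨w, h.trans hxw, ⟨hw.1, Or.inl hxw⟩,
        ⟨hw.2.1, Or.inl (hxw.trans (List.prefix_append w [false]))⟩,
        ⟨hw.2.2, Or.inl (hxw.trans (List.prefix_append w [true]))⟩⟩

end TreeLemmas

section SwapLemmas

variable {T R : Set (List Bool)} {x : List Bool} {n : ℕ}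

theorem swap_subset (hRT : R ⊆ T) : R ∪ {t ∈ T | ¬ x <+: t} ⊆ T := by
  rintro t (h | ⟨h, -⟩)
  · exact hRT h
  · exact h

theorem swap_perfect (hT : IsPerfectTree T) (hR : IsPerfectTree R) (_hRT : R ⊆ T)
    (hcomp : ∀ t ∈ R, x <+: t ∨ t <+: x) :
    IsPerfectTree (R ∪ {t ∈ T | ¬ x <+: t}) := by
  have hxR : x ∈ R := mem_of_comparable_subtree hR hcomp
  refine ⟨?_, ⟨x, Or.inl hxR⟩, ?_⟩
  · rintro s (hs | ⟨hsT, hnx⟩) t hts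
    · exact Or.inl (hR.1 s hs t hts)
    · exact Or.inr ⟨hT.1 s hsT t hts, fun hxt => hnx (hxt.trans hts)⟩
  · rintro t (ht | ⟨htT, hnxt⟩)
    · obtain ⟨w, htw, hw⟩ := hR.2.2 t ht
      exact ⟨w, htw, Or.inl hw.1, Or.inl hw.2.1, Or.inl hw.2.2⟩
    · by_cases hc : t <+: x
      · obtain ⟨w, hxw, hw⟩ := hR.2.2 x hxR
        exact ⟨w, hc.trans hxw, Or.inl hw.1, Or.inl hw.2.1, Or.inl hw.2.2⟩
      · obtain ⟨w, htw, hw⟩ := hT.2.2 t htT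
        have hkey : ∀ v : List Bool, t <+: v → ¬ x <+: v := by
          intro v htv hxv
          rcases List.prefix_or_prefix_of_prefix htv hxv with h | h
          · exact hc h
          · exact hnxt h
        exact ⟨w, htw, Or.inr ⟨hw.1, hkey w htw⟩,
          Or.inr ⟨hw.2.1, hkey _ (htw.trans (List.prefix_append w [false]))⟩,
          Or.inr ⟨hw.2.2, hkey _ (htw.trans (List.prefix_append w [true]))⟩⟩

theorem swap_restrict (hR : IsBinTree R) (hxR : x ∈ R)
    (hcomp : ∀ t ∈ R, x <+: t ∨ t <+: x) :
    {t ∈ R ∪ {t ∈ T | ¬ x <+: t} | x <+: t ∨ t <+: x} = R := by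
  ext t
  constructor
  · rintro ⟨ht | ⟨htT, hnx⟩, hcmp⟩
    · exact ht
    · rcases hcmp with h | h
      · exact absurd h hnx
      · exact hR x hxR t h
  · intro ht
    exact ⟨Or.inl ht, hcomp t ht⟩

theorem swap_split_of_level {sh : List Bool} {i : Bool} (hsh : sh ∈ splLevel T n)
    (hxdef : x = sh ++ [i]) (hxR : x ∈ R) {m : ℕ} (hm : m ≤ n) {t : List Bool}
    (ht : t ∈ splLevel T m) : IsSplitNode (R ∪ {t ∈ T | ¬ x <+: t}) t := by
  have hsplit := splLevel_isSplit ht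
  have hkey : ∀ j : Bool, x <+: t ++ [j] → x = t ++ [j] := by
    intro j hx
    have hsht : sh <+: t := by
      have h1 : sh <+: t ++ [j] := (hxdef ▸ List.prefix_append sh [i]).trans hx
      refine List.prefix_of_prefix_length_le h1 (List.prefix_append t [j]) ?_
      have := hx.length_le
      simp only [hxdef, List.length_append, List.length_singleton] at this ⊢
      omega
    obtain ⟨hnm, heq⟩ := splLevel_prefix_le m n hsh ht hsht
    have hsheq : sh = t := heq (le_antisymm hnm hm)
    subst hsheq
    exact hx.eq_of_length (by simp [hxdef])
  have hnxt : ¬ x <+: t := by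
    intro hx
    have h1 : x <+: t ++ [true] := hx.trans (List.prefix_append t [true])
    have h2 := hkey true h1
    have := hx.length_le
    simp only [h2, List.length_append, List.length_singleton] at this
    omega
  refine ⟨Or.inr ⟨hsplit.1, hnxt⟩, ?_, ?_⟩
  · by_cases h : x <+: t ++ [false]
    · exact Or.inl ((hkey false h) ▸ hxR)
    · exact Or.inr ⟨hsplit.2.1, h⟩
  · by_cases h : x <+: t ++ [true]
    · exact Or.inl ((hkey true h) ▸ hxR)
    · exact Or.inr ⟨hsplit.2.2, h⟩

theorem minSplit_transfer {B : Set (List Bool)} (hBT : B ⊆ T) {u t : List Bool}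
    (h : IsMinSplit T u t) (hsp : IsSplitNode B t) : IsMinSplit B u t :=
  ⟨hsp, h.2.1, fun t' ht' hut' => h.2.2 t' ⟨hBT ht'.1, hBT ht'.2.1, hBT ht'.2.2⟩ hut'⟩

theorem minSplit_transfer_rev {B : Set (List Bool)} (hBT : B ⊆ T) {u t t₀ : List Bool}
    (h : IsMinSplit B u t) (h₀ : IsMinSplit T u t₀) (hsp : IsSplitNode B t₀) : t = t₀ := by
  have h1 : t₀ <+: t := h₀.2.2 t ⟨hBT h.1.1, hBT h.1.2.1, hBT h.1.2.2⟩ h.2.1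
  have h2 : t <+: t₀ := h.2.2 t₀ hsp h₀.2.1
  exact h2.eq_of_length_le h1.length_le

theorem swap_splLevel (hT : IsPerfectTree T) (hRT : R ⊆ T) {sh : List Bool} {i : Bool}
    (hsh : sh ∈ splLevel T n) (hxdef : x = sh ++ [i]) (hxR : x ∈ R) :
    ∀ m ≤ n, splLevel (R ∪ {t ∈ T | ¬ x <+: t}) m = splLevel T m := by
  have hBT : R ∪ {t ∈ T | ¬ x <+: t} ⊆ T := swap_subset hRT
  intro m
  induction m with
  | zero =>
    intro h0n
    ext t
    simp only [splLevel, Set.mem_setOf_eq]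
    constructor
    · intro ht
      obtain ⟨t₀, ht₀⟩ := exists_minSplit hT (nil_mem_of_perfect hT)
      have h₀lvl : t₀ ∈ splLevel T 0 := ht₀
      have hsp := swap_split_of_level hsh hxdef hxR (Nat.zero_le n) h₀lvl
      exact (minSplit_transfer_rev hBT ht ht₀ hsp) ▸ ht₀
    · intro ht
      exact minSplit_transfer hBT ht (swap_split_of_level hsh hxdef hxR (Nat.zero_le n) ht)
  | succ m ih =>
    intro hmn
    have ihm := ih (Nat.le_of_succ_le hmn)
    ext t
    simp only [splLevel, Set.mem_setOf_eq]
    constructor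
    · rintro ⟨s, hs, j, hmin⟩
      rw [ihm] at hs
      have hsT : s ++ [j] ∈ T := splitNode_child (splLevel_isSplit hs) j
      obtain ⟨t₀, ht₀⟩ := exists_minSplit hT hsT
      have h₀lvl : t₀ ∈ splLevel T (m + 1) := ⟨s, hs, j, ht₀⟩
      have hsp := swap_split_of_level hsh hxdef hxR hmn h₀lvl
      exact (minSplit_transfer_rev hBT hmin ht₀ hsp) ▸ ⟨s, hs, j, ht₀⟩
    · rintro ⟨s, hs, j, hmin⟩
      have hlvl : t ∈ splLevel T (m + 1) := ⟨s, hs, j, hmin⟩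
      exact ⟨s, ihm ▸ hs, j,
        minSplit_transfer hBT hmin (swap_split_of_level hsh hxdef hxR hmn hlvl)⟩

end SwapLemmas
/-- Let `p = (D, f)` be a condition of `S^λ`, `F ⊆ D` finite, `n < ω`, and let `𝒟` be a
set of conditions which is open dense below `p`. Then there is `q ≤_{F,n} p` such that
`q↾σ ∈ 𝒟` for every `σ` suitable for `p`, `F` and `n`. -/
theorem extend_into_dense_open {ι : Type*} [DecidableEq ι]
    (D : Set ι) (f : ι → Set (List Bool)) (F : Finset ι) (n : ℕ)
    (𝒟 : Set (Set ι × (ι → Set (List Bool))))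
    (hc : IsCSCond D f) (hF : ↑F ⊆ D)
    (hdense : ∀ (D' : Set ι) (f' : ι → Set (List Bool)), IsCSCond D' f' → CSLe D' f' D f →
        ∃ (D'' : Set ι) (f'' : ι → Set (List Bool)),
          (D'', f'') ∈ 𝒟 ∧ IsCSCond D'' f'' ∧ CSLe D'' f'' D' f')
    (hopen : ∀ (D' : Set ι) (f' : ι → Set (List Bool)), (D', f') ∈ 𝒟 →
        ∀ (D'' : Set ι) (f'' : ι → Set (List Bool)), IsCSCond D'' f'' →
          CSLe D'' f'' D' f' → CSLe D'' f'' D f → (D'', f'') ∈ 𝒟) :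
    ∃ (D' : Set ι) (f' : ι → Set (List Bool)), IsCSCond D' f' ∧ CSLeFN D' f' D f F n ∧
      ∀ σ, Suitable f F n σ → (D', restrictVal f' F σ) ∈ 𝒟 := by
  classical
  have hres_sub : ∀ (g : ι → Set (List Bool)) (σ : ι → List Bool) (α : ι),
      restrictVal g F σ α ⊆ g α := by
    intro g σ α
    simp only [restrictVal]
    split
    · exact Set.sep_subset _ _
    · exact subset_rfl
  have hres_mono : ∀ (g g' : ι → Set (List Bool)) (σ : ι → List Bool) (α : ι),
      g' α ⊆ g α → restrictVal g' F σ α ⊆ restrictVal g F σ α := by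
    intro g g' σ α h
    simp only [restrictVal]
    split
    · rintro t ⟨ht, hcm⟩; exact ⟨h ht, hcm⟩
    · exact h
  have key : ∀ (L : List (ι → List Bool)), (∀ σ ∈ L, Suitable f F n σ) →
      ∃ (D' : Set ι) (f' : ι → Set (List Bool)), IsCSCond D' f' ∧ CSLeFN D' f' D f F n ∧
        ∀ σ ∈ L, (D', restrictVal f' F σ) ∈ 𝒟 := by
    intro L
    induction L with
    | nil =>
      exact fun _ => ⟨D, f, hc, ⟨⟨subset_rfl, fun α _ => subset_rfl⟩,
        fun α _ => ⟨subset_rfl, rfl⟩⟩, fun σ h => absurd h List.not_mem_nil⟩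
    | cons σ L ih =>
      intro hsuit
      obtain ⟨Dk, fk, hck, hkfn, hmem⟩ := ih fun τ hτ => hsuit τ (List.mem_cons_of_mem _ hτ)
      have hσ : Suitable f F n σ := hsuit σ List.mem_cons_self
      have hDDk : D ⊆ Dk := hkfn.1.1
      have hFDk : ∀ α ∈ F, α ∈ Dk := fun α hα => hDDk (hF hα)
      have hspl : ∀ α ∈ F, splLevel (fk α) n = splLevel (f α) n := fun α hα => (hkfn.2 α hα).2
      have hσinfo : ∀ α ∈ F, ∃ s ∈ splLevel (fk α) n, ∃ i : Bool, σ α = s ++ [i] := by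
        intro α hα
        obtain ⟨s, hs, i, hsi⟩ := hσ α hα
        exact ⟨s, (hspl α hα).symm ▸ hs, i, hsi⟩
      have hσmem : ∀ α ∈ F, σ α ∈ fk α := by
        intro α hα
        obtain ⟨s, hs, i, hsi⟩ := hσinfo α hα
        exact hsi ▸ splitNode_child (splLevel_isSplit hs) i
      have hgcond : IsCSCond Dk (restrictVal fk F σ) := by
        refine ⟨hck.1, fun α hα => ?_⟩
        simp only [restrictVal]
        split
        · next hαF => exact restrict_perfect (hck.2 α hα) (hσmem α hαF)
        · exact hck.2 α hα
      have hgle : CSLe Dk (restrictVal fk F σ) D f :=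
        ⟨hDDk, fun α hα => (hres_sub fk σ α).trans (hkfn.1.2 α hα)⟩
      obtain ⟨D2, f2, hf2D, hc2, hle2⟩ := hdense Dk (restrictVal fk F σ) hgcond hgle
      set q : ι → Set (List Bool) :=
        fun α => if α ∈ F then f2 α ∪ {t ∈ fk α | ¬ σ α <+: t} else f2 α with hqdef
      have hf2sub : ∀ α ∈ Dk, f2 α ⊆ restrictVal fk F σ α := hle2.2
      have hf2comp : ∀ α ∈ F, ∀ t ∈ f2 α, σ α <+: t ∨ t <+: σ α := by
        intro α hα t ht
        have h := hf2sub α (hFDk α hα) ht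
        simp only [restrictVal, if_pos hα] at h
        exact h.2
      have hf2subfk : ∀ α ∈ F, f2 α ⊆ fk α := fun α hα =>
        (hf2sub α (hFDk α hα)).trans (hres_sub fk σ α)
      have hf2perf : ∀ α ∈ D2, IsPerfectTree (f2 α) := hc2.2
      have hDkD2 : Dk ⊆ D2 := hle2.1
      have hqperf : ∀ α ∈ F, IsPerfectTree (q α) := by
        intro α hα
        simp only [hqdef]; rw [if_pos hα]
        exact swap_perfect (hck.2 α (hFDk α hα)) (hf2perf α (hDkD2 (hFDk α hα)))
          (hf2subfk α hα) (hf2comp α hα)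
      have hqsubfk : ∀ α ∈ F, q α ⊆ fk α := by
        intro α hα
        simp only [hqdef]; rw [if_pos hα]
        exact swap_subset (hf2subfk α hα)
      have hqspl : ∀ α ∈ F, splLevel (q α) n = splLevel (fk α) n := by
        intro α hα
        obtain ⟨s, hs, i, hsi⟩ := hσinfo α hα
        simp only [hqdef]; rw [if_pos hα]
        exact swap_splLevel (hck.2 α (hFDk α hα)) (hf2subfk α hα) hs hsi
          (mem_of_comparable_subtree (hf2perf α (hDkD2 (hFDk α hα))) (hf2comp α hα)) n le_rfl
      have hqrest : ∀ α ∈ F, {t ∈ q α | σ α <+: t ∨ t <+: σ α} = f2 α := by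
        intro α hα
        simp only [hqdef]; rw [if_pos hα]
        exact swap_restrict (hf2perf α (hDkD2 (hFDk α hα))).1
          (mem_of_comparable_subtree (hf2perf α (hDkD2 (hFDk α hα))) (hf2comp α hα))
          (hf2comp α hα)
      have hDD2 : D ⊆ D2 := hDDk.trans hDkD2
      have hqsubf : ∀ α ∈ D, q α ⊆ f α := by
        intro α hα
        by_cases hαF : α ∈ F
        · exact (hqsubfk α hαF).trans (hkfn.1.2 α hα)
        · simp only [hqdef]; rw [if_neg hαF]
          exact ((hf2sub α (hDDk hα)).trans (hres_sub fk σ α)).trans (hkfn.1.2 α hα)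
      have hqcond : IsCSCond D2 q := by
        refine ⟨hc2.1, fun α hα => ?_⟩
        by_cases hαF : α ∈ F
        · exact hqperf α hαF
        · simp only [hqdef]; rw [if_neg hαF]; exact hf2perf α hα
      have hqfn : CSLeFN D2 q D f F n :=
        ⟨⟨hDD2, hqsubf⟩, fun α hα =>
          ⟨hqsubf α (hF hα), (hqspl α hα).trans (hspl α hα)⟩⟩
      have hqres_eq : restrictVal q F σ = f2 := by
        funext α
        by_cases hαF : α ∈ F
        · simp only [restrictVal]; rw [if_pos hαF]
          exact hqrest α hαF
        · simp only [restrictVal, hqdef]; rw [if_neg hαF, if_neg hαF]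
      refine ⟨D2, q, hqcond, hqfn, ?_⟩
      intro τ hτ
      rcases List.mem_cons.1 hτ with rfl | hτL
      · rw [hqres_eq]; exact hf2D
      · have hτs : Suitable f F n τ := hsuit τ (List.mem_cons_of_mem _ hτL)
        have hτmem : ∀ α ∈ F, τ α ∈ q α := by
          intro α hα
          obtain ⟨s, hs, i, hsi⟩ := hτs α hα
          have hs' : s ∈ splLevel (q α) n := by rw [hqspl α hα, hspl α hα]; exact hs
          exact hsi ▸ splitNode_child (splLevel_isSplit hs') i
        have hcond' : IsCSCond D2 (restrictVal q F τ) := by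
          refine ⟨hc2.1, fun α hα => ?_⟩
          simp only [restrictVal]
          split
          · next hαF => exact restrict_perfect (hqcond.2 α hα) (hτmem α hαF)
          · exact hqcond.2 α hα
        have hle' : CSLe D2 (restrictVal q F τ) Dk (restrictVal fk F τ) := by
          refine ⟨hDkD2, fun α hα => ?_⟩
          by_cases hαF : α ∈ F
          · exact hres_mono fk q τ α (hqsubfk α hαF)
          · simp only [restrictVal]; rw [if_neg hαF, if_neg hαF]
            simp only [hqdef]; rw [if_neg hαF]
            exact (hf2sub α hα).trans (hres_sub fk σ α)
        have hlef : CSLe D2 (restrictVal q F τ) D f :=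
          ⟨hDD2, fun α hα => (hres_sub q τ α).trans (hqsubf α hα)⟩
        exact hopen Dk (restrictVal fk F τ) (hmem τ hτL) D2 (restrictVal q F τ)
          hcond' hle' hlef
  -- finiteness of the set of normalized suitable functions
  set V : ι → Set (List Bool) :=
    fun α => {u | ∃ s ∈ splLevel (f α) n, ∃ i : Bool, u = s ++ [i]} with hVdef
  have hVfin : ∀ α, (V α).Finite := by
    intro α
    have himg : V α ⊆ (fun p : List Bool × Bool => p.1 ++ [p.2]) ''
        ((splLevel (f α) n) ×ˢ (Set.univ : Set Bool)) := by
      rintro u ⟨s, hs, i, rfl⟩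
      exact ⟨(s, i), ⟨hs, trivial⟩, rfl⟩
    exact (((splLevel_finite n).prod Set.finite_univ).image _).subset himg
  set Sig : Set (ι → List Bool) :=
    {σ | Suitable f F n σ ∧ ∀ α ∉ F, σ α = []} with hSigdef
  have hSigFin : Sig.Finite := by
    have hinj : Set.InjOn (fun (σ : ι → List Bool) (a : F) => σ a) Sig := by
      intro σ hσ τ hτ h
      funext α
      by_cases hα : α ∈ F
      · exact congrFun h ⟨α, hα⟩
      · rw [hσ.2 α hα, hτ.2 α hα]
    have himg : (fun (σ : ι → List Bool) (a : F) => σ a) '' Sig ⊆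
        Set.pi Set.univ (fun a : F => V a.1) := by
      rintro g ⟨σ, hσ, rfl⟩ a _
      obtain ⟨s, hs, i, hsi⟩ := hσ.1 a.1 a.2
      exact ⟨s, hs, i, hsi⟩
    exact Set.Finite.of_finite_image
      ((Set.Finite.pi fun a => hVfin a.1).subset himg) hinj
  obtain ⟨D', f', h1, h2, h3⟩ := key hSigFin.toFinset.toList (by
    intro σ hσL
    have hσS : σ ∈ Sig := by rwa [← hSigFin.mem_toFinset, ← Finset.mem_toList]
    exact hσS.1)
  refine ⟨D', f', h1, h2, ?_⟩
  intro σ hσs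
  set σ₀ : ι → List Bool := fun α => if α ∈ F then σ α else [] with hσ₀def
  have hσ₀ : σ₀ ∈ Sig := by
    refine ⟨fun α hα => ?_, fun α hα => by simp only [hσ₀def]; rw [if_neg hα]⟩
    obtain ⟨s, hs, i, hsi⟩ := hσs α hα
    exact ⟨s, hs, i, by simp only [hσ₀def]; rw [if_pos hα]; exact hsi⟩
  have hmemL : σ₀ ∈ hSigFin.toFinset.toList := by
    rw [Finset.mem_toList, hSigFin.mem_toFinset]; exact hσ₀
  have heq : restrictVal f' F σ₀ = restrictVal f' F σ := by
    funext α
    by_cases hα : α ∈ F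
    · simp only [restrictVal]; rw [if_pos hα, if_pos hα]
      have hv : σ₀ α = σ α := by simp only [hσ₀def]; rw [if_pos hα]
      rw [hv]
    · simp only [restrictVal]; rw [if_neg hα, if_neg hα]
  exact heq ▸ h3 σ₀ hmemL
end

section
/- Let p, q, r ⊆ 2^{<ω} be perfect trees with r ⊆ p, and let π̂ : [p] → [q] be the induced homeomorphism. Then the set s := {u ∈ 2^{<ω} : ∃x ∈ [r], u ⊆ π̂(x)} is a perfect tree with s ⊆ q, and π̂[[r]] = [s]. -/
/-- The set `spl(T)` of splitting nodes of `T`. -/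
def splSet (T : Set (List Bool)) : Set (List Bool) := {s | IsSplitNode T s}

/-- `π` is the induced bijection of the perfect trees `p` and `q`: a bijection from
`spl(p)` onto `spl(q)` with `π(stem(p)) = stem(q)` and
`π(sucspl_p(s⌢i)) = sucspl_q(π(s)⌢i)` for all `s ∈ spl(p)` and `i ∈ 2`. -/
def InducedBij (p q : Set (List Bool)) (π : List Bool → List Bool) : Prop :=
  Set.BijOn π (splSet p) (splSet q) ∧
  (∀ t, IsMinSplit p [] t → IsMinSplit q [] (π t)) ∧
  (∀ s ∈ splSet p, ∀ i : Bool, ∀ t, IsMinSplit p (s ++ [i]) t →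
      IsMinSplit q (π s ++ [i]) (π t))

/-- The initial segment `x↾n` of `x ∈ 2^ω`, as a finite binary sequence. -/
def initSeg (x : ℕ → Bool) (n : ℕ) : List Bool := List.ofFn (fun i : Fin n => x i)

/-- The set of branches `[T] = {x ∈ 2^ω : ∀ n, x↾n ∈ T}` of a tree `T`. -/
def branches (T : Set (List Bool)) : Set (ℕ → Bool) := {x | ∀ n, initSeg x n ∈ T}

/-- `s ⊆ x`: the finite sequence `s` is an initial segment of the branch `x`. -/
def PrefixOfBranch (s : List Bool) (x : ℕ → Bool) : Prop := initSeg x s.length = s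

/-- `g` is the map `[p] → [q]` induced by `π : spl(p) → spl(q)`, i.e.
`g(x) = ⋃ {π(s) : s ∈ spl(p), s ⊆ x}`; equivalently, for every `x ∈ [p]` and every
splitting node `s ⊆ x` of `p` we have `π(s) ⊆ g(x)`. -/
def InducedMap (p q : Set (List Bool)) (π : List Bool → List Bool)
    (g : (ℕ → Bool) → (ℕ → Bool)) : Prop :=
  ∀ x ∈ branches p, ∀ s ∈ splSet p, PrefixOfBranch s x → PrefixOfBranch (π s) (g x)

lemma initSeg_length (x : ℕ → Bool) (n : ℕ) : (initSeg x n).length = n := by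
  simp [initSeg]

lemma initSeg_take (x : ℕ → Bool) {m n : ℕ} (h : m ≤ n) :
    (initSeg x n).take m = initSeg x m := by
  apply List.ext_getElem
  · simp [initSeg]; omega
  · intro i h1 h2
    simp [initSeg]

lemma initSeg_prefix (x : ℕ → Bool) {m n : ℕ} (h : m ≤ n) :
    initSeg x m <+: initSeg x n := by
  rw [← initSeg_take x h]; exact List.take_prefix _ _

lemma initSeg_succ (x : ℕ → Bool) (n : ℕ) :
    initSeg x (n+1) = initSeg x n ++ [x n] := by
  rw [initSeg, List.ofFn_succ']
  simp [initSeg, List.concat_eq_append, Fin.castSucc]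

lemma pob_initSeg (x : ℕ → Bool) (n : ℕ) : PrefixOfBranch (initSeg x n) x := by
  simp [PrefixOfBranch, initSeg_length]

lemma pob_of_prefix {u : List Bool} {x : ℕ → Bool} {n : ℕ}
    (h : u <+: initSeg x n) : PrefixOfBranch u x := by
  have hlen : u.length ≤ n := by
    have := h.length_le; simpa [initSeg_length] using this
  have hu : u = (initSeg x n).take u.length := List.prefix_iff_eq_take.mp h
  rw [initSeg_take x hlen] at hu
  exact hu.symm

lemma pob_le {u v : List Bool} {x : ℕ → Bool}
    (h1 : PrefixOfBranch u x) (h2 : PrefixOfBranch v x) (h : u.length ≤ v.length) :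
    u <+: v := by
  rw [← h1, ← h2, ← initSeg_take x h]
  exact List.take_prefix _ _

lemma pob_eq {u : List Bool} {x : ℕ → Bool} (h : PrefixOfBranch u x) :
    u = initSeg x u.length := h.symm
lemma tree_mem_of_prefix {T : Set (List Bool)} (hT : IsBinTree T) {u v : List Bool}
    (h : u <+: v) (hv : v ∈ T) : u ∈ T := hT v hv u h

lemma pob_of_len_eq {x : ℕ → Bool} {t : List Bool} {n : ℕ}
    (hpre : initSeg x n <+: t) (hlen : t.length = n) : PrefixOfBranch t x := by
  have := hpre.eq_of_length (by simp [initSeg_length, hlen])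
  rw [← this]; exact pob_initSeg x n

lemma div_aux {p : Set (List Bool)} (hT : IsBinTree p) {x : ℕ → Bool}
    (hx : x ∈ branches p) :
    ∀ m n (t : List Bool), t ∈ p → initSeg x n <+: t → t.length ≤ n + m →
      PrefixOfBranch t x ∨
        ∃ j, n ≤ j ∧ initSeg x j <+: t ∧ IsSplitNode p (initSeg x j) := by
  intro m
  induction m with
  | zero =>
    intro n t _ hpre hlen
    have hn : n ≤ t.length := by simpa [initSeg_length] using hpre.length_le
    exact Or.inl (pob_of_len_eq hpre (by omega))
  | succ m ih =>
    intro n t ht hpre hlen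
    rcases Nat.lt_or_ge n t.length with hn | hn
    · have htake : t.take (n+1) = initSeg x n ++ [t[n]] := by
        apply List.ext_getElem
        · simp [initSeg_length]; omega
        · intro i h1 h2
          rcases Nat.lt_or_ge i n with h3 | h3
          · rw [List.getElem_take, List.getElem_append_left (by simpa [initSeg_length] using h3)]
            exact (hpre.getElem (by simpa [initSeg_length] using h3)).symm
          · have hi : i = n := by simp at h1; omega
            subst hi
            rw [List.getElem_take]
            rw [List.getElem_append_right] <;> simp [initSeg_length]
      by_cases hb : t[n] = x n
      · have hp1 : initSeg x (n+1) <+: t := by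
          rw [initSeg_succ, ← hb, ← htake]; exact List.take_prefix _ _
        rcases ih (n+1) t ht hp1 (by omega) with h | ⟨j, hj1, hj2, hj3⟩
        · exact Or.inl h
        · exact Or.inr ⟨j, by omega, hj2, hj3⟩
      · right
        refine ⟨n, le_refl n, hpre, ?_⟩
        have h1 : initSeg x n ++ [x n] ∈ p := by rw [← initSeg_succ]; exact hx (n+1)
        have h2 : initSeg x n ++ [t[n]] ∈ p := by
          rw [← htake]; exact tree_mem_of_prefix hT (List.take_prefix _ _) ht
        have both : ∀ b, initSeg x n ++ [b] ∈ p := by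
          intro b
          cases hxn : x n <;> cases htn : t[n] <;> cases b <;> simp_all
        exact ⟨hx n, both false, both true⟩
    · exact Or.inl (pob_of_len_eq hpre
        (le_antisymm hn (by simpa [initSeg_length] using hpre.length_le)))

lemma div {p : Set (List Bool)} (hT : IsBinTree p) {x : ℕ → Bool}
    (hx : x ∈ branches p) {t : List Bool} {n : ℕ} (ht : t ∈ p)
    (hpre : initSeg x n <+: t) :
    PrefixOfBranch t x ∨
      ∃ j, n ≤ j ∧ initSeg x j <+: t ∧ IsSplitNode p (initSeg x j) :=
  div_aux hT hx t.length n t ht hpre (by omega)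
lemma exists_split_prefix {p : Set (List Bool)} (hp : IsPerfectTree p) {x : ℕ → Bool}
    (hx : x ∈ branches p) (n : ℕ) :
    ∃ k, n ≤ k ∧ IsSplitNode p (initSeg x k) := by
  obtain ⟨t, hpre, hts⟩ := hp.2.2 (initSeg x n) (hx n)
  rcases div hp.1 hx hts.1 hpre with h | ⟨j, hj1, _, hj3⟩
  · refine ⟨t.length, by simpa [initSeg_length] using hpre.length_le, ?_⟩
    rwa [h]
  · exact ⟨j, hj1, hj3⟩

open scoped Classical in
lemma exists_minsplit_s6 {p : Set (List Bool)} (hp : IsPerfectTree p) {x : ℕ → Bool}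
    (hx : x ∈ branches p) (n : ℕ) :
    ∃ k, n ≤ k ∧ IsMinSplit p (initSeg x n) (initSeg x k) := by
  have hex : ∃ k, n ≤ k ∧ IsSplitNode p (initSeg x k) := exists_split_prefix hp hx n
  let k := Nat.find hex
  obtain ⟨hk1, hk2⟩ := Nat.find_spec hex
  refine ⟨k, hk1, hk2, initSeg_prefix x hk1, ?_⟩
  intro t' ht' hpre'
  rcases div hp.1 hx ht'.1 hpre' with h | ⟨j, hj1, hj2, hj3⟩
  · have hn : n ≤ t'.length := by simpa [initSeg_length] using hpre'.length_le
    have hsp : IsSplitNode p (initSeg x t'.length) := by rw [← pob_eq h]; exact ht'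
    have hle : k ≤ t'.length := Nat.find_le ⟨hn, hsp⟩
    calc initSeg x k <+: initSeg x t'.length := initSeg_prefix x hle
      _ = t' := (pob_eq h).symm
  · have hle : k ≤ j := Nat.find_le ⟨hj1, hj3⟩
    exact (initSeg_prefix x hle).trans hj2
lemma exists_one_step {T : Set (List Bool)} (hT : IsPerfectTree T) {l : List Bool}
    (hl : l ∈ T) : ∃ b, l ++ [b] ∈ T := by
  obtain ⟨t, hpre, hts⟩ := hT.2.2 l hl
  have ht1 : l <+: t ++ [true] := hpre.trans (List.prefix_append _ _)
  have hlen : l.length + 1 ≤ (t ++ [true]).length := by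
    have := hpre.length_le; simp only [List.length_append, List.length_cons, List.length_nil]; omega
  have hu : (t ++ [true]).take (l.length + 1) ∈ T :=
    tree_mem_of_prefix hT.1 (List.take_prefix _ _) hts.2.2
  set u := (t ++ [true]).take (l.length + 1) with hudef
  have hul : u.length = l.length + 1 := by rw [hudef, List.length_take]; omega
  have hlu : l <+: u := by
    rw [List.prefix_iff_eq_take] at ht1 ⊢
    rw [hudef, List.take_take]
    simpa [Nat.min_def] using ht1
  obtain ⟨d, hd⟩ := hlu
  have hdl : d.length = 1 := by
    have := congrArg List.length hd; simp [hul] at this; omega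
  obtain ⟨b, hb⟩ := List.length_eq_one_iff.mp hdl
  exact ⟨b, by rw [← hb, hd]; exact hu⟩

lemma exists_branch_through {T : Set (List Bool)} (hT : IsPerfectTree T) {s : List Bool}
    (hs : s ∈ T) : ∃ x ∈ branches T, PrefixOfBranch s x := by
  classical
  let F : {l : List Bool // l ∈ T} → {l : List Bool // l ∈ T} := fun l =>
    ⟨l.1 ++ [Classical.choose (exists_one_step hT l.2)],
      Classical.choose_spec (exists_one_step hT l.2)⟩
  let c : ℕ → {l : List Bool // l ∈ T} := fun n => F^[n] ⟨s, hs⟩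
  have hc_succ : ∀ n, ∃ b, (c (n+1)).1 = (c n).1 ++ [b] := by
    intro n
    refine ⟨Classical.choose (exists_one_step hT (c n).2), ?_⟩
    show (F^[n+1] ⟨s, hs⟩).1 = _
    rw [Function.iterate_succ_apply']
  have hc_len : ∀ n, (c n).1.length = s.length + n := by
    intro n
    induction n with
    | zero => simp [c]
    | succ n ih =>
      obtain ⟨b, hb⟩ := hc_succ n
      simp [hb, ih]; omega
  have hc_mono : ∀ m n, m ≤ n → (c m).1 <+: (c n).1 := by
    intro m n h
    induction n with
    | zero => simp_all
    | succ n ih =>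
      rcases Nat.lt_or_ge m (n+1) with h' | h'
      · obtain ⟨b, hb⟩ := hc_succ n
        exact (ih (by omega)).trans (by rw [hb]; exact List.prefix_append _ _)
      · have : m = n + 1 := by omega
        subst this; exact List.prefix_refl _
  let x : ℕ → Bool := fun n => (c (n+1)).1.getD n false
  have hx_get : ∀ n (k : ℕ) (h : n < (c k).1.length), x n = (c k).1[n] := by
    intro n k h
    have hk : n + 1 ≤ s.length + (n + 1) := by omega
    rcases Nat.le_total k (n+1) with hkn | hkn
    · have hpre := hc_mono k (n+1) hkn
      have : (c k).1[n] = (c (n+1)).1[n]'(h.trans_le hpre.length_le) := hpre.getElem h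
      have hb : n < (c (n+1)).1.length := by rw [hc_len]; omega
      rw [this]
      exact List.getD_eq_getElem _ _ hb
    · have hpre := hc_mono (n+1) k hkn
      have hn1 : n < (c (n+1)).1.length := by rw [hc_len]; omega
      have heq : (c (n+1)).1[n] = (c k).1[n]'(hn1.trans_le hpre.length_le) := hpre.getElem hn1
      rw [← heq]
      exact List.getD_eq_getElem _ _ hn1
  have hmain : ∀ m, initSeg x (s.length + m) = (c m).1 := by
    intro m
    apply List.ext_getElem
    · simp [initSeg_length, hc_len]
    · intro i h1 h2
      simp only [initSeg, List.getElem_ofFn]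
      exact hx_get i m h2
  have hxb : x ∈ branches T := by
    intro n
    have : initSeg x n = (initSeg x (s.length + n)).take n := (initSeg_take x (by omega)).symm
    rw [this, hmain]
    exact tree_mem_of_prefix hT.1 (List.take_prefix _ _) (c n).2
  refine ⟨x, hxb, ?_⟩
  have h0 := hmain 0
  simp [c] at h0
  rw [PrefixOfBranch]
  simpa using h0
lemma minsplit_step {p q : Set (List Bool)} {π : List Bool → List Bool}
    (hπ : InducedBij p q π) {x : ℕ → Bool} {a c : ℕ}
    (ha : IsSplitNode p (initSeg x a))
    (hc : IsMinSplit p (initSeg x (a+1)) (initSeg x c)) :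
    IsMinSplit q (π (initSeg x a) ++ [x a]) (π (initSeg x c)) := by
  apply hπ.2.2 (initSeg x a) ha (x a)
  rwa [← initSeg_succ]

lemma pi_mono {p q : Set (List Bool)} (hp : IsPerfectTree p)
    {π : List Bool → List Bool} (hπ : InducedBij p q π) {x : ℕ → Bool}
    (hx : x ∈ branches p) :
    ∀ d a b, b ≤ a + d → a ≤ b → IsSplitNode p (initSeg x a) →
      IsSplitNode p (initSeg x b) →
      (π (initSeg x a)).length ≤ (π (initSeg x b)).length := by
  intro d
  induction d with
  | zero =>
    intro a b h1 h2 _ _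
    have : a = b := by omega
    rw [this]
  | succ d ih =>
    intro a b h1 h2 hsa hsb
    rcases Nat.lt_or_ge a b with hab | hab
    · obtain ⟨c, hc1, hc2⟩ := exists_minsplit_s6 hp hx (a+1)
      have hcb : initSeg x c <+: initSeg x b :=
        hc2.2.2 (initSeg x b) hsb (initSeg_prefix x (by omega))
      have hcble : c ≤ b := by
        have := hcb.length_le; simpa [initSeg_length] using this
      have hq := minsplit_step hπ hsa hc2
      have hlt : (π (initSeg x a)).length < (π (initSeg x c)).length := by
        have := hq.2.1.length_le
        simp at this; omega
      have hle := ih c b (by omega) hcble hc2.1 hsb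
      omega
    · have : a = b := by omega
      rw [this]

lemma exists_pi_long {p q : Set (List Bool)} (hp : IsPerfectTree p)
    {π : List Bool → List Bool} (hπ : InducedBij p q π) {x : ℕ → Bool}
    (hx : x ∈ branches p) (N : ℕ) :
    ∃ k, IsSplitNode p (initSeg x k) ∧ N ≤ (π (initSeg x k)).length := by
  induction N with
  | zero =>
    obtain ⟨k, _, hk⟩ := exists_minsplit_s6 hp hx 0
    exact ⟨k, hk.1, Nat.zero_le _⟩
  | succ N ih =>
    obtain ⟨k, hk1, hk2⟩ := ih
    obtain ⟨k', _, hk'2⟩ := exists_minsplit_s6 hp hx (k+1)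
    refine ⟨k', hk'2.1, ?_⟩
    have hq := minsplit_step hπ hk1 hk'2
    have := hq.2.1.length_le
    simp at this; omega

lemma pob_pi {p q : Set (List Bool)} {π : List Bool → List Bool}
    {g : (ℕ → Bool) → (ℕ → Bool)} (hg : InducedMap p q π g) {x : ℕ → Bool}
    (hx : x ∈ branches p) {k : ℕ} (hk : IsSplitNode p (initSeg x k)) :
    PrefixOfBranch (π (initSeg x k)) (g x) :=
  hg x hx (initSeg x k) hk (pob_initSeg x k)

lemma g_mem_branches {p q : Set (List Bool)} (hp : IsPerfectTree p) (hq : IsPerfectTree q)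
    {π : List Bool → List Bool} (hπ : InducedBij p q π)
    {g : (ℕ → Bool) → (ℕ → Bool)} (hg : InducedMap p q π g) {x : ℕ → Bool}
    (hx : x ∈ branches p) : g x ∈ branches q := by
  intro n
  obtain ⟨k, hk1, hk2⟩ := exists_pi_long hp hπ hx n
  have hpob := pob_pi hg hx hk1
  have hmem : π (initSeg x k) ∈ q := (hπ.1.mapsTo hk1).1
  have heq : initSeg (g x) n = (π (initSeg x k)).take n := by
    conv_rhs => rw [← hpob]
    rw [initSeg_take (g x) hk2]
  rw [heq]
  exact tree_mem_of_prefix hq.1 (List.take_prefix _ _) hmem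
lemma initSeg_eq_take {s : List Bool} {x : ℕ → Bool} (h : PrefixOfBranch s x)
    {n : ℕ} (hn : n ≤ s.length) : initSeg x n = s.take n := by
  conv_rhs => rw [← h]
  rw [initSeg_take x hn]

lemma initSeg_eq_iff {x z : ℕ → Bool} {k : ℕ} :
    initSeg x k = initSeg z k ↔ (fun i : Fin k => x i) = (fun i : Fin k => z i) := by
  constructor
  · intro h; exact List.ofFn_injective h
  · intro h; rw [initSeg, initSeg, h]

lemma continuous_restrict (k : ℕ) :
    Continuous (fun (x : ℕ → Bool) (i : Fin k) => x i) :=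
  continuous_pi fun i => continuous_apply _

lemma isClosed_initSeg_mem (T : Set (List Bool)) (n : ℕ) :
    IsClosed {x : ℕ → Bool | initSeg x n ∈ T} := by
  have : {x : ℕ → Bool | initSeg x n ∈ T} =
      (fun (x : ℕ → Bool) (i : Fin n) => x i) ⁻¹' {f | List.ofFn f ∈ T} := rfl
  rw [this]
  exact (isClosed_discrete _).preimage (continuous_restrict n)

lemma isClosed_branches (T : Set (List Bool)) : IsClosed (branches T) := by
  have : branches T = ⋂ n, {x | initSeg x n ∈ T} := by
    ext x; simp [branches]
  rw [this]
  exact isClosed_iInter fun n => isClosed_initSeg_mem T n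

lemma isOpen_cyl (z : ℕ → Bool) (k : ℕ) :
    IsOpen {w : ℕ → Bool | initSeg w k = initSeg z k} := by
  have : {w : ℕ → Bool | initSeg w k = initSeg z k} =
      (fun (w : ℕ → Bool) (i : Fin k) => w i) ⁻¹' {fun i : Fin k => z i} := by
    ext w; simp [initSeg_eq_iff, Set.mem_preimage]
  rw [this]
  exact (isOpen_discrete _).preimage (continuous_restrict k)

example : CompactSpace (ℕ → Bool) := inferInstance
lemma exists_limit {r : Set (List Bool)} (x : ℕ → (ℕ → Bool))
    (hx : ∀ n, x n ∈ branches r) :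
    ∃ z ∈ branches r, ∀ k n, ∃ m, n ≤ m ∧ initSeg (x m) k = initSeg z k := by
  let V : ℕ → Set (ℕ → Bool) := fun n => closure (x '' Set.Ici n)
  have hVd : ∀ n, V (n+1) ⊆ V n :=
    fun n => closure_mono (Set.image_mono fun m hm => le_trans (Nat.le_succ n) hm)
  have hVne : ∀ n, (V n).Nonempty :=
    fun n => ⟨x n, subset_closure ⟨n, le_refl n, rfl⟩⟩
  have hVcl : ∀ n, IsClosed (V n) := fun n => isClosed_closure
  have hVc : IsCompact (V 0) := (hVcl 0).isCompact
  obtain ⟨z, hz⟩ := IsCompact.nonempty_iInter_of_sequence_nonempty_isCompact_isClosed V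
    hVd hVne hVc hVcl
  simp only [Set.mem_iInter] at hz
  have hzr : z ∈ branches r := by
    have h1 : V 0 ⊆ branches r := by
      rw [← (isClosed_branches r).closure_eq]
      exact closure_mono (by rintro _ ⟨m, _, rfl⟩; exact hx m)
    exact h1 (hz 0)
  refine ⟨z, hzr, fun k n => ?_⟩
  have hzn := hz n
  rw [mem_closure_iff] at hzn
  obtain ⟨w, hw1, m, hm, rfl⟩ := hzn _ (isOpen_cyl z k) rfl
  exact ⟨m, hm, hw1⟩

/-- Let `p, q, r` be perfect trees with `r ⊆ p` and let `π̂ = g` be the homeomorphism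
`[p] → [q]` induced by the induced bijection `π : spl(p) → spl(q)`. Then
`s := {u : ∃ x ∈ [r], u ⊆ π̂(x)}` is a perfect tree, `s ⊆ q`, and `π̂[[r]] = [s]`. -/
theorem image_of_subtree (p q r : Set (List Bool))
    (hp : IsPerfectTree p) (hq : IsPerfectTree q) (hr : IsPerfectTree r)
    (hrp : r ⊆ p)
    (π : List Bool → List Bool) (hπ : InducedBij p q π)
    (g : (ℕ → Bool) → (ℕ → Bool)) (hg : InducedMap p q π g) :
    IsPerfectTree {u : List Bool | ∃ x ∈ branches r, PrefixOfBranch u (g x)} ∧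
    {u : List Bool | ∃ x ∈ branches r, PrefixOfBranch u (g x)} ⊆ q ∧
    g '' branches r = branches {u : List Bool | ∃ x ∈ branches r, PrefixOfBranch u (g x)} := by
  set S := {u : List Bool | ∃ x ∈ branches r, PrefixOfBranch u (g x)} with hSdef
  have hrb : branches r ⊆ branches p := fun x hx n => hrp (hx n)
  -- tree
  have htree : IsBinTree S := by
    rintro u ⟨x, hxr, hux⟩ t ht
    rw [← hux] at ht
    exact ⟨x, hxr, pob_of_prefix ht⟩
  -- nonempty
  have hne : S.Nonempty := by
    obtain ⟨l, hl⟩ := hr.2.1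
    have hnil : ([] : List Bool) ∈ r := tree_mem_of_prefix hr.1 (List.nil_prefix) hl
    obtain ⟨x, hxr, _⟩ := exists_branch_through hr hnil
    exact ⟨[], x, hxr, by simp [PrefixOfBranch, initSeg]⟩
  -- perfect
  have hperf : ∀ u ∈ S, ∃ t, u <+: t ∧ IsSplitNode S t := by
    rintro u ⟨x, hxr, hux⟩
    have hxp : x ∈ branches p := hrb hxr
    obtain ⟨k, hk1, hk2⟩ := exists_pi_long hp hπ hxp u.length
    obtain ⟨k₁, hk₁le, hk₁⟩ := exists_split_prefix hr hxr k
    have hsp : IsSplitNode p (initSeg x k₁) := ⟨hrp hk₁.1, hrp hk₁.2.1, hrp hk₁.2.2⟩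
    have hlen : (π (initSeg x k)).length ≤ (π (initSeg x k₁)).length :=
      pi_mono hp hπ hxp k₁ k k₁ (by omega) hk₁le hk1 hsp
    set s₀ := initSeg x k₁ with hs₀
    have hpob : PrefixOfBranch (π s₀) (g x) := pob_pi hg hxp hsp
    have hupre : u <+: π s₀ := pob_le hux hpob (by omega)
    have hchild : ∀ i : Bool, π s₀ ++ [i] ∈ S := by
      intro i
      have hsir : s₀ ++ [i] ∈ r := by
        cases i with
        | false => exact hk₁.2.1
        | true => exact hk₁.2.2
      obtain ⟨x', hx'r, hx'pre⟩ := exists_branch_through hr hsir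
      have hx'p : x' ∈ branches p := hrb hx'r
      have hlen' : (s₀ ++ [i]).length = k₁ + 1 := by simp [hs₀, initSeg_length]
      have heq : initSeg x' (k₁+1) = s₀ ++ [i] := by rw [← hlen']; exact hx'pre
      obtain ⟨c, hcge, hcm⟩ := exists_minsplit_s6 hp hx'p (k₁+1)
      rw [heq] at hcm
      have hq' := hπ.2.2 s₀ hsp i _ hcm
      have hpp : PrefixOfBranch (π (initSeg x' c)) (g x') := pob_pi hg hx'p hcm.1
      have hfin : π s₀ ++ [i] <+: initSeg (g x') (π (initSeg x' c)).length := by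
        rw [hpp]; exact hq'.2.1
      exact ⟨x', hx'r, pob_of_prefix hfin⟩
    exact ⟨π s₀, hupre, ⟨x, hxr, hpob⟩, hchild false, hchild true⟩
  -- subset of q
  have hsq : S ⊆ q := by
    rintro u ⟨x, hxr, hux⟩
    rw [← hux]
    exact g_mem_branches hp hq hπ hg (hrb hxr) u.length
  refine ⟨⟨htree, hne, hperf⟩, hsq, ?_⟩
  apply Set.Subset.antisymm
  · rintro _ ⟨x, hxr, rfl⟩
    intro n
    exact ⟨x, hxr, pob_initSeg (g x) n⟩
  · intro y hy
    choose xseq hx1 hx2 using fun n => hy n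
    obtain ⟨z, hzr, hlim⟩ := exists_limit xseq hx1
    have hzp : z ∈ branches p := hrb hzr
    refine ⟨z, hzr, ?_⟩
    suffices h : ∀ n, initSeg (g z) n = initSeg y n by
      funext j
      exact congrFun (initSeg_eq_iff.mp (h (j+1))) ⟨j, Nat.lt_succ_self j⟩
    intro n
    obtain ⟨k, hk1, hk2⟩ := exists_pi_long hp hπ hzp n
    obtain ⟨m, hmn, hmeq⟩ := hlim k n
    have hpobm : PrefixOfBranch (initSeg z k) (xseq m) := by
      rw [← hmeq]; exact pob_initSeg (xseq m) k
    have hπm : PrefixOfBranch (π (initSeg z k)) (g (xseq m)) :=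
      hg (xseq m) (hrb (hx1 m)) (initSeg z k) hk1 hpobm
    have hπz : PrefixOfBranch (π (initSeg z k)) (g z) := pob_pi hg hzp hk1
    have hym : initSeg (g (xseq m)) m = initSeg y m := by
      have := hx2 m
      rwa [PrefixOfBranch, initSeg_length] at this
    calc initSeg (g z) n = (π (initSeg z k)).take n := initSeg_eq_take hπz hk2
      _ = initSeg (g (xseq m)) n := (initSeg_eq_take hπm hk2).symm
      _ = (initSeg (g (xseq m)) m).take n := (initSeg_take _ hmn).symm
      _ = (initSeg y m).take n := by rw [hym]
      _ = initSeg y n := initSeg_take _ hmn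
end

section
/- Let A be a set, x ∉ A, and let ρ : A → Sym(ℕ) induce a cofinitary representation. Then every word w ∈ F_{A∪{x}} can be split as w = uv (concatenation of reduced words without cancellation) such that vu is equivalent with respect to ρ to a word in F_A or equivalent with respect to ρ to a nice word with respect to ρ. -/
/-- The distinguished generator `x` of the free group `F_{A ∪ {x}}`, which we realize as
the free group on `A ⊕ Unit` with `x := Sum.inr ()`. -/
def xgen (A : Type*) : FreeGroup (A ⊕ Unit) := FreeGroup.of (Sum.inr ())

/-- The embedding of `F_A` as a subgroup of `F_{A ∪ {x}}`. -/
def embA (A : Type*) : FreeGroup A →* FreeGroup (A ⊕ Unit) :=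
  FreeGroup.map Sum.inl

/-- `ρ : A → Sym(ℕ)` induces a cofinitary representation: every element of the range of
the induced homomorphism `ρ̂ : F_A → Sym(ℕ)` is the identity or has finitely many fixed
points. -/
def IsCofinitaryRep {A : Type*} (ρ : A → Equiv.Perm ℕ) : Prop :=
  ∀ w : FreeGroup A,
    FreeGroup.lift ρ w = 1 ∨ (Function.fixedPoints ⇑(FreeGroup.lift ρ w)).Finite

/-- `w ∈ F_{A ∪ {x}}` is a nice word with respect to `ρ`: either `w = x^n` or `w = x^{-n}`
for some `n > 0`, or the reduced word of `w` is, without cancellation, of the form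
`u_l x^{k_l} ⋯ u_1 x^{k_1} u_0 x^{k_0}` with each `u_i ∈ W⁰_{ρ,x} = F_A \ ker ρ̂` and each
`k_i ∈ ℤ \ {0}`. -/
def NiceWord {A : Type*} [DecidableEq A] (ρ : A → Equiv.Perm ℕ)
    (w : FreeGroup (A ⊕ Unit)) : Prop :=
  (∃ n : ℤ, n ≠ 0 ∧ w = xgen A ^ n) ∨
  (∃ l : ℕ, ∃ u : Fin (l + 1) → FreeGroup A, ∃ k : Fin (l + 1) → ℤ,
    (∀ i, FreeGroup.lift ρ (u i) ≠ 1) ∧ (∀ i, k i ≠ 0) ∧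
    w.toWord = (List.ofFn fun i : Fin (l + 1) =>
      (embA A (u i)).toWord ++ (xgen A ^ k i).toWord).flatten)

/-- `w` and `v` are equivalent with respect to `ρ`: they have the same image in the
quotient of `F_{A ∪ {x}}` by the normal closure of `ker ρ̂ ⊆ F_A`. -/
def WEquiv {A : Type*} (ρ : A → Equiv.Perm ℕ) (w v : FreeGroup (A ⊕ Unit)) : Prop :=
  w⁻¹ * v ∈ Subgroup.normalClosure (⇑(embA A) '' {u : FreeGroup A | FreeGroup.lift ρ u = 1})

set_option linter.unusedSectionVars false

namespace SplitNiceAux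
open FreeGroup List

variable {α : Type*} [DecidableEq α]

/-- A word is reduced: no adjacent cancelling pair. -/
def Rd (L : List (α × Bool)) : Prop :=
  L.Chain' fun a b => ¬(a.1 = b.1 ∧ a.2 = !b.2)

theorem rd_reduce (L : List (α × Bool)) : Rd (FreeGroup.reduce L) := by
  induction L with
  | nil => exact List.isChain_nil
  | cons a T ih =>
    rw [FreeGroup.reduce.cons]
    rcases h : FreeGroup.reduce T with _ | ⟨b, M⟩
    · exact List.isChain_singleton a
    · rw [h] at ih
      show Rd (if a.1 = b.1 ∧ a.2 = !b.2 then M else a :: b :: M)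
      by_cases hc : a.1 = b.1 ∧ a.2 = !b.2
      · rw [if_pos hc]; exact ih.tail
      · rw [if_neg hc]; exact List.isChain_cons_cons.mpr ⟨hc, ih⟩

theorem reduce_eq_self {L : List (α × Bool)} (h : Rd L) : FreeGroup.reduce L = L := by
  induction L with
  | nil => rfl
  | cons a T ih =>
    have hT : FreeGroup.reduce T = T := ih h.tail
    rw [FreeGroup.reduce.cons, hT]
    rcases T with _ | ⟨b, M⟩
    · rfl
    · have : ¬(a.1 = b.1 ∧ a.2 = !b.2) := (List.isChain_cons_cons.mp h).1
      simp [this]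

theorem toWord_mk_rd {L : List (α × Bool)} (h : Rd L) : (FreeGroup.mk L).toWord = L := by
  rw [FreeGroup.toWord_mk, reduce_eq_self h]

theorem rd_toWord (w : FreeGroup α) : Rd w.toWord := by
  rw [← FreeGroup.reduce_toWord]; exact rd_reduce _

theorem Rd.infix {L M : List (α × Bool)} (h : Rd L) (h' : M <:+: L) : Rd M :=
  List.IsChain.infix h h'

theorem mk_pair_cancel (a : α × Bool) :
    FreeGroup.mk [(a.1, !a.2)] * FreeGroup.mk [a] = 1 := by
  have : FreeGroup.mk [(a.1, !a.2)] = (FreeGroup.mk [a])⁻¹ := by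
    rw [FreeGroup.inv_mk]; simp [FreeGroup.invRev]
  rw [this, inv_mul_cancel]

/-- constant-letter reduced words are replicates -/
theorem rd_const {c : α} {b : Bool} :
    ∀ (L : List (α × Bool)), Rd ((c, b) :: L) → (∀ a ∈ L, a.1 = c) →
      (c, b) :: L = List.replicate (L.length + 1) (c, b)
  | [], _, _ => rfl
  | a :: T, h, hall => by
    have h1 : ¬((c, b).1 = a.1 ∧ (c, b).2 = !a.2) := (List.isChain_cons_cons.mp h).1
    have ha1 : a.1 = c := hall a (by simp)
    have ha2 : a.2 = b := by
      rcases Bool.eq_or_eq_not a.2 b with h' | h'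
      · exact h'
      · exact absurd ⟨ha1.symm, by simp [h']⟩ h1
    have ha : a = (c, b) := Prod.ext ha1 ha2
    have := rd_const T (by rw [← ha]; exact (List.isChain_cons_cons.mp h).2)
      (fun x hx => hall x (by simp [hx]))
    rw [ha, List.replicate_succ, this]
    simp [List.replicate_succ]

section Specific
variable {A : Type*} [DecidableEq A] (ρ : A → Equiv.Perm ℕ)

abbrev Ltr (A : Type*) := ((A ⊕ Unit) × Bool)

def inlify : (A × Bool) → Ltr A := fun q => (Sum.inl q.1, q.2)

theorem xpowP (n : ℕ) :
    xgen A ^ (n : ℤ) = FreeGroup.mk (List.replicate n (Sum.inr (), true)) := by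
  rw [zpow_natCast]
  induction n with
  | zero => simp [FreeGroup.one_eq_mk]
  | succ n ih =>
    rw [pow_succ, ih, xgen, FreeGroup.of, FreeGroup.mul_mk, List.replicate_succ']

theorem xpowN (n : ℕ) :
    xgen A ^ (-(n : ℤ)) = FreeGroup.mk (List.replicate n (Sum.inr (), false)) := by
  rw [zpow_neg, xpowP, FreeGroup.inv_mk]
  congr 1
  simp [FreeGroup.invRev, List.map_replicate]

theorem toWord_replicate (n : ℕ) (a : Ltr A) :
    (FreeGroup.mk (List.replicate n a)).toWord = List.replicate n a := by
  rw [FreeGroup.toWord_mk, FreeGroup.reduce_replicate]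

theorem not_isLeft_eq {s : A ⊕ Unit} (h : ¬ s.isLeft = true) : s = Sum.inr () := by
  cases s with
  | inl a => simp at h
  | inr u => cases u; rfl

theorem exists_inl_list :
    ∀ (L : List (Ltr A)), (∀ q ∈ L, q.1.isLeft = true) →
      ∃ M : List (A × Bool), L = M.map inlify
  | [], _ => ⟨[], rfl⟩
  | q :: T, h => by
    obtain ⟨a, ha⟩ := Sum.isLeft_iff.mp (h q (by simp))
    obtain ⟨M, hM⟩ := exists_inl_list T (fun x hx => h x (by simp [hx]))
    refine ⟨(a, q.2) :: M, ?_⟩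
    simp only [List.map_cons, ← hM, inlify]
    rw [← ha]

theorem embA_mk (M : List (A × Bool)) :
    embA A (FreeGroup.mk M) = FreeGroup.mk (M.map inlify) :=
  FreeGroup.map.mk

theorem weq_refl (h : FreeGroup (A ⊕ Unit)) : WEquiv ρ h h := by
  unfold WEquiv
  rw [inv_mul_cancel]
  exact Subgroup.one_mem _

theorem weq_trans {a b c : FreeGroup (A ⊕ Unit)} (h1 : WEquiv ρ a b)
    (h2 : WEquiv ρ b c) : WEquiv ρ a c := by
  have := Subgroup.mul_mem _ h1 h2
  rwa [show a⁻¹ * b * (b⁻¹ * c) = a⁻¹ * c by group] at this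

theorem weq_mid (α' β : FreeGroup (A ⊕ Unit)) (c : FreeGroup A)
    (hc : FreeGroup.lift ρ c = 1) : WEquiv ρ (α' * embA A c * β) (α' * β) := by
  unfold WEquiv
  have h1 : (embA A c)⁻¹ ∈ Subgroup.normalClosure
      (⇑(embA A) '' {u : FreeGroup A | FreeGroup.lift ρ u = 1}) := by
    apply Subgroup.subset_normalClosure
    exact ⟨c⁻¹, by simp [hc], by simp⟩
  have he : (α' * embA A c * β)⁻¹ * (α' * β) = β⁻¹ * (embA A c)⁻¹ * β := by group
  rw [he]
  have := (Subgroup.normalClosure_normal (G := FreeGroup (A ⊕ Unit))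
    (s := ⇑(embA A) '' {u : FreeGroup A | FreeGroup.lift ρ u = 1})).conj_mem _ h1 β⁻¹
  simpa using this


end Specific

theorem bd {β : Type*} (p : β → Bool) :
    ∀ (L : List β), (∃ a ∈ L, p a = true) → (∃ a ∈ L, p a = false) →
      (∃ h : L ≠ [], p (L.head h) = true ∧ p (L.getLast h) = false) ∨
      (∃ i, ∃ h : i + 1 < L.length, p (L[i]'(by omega)) = false ∧ p (L[i+1]'h) = true)
  | [], h1, _ => by simp at h1
  | a :: T, h1, h2 => by
    by_cases hpa : p a = true
    · by_cases hlast : p ((a :: T).getLast (by simp)) = false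
      · exact Or.inl ⟨by simp, by simpa using hpa, hlast⟩
      · have hT : T ≠ [] := by
          rintro rfl
          obtain ⟨x, hx, hpx⟩ := h2
          simp at hx; subst hx
          rw [hpa] at hpx; cases hpx
        have hlT : p (T.getLast hT) = true := by
          rw [List.getLast_cons hT] at hlast
          simpa using hlast
        have h2' : ∃ x ∈ T, p x = false := by
          obtain ⟨x, hx, hpx⟩ := h2
          rcases List.mem_cons.mp hx with rfl | hx'
          · rw [hpa] at hpx; cases hpx
          · exact ⟨x, hx', hpx⟩
        have h1' : ∃ x ∈ T, p x = true := ⟨T.getLast hT, List.getLast_mem hT, hlT⟩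
        rcases bd p T h1' h2' with ⟨h, hh, hl⟩ | ⟨i, h, hf, ht⟩
        · rw [hl] at hlT; cases hlT
        · exact Or.inr ⟨i + 1, by simpa using Nat.succ_lt_succ h, by simpa using hf,
            by simpa using ht⟩
    · have h1' : ∃ x ∈ T, p x = true := by
        obtain ⟨x, hx, hpx⟩ := h1
        rcases List.mem_cons.mp hx with rfl | hx'
        · exact absurd hpx hpa
        · exact ⟨x, hx', hpx⟩
      have hT : T ≠ [] := by rintro rfl; simp at h1'
      by_cases hhT : p (T.head hT) = true
      · refine Or.inr ⟨0, by have := List.length_pos_iff.mpr hT; simp; omega, ?_, ?_⟩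
        · simp only [List.getElem_cons_zero]
          exact Bool.eq_false_iff.mpr hpa
        · rw [List.getElem_cons_succ, ← List.head_eq_getElem hT]
          exact hhT
      · have hed : p (T.head hT) = false := by simpa using hhT
        have h2' : ∃ x ∈ T, p x = false := ⟨T.head hT, List.head_mem hT, hed⟩
        rcases bd p T h1' h2' with ⟨h, hh, hl⟩ | ⟨i, h, hf, ht⟩
        · rw [show T.head h = T.head hT from rfl, hed] at hh; cases hh
        · exact Or.inr ⟨i + 1, by simpa using Nat.succ_lt_succ h, by simpa using hf,
            by simpa using ht⟩


theorem isLeft_false_eq {s : A ⊕ Unit} (h : s.isLeft = false) : s = Sum.inr () := by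
  cases s with
  | inl a => simp at h
  | inr u => cases u; rfl

theorem getLast_of_suffix {β : Type*} {l₁ l₂ : List β} (h : l₂ <:+ l₁) (h2 : l₂ ≠ [])
    (h1 : l₁ ≠ []) : l₁.getLast h1 = l₂.getLast h2 := by
  obtain ⟨W, rfl⟩ := h
  rw [List.getLast_append]
  simp [h2]

theorem parse :
    ∀ (n : ℕ) (K : List ((A ⊕ Unit) × Bool)), K.length ≤ n → ∀ (hne : K ≠ []),
      (K.head hne).1.isLeft = true → (K.getLast hne).1 = Sum.inr () →
      ∃ Bl : List (List ((A ⊕ Unit) × Bool) × List ((A ⊕ Unit) × Bool)), Bl ≠ [] ∧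
        K = (Bl.map fun p => p.1 ++ p.2).flatten ∧
        ∀ p ∈ Bl, p.1 ≠ [] ∧ (∀ a ∈ p.1, a.1.isLeft = true) ∧ p.2 ≠ [] ∧
          (∀ a ∈ p.2, a.1 = Sum.inr ())
  | 0, K, hlen, hne, _, _ => absurd (List.length_eq_zero_iff.mp (Nat.le_zero.mp hlen)) hne
  | n + 1, K, hlen, hne, hhd, hlast => by
    have hsplit1 : K.takeWhile (fun a => a.1.isLeft) ++ K.dropWhile (fun a => a.1.isLeft) = K :=
      List.takeWhile_append_dropWhile ..
    have hBne : K.takeWhile (fun a => a.1.isLeft) ≠ [] := by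
      intro h
      have := List.takeWhile_eq_nil_iff.mp h (List.length_pos_iff.mpr hne)
      rw [List.get_eq_getElem, ← List.head_eq_getElem hne] at this
      exact this hhd
    have hBall : ∀ a ∈ K.takeWhile (fun a => a.1.isLeft), a.1.isLeft = true :=
      fun a ha => List.mem_takeWhile_imp (p := fun q : (A ⊕ Unit) × Bool => q.1.isLeft) ha
    have hK1ne : K.dropWhile (fun a => a.1.isLeft) ≠ [] := by
      intro h
      have hKB : K.takeWhile (fun a => a.1.isLeft) = K := by
        conv_rhs => rw [← hsplit1]
        rw [h, List.append_nil]
      have hmem : K.getLast hne ∈ K.takeWhile (fun a => a.1.isLeft) := by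
        rw [hKB]; exact List.getLast_mem hne
      have := List.mem_takeWhile_imp (p := fun q : (A ⊕ Unit) × Bool => q.1.isLeft) hmem
      simp only [hlast] at this
      simp at this
    have hK1hd : ((K.dropWhile (fun a => a.1.isLeft)).head hK1ne).1.isLeft = false :=
      List.head_dropWhile_not _ hK1ne
    have hsplit2 : (K.dropWhile (fun a => a.1.isLeft)).takeWhile (fun a => !a.1.isLeft) ++
        (K.dropWhile (fun a => a.1.isLeft)).dropWhile (fun a => !a.1.isLeft) =
        K.dropWhile (fun a => a.1.isLeft) := List.takeWhile_append_dropWhile ..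
    have hXne : (K.dropWhile (fun a => a.1.isLeft)).takeWhile (fun a => !a.1.isLeft) ≠ [] := by
      intro h
      have := List.takeWhile_eq_nil_iff.mp h (List.length_pos_iff.mpr hK1ne)
      rw [List.get_eq_getElem, ← List.head_eq_getElem hK1ne] at this
      simp only [Bool.not_eq_true', Bool.not_eq_true] at this
      exact this hK1hd
    have hXall : ∀ a ∈ (K.dropWhile (fun a => a.1.isLeft)).takeWhile (fun a => !a.1.isLeft),
        a.1 = Sum.inr () := by
      intro a ha
      have := List.mem_takeWhile_imp (p := fun q : (A ⊕ Unit) × Bool => !q.1.isLeft) ha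
      simp only [Bool.not_eq_true'] at this
      exact isLeft_false_eq this
    by_cases hK2e : (K.dropWhile (fun a => a.1.isLeft)).dropWhile (fun a => !a.1.isLeft) = []
    · refine ⟨[(K.takeWhile (fun a => a.1.isLeft),
        (K.dropWhile (fun a => a.1.isLeft)).takeWhile (fun a => !a.1.isLeft))], by simp, ?_, ?_⟩
      · simp only [List.map_cons, List.map_nil, List.flatten_cons, List.flatten_nil,
          List.append_nil]
        have hX2 : (K.dropWhile (fun a => a.1.isLeft)).takeWhile (fun a => !a.1.isLeft) =
            K.dropWhile (fun a => a.1.isLeft) := by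
          conv_rhs => rw [← hsplit2]
          rw [hK2e, List.append_nil]
        conv_lhs => rw [← hsplit1]
        rw [hX2]
      · rintro p hp
        simp only [List.mem_singleton] at hp
        subst hp
        exact ⟨hBne, hBall, hXne, hXall⟩
    · have hK2suf : (K.dropWhile (fun a => a.1.isLeft)).dropWhile (fun a => !a.1.isLeft) <:+ K :=
        (List.dropWhile_suffix _).trans (List.dropWhile_suffix _)
      have hK2hd : (((K.dropWhile (fun a => a.1.isLeft)).dropWhile
          (fun a => !a.1.isLeft)).head hK2e).1.isLeft = true := by
        have := List.head_dropWhile_not (fun q : (A ⊕ Unit) × Bool => !q.1.isLeft) hK2e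
        simpa using this
      have hK2last : (((K.dropWhile (fun a => a.1.isLeft)).dropWhile
          (fun a => !a.1.isLeft)).getLast hK2e).1 = Sum.inr () := by
        rw [← getLast_of_suffix hK2suf hK2e hne]
        exact hlast
      have hlen2 : ((K.dropWhile (fun a => a.1.isLeft)).dropWhile
          (fun a => !a.1.isLeft)).length ≤ n := by
        have h1 : K.length = (K.takeWhile (fun a => a.1.isLeft)).length +
            (K.dropWhile (fun a => a.1.isLeft)).length := by
          conv_lhs => rw [← hsplit1]
          rw [List.length_append]
        have h2 : (K.dropWhile (fun a => a.1.isLeft)).length =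
            ((K.dropWhile (fun a => a.1.isLeft)).takeWhile (fun a => !a.1.isLeft)).length +
            ((K.dropWhile (fun a => a.1.isLeft)).dropWhile (fun a => !a.1.isLeft)).length := by
          conv_lhs => rw [← hsplit2]
          rw [List.length_append]
        have hB1 : 1 ≤ (K.takeWhile (fun a => a.1.isLeft)).length := List.length_pos_iff.mpr hBne
        omega
      obtain ⟨Bl', hne', hflat', hcond'⟩ := parse n _ hlen2 hK2e hK2hd hK2last
      refine ⟨(K.takeWhile (fun a => a.1.isLeft),
        (K.dropWhile (fun a => a.1.isLeft)).takeWhile (fun a => !a.1.isLeft)) :: Bl',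
        by simp, ?_, ?_⟩
      · simp only [List.map_cons, List.flatten_cons]
        rw [← hflat', List.append_assoc, hsplit2, hsplit1]
      · rintro p hp
        rcases List.mem_cons.mp hp with rfl | hp'
        · exact ⟨hBne, hBall, hXne, hXall⟩
        · exact hcond' p hp'


section Core
variable {A : Type*} [DecidableEq A] (ρ : A → Equiv.Perm ℕ)

def toA : List (Ltr A) → List (A × Bool) :=
  fun L => L.filterMap fun q => (q.1.getLeft?).map fun a => (a, q.2)

theorem toA_spec : ∀ L : List (Ltr A), (∀ q ∈ L, q.1.isLeft = true) →
    (toA L).map inlify = L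
  | [], _ => rfl
  | q :: T, h => by
    obtain ⟨a, ha⟩ := Sum.isLeft_iff.mp (h q (by simp))
    have h1 : toA (q :: T) = (a, q.2) :: toA T := by
      simp [toA, ha]
    rw [h1, List.map_cons, toA_spec T (fun x hx => h x (by simp [hx]))]
    have : inlify (a, q.2) = q := by
      simp only [inlify, ← ha]
    rw [this]

/-- The target property: the element is equivalent to a word in `F_A` or to a nice word. -/
def Pgood (h : FreeGroup (A ⊕ Unit)) : Prop :=
  (∃ w' : FreeGroup A, WEquiv ρ h (embA A w')) ∨
  (∃ w' : FreeGroup (A ⊕ Unit), NiceWord ρ w' ∧ WEquiv ρ h w')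

theorem pgood_of_weq {h' h : FreeGroup (A ⊕ Unit)} (he : WEquiv ρ h' h)
    (hp : Pgood ρ h) : Pgood ρ h' := by
  rcases hp with ⟨w', hw⟩ | ⟨w', hn, hw⟩
  · exact Or.inl ⟨w', weq_trans ρ he hw⟩
  · exact Or.inr ⟨w', hn, weq_trans ρ he hw⟩

theorem core (K : List (Ltr A)) (hK : Rd K) (hne : K ≠ [])
    (hhd : (K.head hne).1.isLeft = true) (hlast : (K.getLast hne).1 = Sum.inr ())
    (IH : ∀ m : List (Ltr A), Rd m → m.length < K.length →
      ∃ j, Pgood ρ (FreeGroup.mk (m.rotate j))) :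
    ∃ j, Pgood ρ (FreeGroup.mk (K.rotate j)) := by
  obtain ⟨Bl, hBlne, hflat, hcond⟩ := parse K.length K le_rfl hne hhd hlast
  rcases Classical.em (∀ p ∈ Bl, FreeGroup.lift ρ (FreeGroup.mk (toA p.1)) ≠ 1) with hall | hall
  · -- all blocks survive: K is itself a nice word
    refine ⟨0, Or.inr ⟨FreeGroup.mk K, ?_, by rw [List.rotate_zero]; exact weq_refl ρ _⟩⟩
    refine Or.inr ?_
    obtain ⟨l, hl⟩ : ∃ l, Bl.length = l + 1 :=
      ⟨Bl.length - 1, by have := List.length_pos_iff.mpr hBlne; omega⟩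
    have hidx : ∀ i : Fin (l + 1), (i : ℕ) < Bl.length := fun i => by omega
    refine ⟨l, fun i => FreeGroup.mk (toA (Bl[(i : ℕ)]'(hidx i)).1),
      fun i => if (Bl[(i : ℕ)]'(hidx i)).2.head? = some (Sum.inr (), true)
        then ((Bl[(i : ℕ)]'(hidx i)).2.length : ℤ)
        else -((Bl[(i : ℕ)]'(hidx i)).2.length : ℤ), ?_, ?_, ?_⟩
    · intro i
      exact hall _ (List.getElem_mem (hidx i))
    · intro i
      have h2 := (hcond _ (List.getElem_mem (hidx i))).2.2.1
      have hne0 : (Bl[(i : ℕ)]'(hidx i)).2.length ≠ 0 := by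
        simpa [List.length_eq_zero_iff] using h2
      dsimp only
      split <;> simpa using hne0
    · -- the reduced word decomposes into the blocks
      rw [toWord_mk_rd hK, hflat]
      have hblock : ∀ i : Fin (l + 1),
          (embA A (FreeGroup.mk (toA (Bl[(i : ℕ)]'(hidx i)).1))).toWord ++
          (xgen A ^ (if (Bl[(i : ℕ)]'(hidx i)).2.head? = some (Sum.inr (), true)
            then ((Bl[(i : ℕ)]'(hidx i)).2.length : ℤ)
            else -((Bl[(i : ℕ)]'(hidx i)).2.length : ℤ))).toWord =
          (Bl[(i : ℕ)]'(hidx i)).1 ++ (Bl[(i : ℕ)]'(hidx i)).2 := by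
        intro i
        obtain ⟨hp1ne, hp1all, hp2ne, hp2all⟩ := hcond _ (List.getElem_mem (hidx i))
        have hinf : ((Bl[(i : ℕ)]'(hidx i)).1 ++ (Bl[(i : ℕ)]'(hidx i)).2) <:+: K := by
          rw [hflat]
          exact List.infix_of_mem_flatten
            (List.mem_map_of_mem (List.getElem_mem (hidx i)))
        congr 1
        · -- the F_A block
          rw [embA_mk, toA_spec _ hp1all, toWord_mk_rd]
          exact hK.infix ((List.prefix_append _ _).isInfix.trans hinf)
        · -- the x-power block
          rcases hp2 : (Bl[(i : ℕ)]'(hidx i)).2 with _ | ⟨q, T⟩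
          · exact absurd hp2 hp2ne
          · have hq1 : q.1 = Sum.inr () := hp2all q (by rw [hp2]; simp)
            have hqe : q = (Sum.inr (), q.2) := Prod.ext hq1 rfl
            have hrd2 : Rd ((Sum.inr (), q.2) :: T) := by
              rw [← hqe, ← hp2]
              refine hK.infix (List.IsInfix.trans ?_ hinf)
              rw [hp2]
              exact (List.suffix_append _ _).isInfix
            have hrep : (Sum.inr (), q.2) :: T =
                List.replicate (T.length + 1) ((Sum.inr () : A ⊕ Unit), q.2) :=
              rd_const _ hrd2 (fun x hx => hp2all x (by rw [hp2]; simp [hx]))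
            cases hq2 : q.2 with
            | true =>
              rw [hq2] at hqe hrep
              rw [hqe]
              simp only [List.head?_cons, List.length_cons]
              rw [if_pos trivial, xpowP, toWord_replicate]
              exact hrep.symm
            | false =>
              rw [hq2] at hqe hrep
              rw [hqe]
              simp only [List.head?_cons, List.length_cons]
              simp only [Option.some.injEq, Prod.mk.injEq, Bool.false_eq_true, and_false, ↓reduceIte]
              rw [xpowN, toWord_replicate]
              exact hrep.symm
      congr 1
      refine List.ext_getElem (by simp [hl]) ?_
      intro n h1 h2
      rw [List.getElem_map, List.getElem_ofFn]
      exact (hblock ⟨n, by simpa [hl] using h1⟩).symm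
  · -- some block dies: delete it and recurse
    push_neg at hall
    obtain ⟨p, hp, hlift⟩ := hall
    obtain ⟨i0, hi0, hget⟩ := List.mem_iff_getElem.mp hp
    obtain ⟨hp1ne, hp1all, hp2ne, hp2all⟩ := hcond p hp
    set Pre := ((Bl.take i0).map fun p => p.1 ++ p.2).flatten with hPre
    set Post := p.2 ++ ((Bl.drop (i0 + 1)).map fun p => p.1 ++ p.2).flatten with hPost
    have hKdec : K = (Pre ++ p.1) ++ Post := by
      rw [hflat]
      conv_lhs => rw [← List.take_append_drop i0 Bl]
      rw [List.drop_eq_getElem_cons hi0, hget]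
      rw [List.map_append, List.flatten_append, List.map_cons, List.flatten_cons]
      rw [hPre, hPost]
      simp [List.append_assoc]
    have hPostK : Post <:+ K := ⟨Pre ++ p.1, hKdec.symm⟩
    have hPreK : Pre <+: K := ⟨p.1 ++ Post, by rw [hKdec]; simp [List.append_assoc]⟩
    have hRdPost : Rd Post := hK.infix hPostK.isInfix
    have hRdPre : Rd Pre := hK.infix hPreK.isInfix
    have hPostne : Post ≠ [] := by
      rw [hPost]
      simp [hp2ne]
    have hRdm : Rd (Post ++ Pre) := by
      refine List.isChain_append.mpr ?_
      refine ⟨hRdPost, hRdPre, ?_⟩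
      intro x hx y hy
      have hxK : x = K.getLast hne := by
        have h1 : K.getLast? = Post.getLast? := by
          obtain ⟨W, hW⟩ := hPostK
          rw [← hW, List.getLast?_append_of_ne_nil _ hPostne]
        rw [List.getLast?_eq_getLast hne] at h1
        rw [hx] at h1
        exact (Option.some_injective _ h1).symm
      have hPrene : Pre ≠ [] := by
        intro h
        rw [h] at hy
        simp at hy
      have hyK : y = K.head hne := by
        have h1 : K.head? = Pre.head? := by
          obtain ⟨W, hW⟩ := hPreK
          rw [← hW, List.head?_append_of_ne_nil _ hPrene]
        rw [List.head?_eq_head hne] at h1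
        rw [hy] at h1
        exact (Option.some_injective _ h1).symm
      subst hxK hyK
      obtain ⟨a, ha⟩ := Sum.isLeft_iff.mp hhd
      rw [hlast, ha]
      simp
    have hmlen : (Post ++ Pre).length < K.length := by
      have h2 : 1 ≤ p.1.length := List.length_pos_iff.mpr hp1ne
      rw [hKdec]
      simp only [List.length_append]
      omega
    obtain ⟨j1, hP⟩ := IH (Post ++ Pre) hRdm hmlen
    have hmne : (Post ++ Pre) ≠ [] := by simp [hPostne]
    have hj2 : j1 % (Post ++ Pre).length < (Post ++ Pre).length :=
      Nat.mod_lt _ (List.length_pos_iff.mpr hmne)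
    set j2 := j1 % (Post ++ Pre).length with hj2def
    have hProt : Pgood ρ (FreeGroup.mk ((Post ++ Pre).rotate j2)) := by
      rw [hj2def, List.rotate_mod]
      exact hP
    have hmkp1 : FreeGroup.mk p.1 = embA A (FreeGroup.mk (toA p.1)) := by
      rw [embA_mk, toA_spec _ hp1all]
    rcases le_or_gt j2 Post.length with hc | hc
    · refine ⟨Pre.length + p.1.length + j2, pgood_of_weq ρ ?_ hProt⟩
      have hjK : Pre.length + p.1.length + j2 ≤ K.length := by
        rw [hKdec]
        simp only [List.length_append] at hc ⊢
        omega
      rw [List.rotate_eq_drop_append_take hjK,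
        List.rotate_eq_drop_append_take (by simpa using hj2.le)]
      have hd1 : K.drop (Pre.length + p.1.length + j2) = Post.drop j2 := by
        rw [hKdec, show Pre.length + p.1.length + j2 = (Pre ++ p.1).length + j2 by simp,
          List.drop_length_add_append]
      have ht1 : K.take (Pre.length + p.1.length + j2) = (Pre ++ p.1) ++ Post.take j2 := by
        rw [hKdec, show Pre.length + p.1.length + j2 = (Pre ++ p.1).length + j2 by simp,
          List.take_length_add_append]
      have hd2 : (Post ++ Pre).drop j2 = Post.drop j2 ++ Pre :=
        List.drop_append_of_le_length hc
      have ht2 : (Post ++ Pre).take j2 = Post.take j2 :=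
        List.take_append_of_le_length hc
      rw [hd1, ht1, hd2, ht2]
      have e1 : FreeGroup.mk (Post.drop j2 ++ ((Pre ++ p.1) ++ Post.take j2)) =
          (FreeGroup.mk (Post.drop j2) * FreeGroup.mk Pre) *
            embA A (FreeGroup.mk (toA p.1)) * FreeGroup.mk (Post.take j2) := by
        rw [← hmkp1]
        simp [FreeGroup.mul_mk, List.append_assoc]
      have e2 : FreeGroup.mk ((Post.drop j2 ++ Pre) ++ Post.take j2) =
          (FreeGroup.mk (Post.drop j2) * FreeGroup.mk Pre) * FreeGroup.mk (Post.take j2) := by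
        simp [FreeGroup.mul_mk, List.append_assoc]
      rw [e1, e2]
      exact weq_mid ρ _ _ _ hlift
    · set t := j2 - Post.length with ht
      have htle : t ≤ Pre.length := by
        simp only [List.length_append] at hj2
        omega
      refine ⟨t, pgood_of_weq ρ ?_ hProt⟩
      have hjK : t ≤ K.length := by
        rw [hKdec]
        simp only [List.length_append]
        omega
      rw [List.rotate_eq_drop_append_take hjK,
        List.rotate_eq_drop_append_take (by simpa using hj2.le)]
      have hKdec' : K = Pre ++ (p.1 ++ Post) := by rw [hKdec]; simp [List.append_assoc]
      have hd1 : K.drop t = Pre.drop t ++ (p.1 ++ Post) := by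
        rw [hKdec', List.drop_append_of_le_length htle]
      have ht1 : K.take t = Pre.take t := by
        rw [hKdec', List.take_append_of_le_length htle]
      have hd2 : (Post ++ Pre).drop j2 = Pre.drop t := by
        rw [show j2 = Post.length + t by omega, List.drop_length_add_append]
      have ht2 : (Post ++ Pre).take j2 = Post ++ Pre.take t := by
        rw [show j2 = Post.length + t by omega, List.take_length_add_append]
      rw [hd1, ht1, hd2, ht2]
      have e1 : FreeGroup.mk (Pre.drop t ++ (p.1 ++ Post) ++ Pre.take t) =
          FreeGroup.mk (Pre.drop t) * embA A (FreeGroup.mk (toA p.1)) *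
            (FreeGroup.mk Post * FreeGroup.mk (Pre.take t)) := by
        rw [← hmkp1]
        simp [FreeGroup.mul_mk, List.append_assoc]
      have e2 : FreeGroup.mk (Pre.drop t ++ (Post ++ Pre.take t)) =
          FreeGroup.mk (Pre.drop t) * (FreeGroup.mk Post * FreeGroup.mk (Pre.take t)) := by
        simp [FreeGroup.mul_mk, List.append_assoc]
      rw [e1, e2]
      exact weq_mid ρ _ _ _ hlift

theorem main (ρ : A → Equiv.Perm ℕ) :
    ∀ (n : ℕ) (L : List (Ltr A)), L.length = n → Rd L →
      ∃ j, Pgood ρ (FreeGroup.mk (L.rotate j)) := by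
  intro n
  induction n using Nat.strong_induction_on with
  | _ n IH =>
    intro L hlen hRd
    rcases L with _ | ⟨a, T⟩
    · refine ⟨0, Or.inl ⟨1, ?_⟩⟩
      rw [List.rotate_nil, ← FreeGroup.one_eq_mk, (embA A).map_one]
      exact weq_refl ρ 1
    · have hLne : (a :: T) ≠ [] := List.cons_ne_nil a T
      by_cases hz : ((a :: T).getLast hLne).1 = a.1 ∧ ((a :: T).getLast hLne).2 = !a.2
      · -- cyclic cancellation: recurse on the inner word
        have hTne : T ≠ [] := by
          rintro rfl
          rw [List.getLast_singleton] at hz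
          simp at hz
        have hTM : T = T.dropLast ++ [T.getLast hTne] := (List.dropLast_append_getLast hTne).symm
        have hzT : (a :: T).getLast hLne = T.getLast hTne := List.getLast_cons hTne
        rw [hzT] at hz
        have hRdM : Rd T.dropLast := hRd.infix ⟨[a], [T.getLast hTne], by
          rw [List.append_assoc, ← hTM, List.singleton_append]⟩
        have hdl : T.dropLast.length + 1 = T.length := by
          have := List.length_pos_iff.mpr hTne
          rw [List.length_dropLast]
          omega
        have hlt : T.dropLast.length < n := by
          rw [List.length_cons] at hlen
          omega
        obtain ⟨j1, hP⟩ := IH _ hlt T.dropLast rfl hRdM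
        obtain ⟨j2, hj2le, hP2⟩ : ∃ j2, j2 ≤ T.dropLast.length ∧
            Pgood ρ (FreeGroup.mk (T.dropLast.rotate j2)) := by
          by_cases hM0 : T.dropLast = []
          · refine ⟨0, Nat.zero_le _, ?_⟩
            rw [hM0, List.rotate_nil]
            rw [hM0, List.rotate_nil] at hP
            exact hP
          · exact ⟨j1 % T.dropLast.length, (Nat.mod_lt _ (List.length_pos_iff.mpr hM0)).le,
              by rw [List.rotate_mod]; exact hP⟩
        refine ⟨j2 + 1, ?_⟩
        have hjle : j2 + 1 ≤ (a :: T).length := by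
          rw [List.length_cons]
          omega
        have hrot : (a :: T).rotate (j2 + 1) =
            (T.dropLast.drop j2 ++ [T.getLast hTne]) ++ (a :: T.dropLast.take j2) := by
          rw [List.rotate_eq_drop_append_take hjle, List.drop_succ_cons, List.take_succ_cons]
          conv_lhs => rw [hTM]
          rw [List.drop_append_of_le_length hj2le, List.take_append_of_le_length hj2le]
        have h1 : (T.dropLast.drop j2 ++ [T.getLast hTne]) ++ (a :: T.dropLast.take j2) =
            T.dropLast.drop j2 ++ ([T.getLast hTne] ++ ([a] ++ T.dropLast.take j2)) := by
          simp
        have h2 : FreeGroup.mk (T.dropLast.drop j2) * (FreeGroup.mk [T.getLast hTne] *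
            (FreeGroup.mk [a] * FreeGroup.mk (T.dropLast.take j2))) =
            FreeGroup.mk ((T.dropLast.drop j2 ++ [T.getLast hTne]) ++
              (a :: T.dropLast.take j2)) := by
          simp only [FreeGroup.mul_mk]
          exact congrArg FreeGroup.mk h1.symm
        have hzz : T.getLast hTne = (a.1, !a.2) := Prod.ext hz.1 hz.2
        have hcalc : FreeGroup.mk ((T.dropLast.drop j2 ++ [T.getLast hTne]) ++
            (a :: T.dropLast.take j2)) = FreeGroup.mk (T.dropLast.rotate j2) := by
          rw [← h2, hzz, ← mul_assoc (FreeGroup.mk [(a.1, !a.2)]), mk_pair_cancel, one_mul,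
            FreeGroup.mul_mk, List.rotate_eq_drop_append_take hj2le]
        rw [hrot, hcalc]
        exact hP2
      · -- cyclically reduced
        rcases Classical.em (∀ q ∈ (a :: T), q.1.isLeft = true) with h1 | h1
        · -- a word in F_A
          obtain ⟨Mw, hMw⟩ := exists_inl_list _ h1
          refine ⟨0, Or.inl ⟨FreeGroup.mk Mw, ?_⟩⟩
          rw [List.rotate_zero, hMw, ← embA_mk]
          exact weq_refl ρ _
        · rcases Classical.em (∀ q ∈ (a :: T), q.1 = Sum.inr ()) with h2 | h2
          · -- a pure power of x
            have ha1 : a.1 = Sum.inr () := h2 a (by simp)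
            have hae : a = ((Sum.inr (), a.2) : Ltr A) := Prod.ext ha1 rfl
            have hrda : Rd (((Sum.inr (), a.2) : Ltr A) :: T) := by
              rw [← hae]; exact hRd
            have hrep : (a :: T) = List.replicate (T.length + 1) ((Sum.inr (), a.2) : Ltr A) := by
              conv_lhs => rw [hae]
              exact rd_const T hrda (fun x hx => h2 x (by simp [hx]))
            refine ⟨0, Or.inr ⟨FreeGroup.mk (a :: T), Or.inl ?_,
              by rw [List.rotate_zero]; exact weq_refl ρ _⟩⟩
            cases ha2 : a.2 with
            | true =>
              rw [ha2] at hrep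
              exact ⟨((T.length + 1 : ℕ) : ℤ),
                Int.natCast_ne_zero.mpr (Nat.succ_ne_zero _), by rw [hrep, xpowP]⟩
            | false =>
              rw [ha2] at hrep
              refine ⟨-((T.length + 1 : ℕ) : ℤ), by push_cast; omega, by rw [hrep, xpowN]⟩
          · -- mixed word
            have hex1 : ∃ q ∈ (a :: T), (fun q : Ltr A => q.1.isLeft) q = true := by
              push_neg at h2
              obtain ⟨q, hq, hqne⟩ := h2
              refine ⟨q, hq, ?_⟩
              rcases hq1 : q.1 with b | u
              · simp [hq1]
              · cases u; exact absurd hq1 hqne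
            have hex0 : ∃ q ∈ (a :: T), (fun q : Ltr A => q.1.isLeft) q = false := by
              push_neg at h1
              obtain ⟨q, hq, hqne⟩ := h1
              exact ⟨q, hq, by simpa using hqne⟩
            rcases bd (fun q : Ltr A => q.1.isLeft) (a :: T) hex1 hex0 with
              ⟨hne', hh, hl⟩ | ⟨i, hilt, hf, ht⟩
            · -- the word itself starts with F_A letters and ends with x letters
              obtain ⟨j', hP⟩ := core ρ (a :: T) hRd hne' hh (isLeft_false_eq hl)
                (fun m hRdm hlt => by
                  rw [hlen] at hlt
                  exact IH m.length hlt m rfl hRdm)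
              exact ⟨j', hP⟩
            · -- rotate at the boundary
              have hjlt : i + 1 < (a :: T).length := hilt
              have hdropne : (a :: T).drop (i + 1) ≠ [] := by
                rw [← List.length_pos_iff, List.length_drop]; omega
              have htakene : (a :: T).take (i + 1) ≠ [] := by
                rw [← List.length_pos_iff, List.length_take, List.length_cons]
                rw [List.length_cons] at hjlt
                omega
              have hjunc : ∀ x ∈ ((a :: T).drop (i + 1)).getLast?,
                  ∀ y ∈ ((a :: T).take (i + 1)).head?, ¬(x.1 = y.1 ∧ x.2 = !y.2) := by
                intro x hx y hy
                rw [Option.mem_def] at hx hy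
                have hg1 : ((a :: T).drop (i + 1)).getLast? = (a :: T).getLast? := by
                  conv_rhs => rw [← List.take_append_drop (i + 1) (a :: T)]
                  rw [List.getLast?_append_of_ne_nil _ hdropne]
                have hg2 : ((a :: T).take (i + 1)).head? = (a :: T).head? := by
                  conv_rhs => rw [← List.take_append_drop (i + 1) (a :: T)]
                  rw [List.head?_append_of_ne_nil _ htakene]
                have hxv : x = (a :: T).getLast hLne := by
                  have hx2 := (hg1.symm.trans hx)
                  rw [List.getLast?_eq_getLast hLne] at hx2
                  exact (Option.some_inj.mp hx2).symm
                have hyv : y = a := by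
                  have hy2 := (hg2.symm.trans hy)
                  rw [List.head?_cons] at hy2
                  exact (Option.some_inj.mp hy2).symm
                rw [hxv, hyv]
                exact hz
              have hKrd : Rd ((a :: T).rotate (i + 1)) := by
                rw [List.rotate_eq_drop_append_take hjlt.le]
                exact List.isChain_append.mpr ⟨hRd.infix (List.drop_suffix _ _).isInfix,
                  hRd.infix (List.take_prefix _ _).isInfix, hjunc⟩
              have hKne : (a :: T).rotate (i + 1) ≠ [] := by
                rw [← List.length_pos_iff, List.length_rotate]
                simp
              have hKhd : (((a :: T).rotate (i + 1)).head hKne).1.isLeft = true := by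
                have e : ((a :: T).rotate (i + 1)).head hKne =
                    ((a :: T).drop (i + 1)).head hdropne := by
                  rw [← Option.some_inj, ← List.head?_eq_head, ← List.head?_eq_head,
                    List.rotate_eq_drop_append_take hjlt.le,
                    List.head?_append_of_ne_nil _ hdropne]
                rw [e, List.head_drop]
                exact ht
              have hKlast : (((a :: T).rotate (i + 1)).getLast hKne).1 = Sum.inr () := by
                have e : ((a :: T).rotate (i + 1)).getLast hKne =
                    ((a :: T).take (i + 1)).getLast htakene := by
                  rw [← Option.some_inj, ← List.getLast?_eq_getLast, ← List.getLast?_eq_getLast,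
                    List.rotate_eq_drop_append_take hjlt.le,
                    List.getLast?_append_of_ne_nil _ htakene]
                have hisplit : (a :: T).take (i + 1) =
                    (a :: T).take i ++ [(a :: T)[i]'(by omega)] := by
                  rw [List.take_succ, List.getElem?_eq_getElem (by omega)]
                  rfl
                have e2 : ((a :: T).take (i + 1)).getLast htakene = (a :: T)[i]'(by omega) := by
                  rw [← Option.some_inj, ← List.getLast?_eq_getLast, hisplit,
                    List.getLast?_append_of_ne_nil _ (List.cons_ne_nil _ _),
                    List.getLast?_singleton]
                rw [e, e2]
                exact isLeft_false_eq hf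
              obtain ⟨j', hP⟩ := core ρ ((a :: T).rotate (i + 1)) hKrd hKne hKhd hKlast
                (fun m hRdm hlt => by
                  rw [List.length_rotate, hlen] at hlt
                  exact IH m.length hlt m rfl hRdm)
              refine ⟨(i + 1) + j', ?_⟩
              rw [← List.rotate_rotate]
              exact hP

end Core

end SplitNiceAux

/-- Every word `w ∈ F_{A ∪ {x}}` can be split as `w = uv` (concatenation of the reduced
words without cancellation) such that `vu` is equivalent with respect to `ρ` to a word in
`F_A`, or equivalent with respect to `ρ` to a nice word with respect to `ρ`. -/
theorem split_into_nice_word {A : Type*} [DecidableEq A] (ρ : A → Equiv.Perm ℕ)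
    (hρ : IsCofinitaryRep ρ) (w : FreeGroup (A ⊕ Unit)) :
    ∃ u v : FreeGroup (A ⊕ Unit), w.toWord = u.toWord ++ v.toWord ∧
      ((∃ w' : FreeGroup A, WEquiv ρ (v * u) (embA A w')) ∨
       (∃ w' : FreeGroup (A ⊕ Unit), NiceWord ρ w' ∧ WEquiv ρ (v * u) w')) := by
  obtain ⟨j0, hP⟩ := SplitNiceAux.main ρ w.toWord.length w.toWord rfl (SplitNiceAux.rd_toWord w)
  by_cases hL : w.toWord = []
  · refine ⟨1, 1, by rw [FreeGroup.toWord_one, hL]; rfl, ?_⟩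
    rw [hL, List.rotate_nil, ← FreeGroup.one_eq_mk] at hP
    rw [show (1 : FreeGroup (A ⊕ Unit)) * 1 = 1 from one_mul 1]
    exact hP
  · have hjle : j0 % w.toWord.length ≤ w.toWord.length :=
      (Nat.mod_lt _ (List.length_pos_iff.mpr hL)).le
    have hProt : SplitNiceAux.Pgood ρ
        (FreeGroup.mk (w.toWord.rotate (j0 % w.toWord.length))) := by
      rw [List.rotate_mod]
      exact hP
    refine ⟨FreeGroup.mk (w.toWord.take (j0 % w.toWord.length)),
      FreeGroup.mk (w.toWord.drop (j0 % w.toWord.length)), ?_, ?_⟩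
    · rw [SplitNiceAux.toWord_mk_rd
          ((SplitNiceAux.rd_toWord w).infix (List.take_prefix _ _).isInfix),
        SplitNiceAux.toWord_mk_rd
          ((SplitNiceAux.rd_toWord w).infix (List.drop_suffix _ _).isInfix),
        List.take_append_drop]
    · rw [show FreeGroup.mk (w.toWord.drop (j0 % w.toWord.length)) *
          FreeGroup.mk (w.toWord.take (j0 % w.toWord.length)) =
          FreeGroup.mk (w.toWord.rotate (j0 % w.toWord.length)) by
        rw [FreeGroup.mul_mk, List.rotate_eq_drop_append_take hjle]]
      exact hProt
end

section
/- Let A be a set, x ∉ A, let ρ : A → Sym(ℕ) induce a cofinitary representation, and let f ∈ Sym(ℕ). If for every nice word w ∈ F_{A∪{x}} with respect to ρ the set fix(ρ[f]̂(w)) is finite, then ρ[f] := ρ ∪ {(x, f)} induces a cofinitary representation, i.e., every element of the range of the induced homomorphism ρ[f]̂ : F_{A∪{x}} → Sym(ℕ) is the identity or has only finitely many fixed points. -/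
/-- The extension `ρ[f] := ρ ∪ {(x, f)} : A ∪ {x} → Sym(ℕ)` of `ρ` sending `x` to `f`. -/
def extendRep {A : Type*} (ρ : A → Equiv.Perm ℕ) (f : Equiv.Perm ℕ) :
    (A ⊕ Unit) → Equiv.Perm ℕ :=
  Sum.elim ρ (fun _ => f)

section CofAux

set_option linter.unusedSectionVars false

open FreeGroup List

/-- The no-cancellation condition on adjacent letters of a word. -/
def Rnc {α : Type*} (a b : α × Bool) : Prop := ¬(a.1 = b.1 ∧ a.2 = !b.2)

theorem reduce_eq_self_of_chain' {α : Type*} [DecidableEq α] :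
    ∀ L : List (α × Bool), List.Chain' Rnc L → FreeGroup.reduce L = L := by
  intro L
  induction L with
  | nil => intro _; rfl
  | cons x tl ih =>
    intro h
    unfold List.Chain' at h
    rw [List.isChain_cons] at h
    rw [FreeGroup.reduce.cons, ih h.2]
    cases tl with
    | nil => rfl
    | cons hd tl' =>
      have hx := h.1 hd (by simp)
      simp only []
      rw [if_neg hx]

theorem chain'_of_reduce_eq_self {α : Type*} [DecidableEq α]
    (L : List (α × Bool)) (h : FreeGroup.reduce L = L) : List.Chain' Rnc L := by
  unfold List.Chain'
  rw [List.isChain_iff_getElem]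
  intro i hi
  by_contra hcon
  unfold Rnc at hcon
  rw [not_not] at hcon
  obtain ⟨h1, h2⟩ := hcon
  set a := L[i]'(by omega) with ha
  set b := L[i + 1]'(by omega) with hb
  have hi1 : i < L.length := by omega
  have hi2 : i + 1 < L.length := by omega
  have hb2 : b.2 = !a.2 := by rw [h2, Bool.not_not]
  have hsplit : L = L.take i ++ (a.1, a.2) :: (a.1, !a.2) :: L.drop (i + 2) := by
    conv_lhs => rw [← List.take_append_drop i L]
    congr 1
    rw [List.drop_eq_getElem_cons hi1, List.drop_eq_getElem_cons hi2]
    have hae : L[i] = a := rfl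
    have hbe : L[i + 1] = b := rfl
    rw [hae, hbe]
    congr 1
    · congr 1
      exact Prod.ext h1.symm hb2
  exact FreeGroup.reduce.not (h.trans hsplit)

theorem chain'_toWord {α : Type*} [DecidableEq α] (x : FreeGroup α) :
    List.Chain' Rnc x.toWord :=
  chain'_of_reduce_eq_self _ (FreeGroup.reduce_toWord x)

variable {A : Type*} [DecidableEq A]

theorem embA_eq_mk (u : FreeGroup A) :
    embA A u = FreeGroup.mk (u.toWord.map fun p => (Sum.inl p.1, p.2)) := by
  conv_lhs => rw [← FreeGroup.mk_toWord (x := u)]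
  exact FreeGroup.map.mk

theorem embA_toWord (u : FreeGroup A) :
    (embA A u).toWord = u.toWord.map fun p => (Sum.inl p.1, p.2) := by
  rw [embA_eq_mk, FreeGroup.toWord_mk]
  apply reduce_eq_self_of_chain'
  unfold List.Chain'
  rw [List.isChain_map]
  refine (chain'_toWord u).imp (fun a b h hc => h ?_)
  obtain ⟨h1, h2⟩ := hc
  exact ⟨by simpa using h1, h2⟩

theorem xpow_natAbs (n : ℕ) :
    xgen A ^ n = FreeGroup.mk (List.replicate n (Sum.inr (), true)) := by
  induction n with
  | zero => rw [pow_zero, FreeGroup.one_eq_mk]; rfl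
  | succ m ih =>
    rw [pow_succ, ih, xgen, FreeGroup.of, FreeGroup.mul_mk, ← List.replicate_succ']

theorem xpow_eq_mk (k : ℤ) :
    xgen A ^ k = FreeGroup.mk (List.replicate k.natAbs (Sum.inr (), decide (0 ≤ k))) := by
  rcases k with n | n
  · rw [Int.ofNat_eq_coe, zpow_natCast, xpow_natAbs]
    norm_num
  · rw [zpow_negSucc, xpow_natAbs, FreeGroup.inv_mk]
    congr 1
    simp [FreeGroup.invRev, List.map_replicate, List.reverse_replicate]

theorem xpow_toWord (k : ℤ) :
    (xgen A ^ k).toWord = List.replicate k.natAbs (Sum.inr (), decide (0 ≤ k)) := by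
  rw [xpow_eq_mk, FreeGroup.toWord_mk, FreeGroup.reduce_replicate]

/-- The word of the block `u x^k`. -/
def bw (p : FreeGroup A × ℤ) : List ((A ⊕ Unit) × Bool) :=
  (embA A p.1).toWord ++ (xgen A ^ p.2).toWord

/-- The block `u x^k` as a group element. -/
def blk (p : FreeGroup A × ℤ) : FreeGroup (A ⊕ Unit) := embA A p.1 * xgen A ^ p.2

/-- The product of a list of blocks. -/
def pl (ps : List (FreeGroup A × ℤ)) : FreeGroup (A ⊕ Unit) := (ps.map blk).prod

theorem pl_nil : pl ([] : List (FreeGroup A × ℤ)) = 1 := rfl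

theorem pl_cons (p : FreeGroup A × ℤ) (ps : List (FreeGroup A × ℤ)) :
    pl (p :: ps) = blk p * pl ps := by simp [pl]

theorem pl_append (l1 l2 : List (FreeGroup A × ℤ)) : pl (l1 ++ l2) = pl l1 * pl l2 := by
  simp [pl]

theorem blk_eq_mk (p : FreeGroup A × ℤ) : blk p = FreeGroup.mk (bw p) := by
  rw [blk, bw, ← FreeGroup.mul_mk, FreeGroup.mk_toWord, FreeGroup.mk_toWord]

theorem pl_eq_mk (ps : List (FreeGroup A × ℤ)) :
    pl ps = FreeGroup.mk ((ps.map bw).flatten) := by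
  induction ps with
  | nil => rw [pl_nil]; exact FreeGroup.one_eq_mk
  | cons p ps ih =>
    rw [pl_cons, ih, blk_eq_mk, FreeGroup.mul_mk, List.map_cons, List.flatten_cons]

theorem embA_toWord_ne_nil {p : FreeGroup A × ℤ} (h : p.1 ≠ 1) :
    (embA A p.1).toWord ≠ [] := by
  rw [embA_toWord]
  simp only [ne_eq, List.map_eq_nil_iff, FreeGroup.toWord_eq_nil_iff]
  exact h

theorem bw_ne_nil {p : FreeGroup A × ℤ} (h : p.1 ≠ 1) : bw p ≠ [] := by
  rw [bw]
  simp only [ne_eq, List.append_eq_nil_iff]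
  exact fun hc => embA_toWord_ne_nil h hc.1

theorem head?_bw {p : FreeGroup A × ℤ} (h : p.1 ≠ 1) :
    ∃ a b, (bw p).head? = some (Sum.inl a, b) := by
  rw [bw, List.head?_append_of_ne_nil _ (embA_toWord_ne_nil h), embA_toWord, List.head?_map]
  obtain ⟨q, L, hqL⟩ := List.exists_cons_of_ne_nil
    (by simpa [FreeGroup.toWord_eq_nil_iff] using h : p.1.toWord ≠ [])
  rw [hqL]
  exact ⟨q.1, q.2, rfl⟩

theorem getLast?_bw {p : FreeGroup A × ℤ} (h : p.2 ≠ 0) :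
    ∃ b, (bw p).getLast? = some (Sum.inr (), b) := by
  rw [bw, List.getLast?_append_of_ne_nil _ (by
    rw [xpow_toWord]
    simp [Int.natAbs_eq_zero, h]), xpow_toWord, List.getLast?_replicate]
  simp [Int.natAbs_eq_zero, h]

theorem chain'_bw (p : FreeGroup A × ℤ) : List.Chain' Rnc (bw p) := by
  unfold List.Chain'
  rw [bw, List.isChain_append]
  refine ⟨chain'_toWord _, chain'_toWord _, ?_⟩
  intro x hx y hy
  rw [embA_toWord, List.getLast?_map] at hx
  rw [xpow_toWord] at hy
  obtain ⟨z, hz, rfl⟩ := Option.map_eq_some_iff.mp hx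
  have hyy : y = (Sum.inr (), decide (0 ≤ p.2)) := by
    rcases List.mem_replicate.mp (List.mem_of_mem_head? hy) with ⟨-, h⟩
    exact h
  subst hyy
  rintro ⟨hf, -⟩
  simp at hf

theorem chain'_flat (ps : List (FreeGroup A × ℤ)) (h1 : ∀ p ∈ ps, p.1 ≠ 1)
    (h2 : ∀ p ∈ ps, p.2 ≠ 0) : List.Chain' Rnc ((ps.map bw).flatten) := by
  induction ps with
  | nil => exact List.isChain_nil
  | cons p ps ih =>
    unfold List.Chain'
    rw [List.map_cons, List.flatten_cons, List.isChain_append]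
    refine ⟨chain'_bw p, ih (fun q hq => h1 q (List.mem_cons_of_mem _ hq))
      (fun q hq => h2 q (List.mem_cons_of_mem _ hq)), ?_⟩
    intro x hx y hy
    cases ps with
    | nil => simp at hy
    | cons q ps' =>
      rw [List.map_cons, List.flatten_cons,
        List.head?_append_of_ne_nil _ (bw_ne_nil (h1 q (by simp)))] at hy
      obtain ⟨a, b, hab⟩ := head?_bw (h1 q (by simp))
      rw [hab, Option.mem_def, Option.some_inj] at hy
      obtain ⟨s, hs⟩ := getLast?_bw (h2 p (by simp))
      rw [hs, Option.mem_def, Option.some_inj] at hx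
      subst hx; subst hy
      rintro ⟨hf, -⟩
      simp at hf

theorem ofFn_bw_eq (ps : List (FreeGroup A × ℤ)) :
    ∀ (n : ℕ) (h : n = ps.length),
    (List.ofFn fun i : Fin n =>
      (embA A ((ps.get (Fin.cast h i)).1)).toWord ++ (xgen A ^ ((ps.get (Fin.cast h i)).2)).toWord)
    = ps.map bw := by
  induction ps with
  | nil => intro n h; subst h; simp
  | cons p ps ih =>
    intro n h; subst h
    rw [List.ofFn_succ]
    congr 1
    exact ih ps.length rfl

theorem nice_pl (ρ : A → Equiv.Perm ℕ) (p : FreeGroup A × ℤ) (ps : List (FreeGroup A × ℤ))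
    (h1 : ∀ q ∈ p :: ps, FreeGroup.lift ρ q.1 ≠ 1) (h2 : ∀ q ∈ p :: ps, q.2 ≠ 0) :
    NiceWord ρ (pl (p :: ps)) := by
  have h1' : ∀ q ∈ p :: ps, q.1 ≠ 1 := fun q hq hc => h1 q hq (by rw [hc, _root_.map_one])
  right
  refine ⟨ps.length, fun i => (((p :: ps) : List _).get (Fin.cast rfl i)).1,
    fun i => (((p :: ps) : List _).get (Fin.cast rfl i)).2,
    fun i => h1 _ (List.mem_iff_get.mpr ⟨Fin.cast rfl i, rfl⟩),
    fun i => h2 _ (List.mem_iff_get.mpr ⟨Fin.cast rfl i, rfl⟩), ?_⟩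
  rw [ofFn_bw_eq (p :: ps) (ps.length + 1) rfl, pl_eq_mk, FreeGroup.toWord_mk]
  exact reduce_eq_self_of_chain' _ (chain'_flat _ h1' h2)

theorem lift_embA (ρ : A → Equiv.Perm ℕ) (f : Equiv.Perm ℕ) (u : FreeGroup A) :
    FreeGroup.lift (extendRep ρ f) (embA A u) = FreeGroup.lift ρ u := by
  have : (FreeGroup.lift (extendRep ρ f)).comp (embA A) = FreeGroup.lift ρ :=
    FreeGroup.ext_hom _ _ (fun a => by
      simp [embA, extendRep, FreeGroup.map.of, FreeGroup.lift_apply_of])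
  exact DFunLike.congr_fun this u

theorem lift_xgen (ρ : A → Equiv.Perm ℕ) (f : Equiv.Perm ℕ) :
    FreeGroup.lift (extendRep ρ f) (xgen A) = f := by
  simp [xgen, extendRep, FreeGroup.lift_apply_of]

theorem P_conj (σ τ : Equiv.Perm ℕ)
    (h : τ = 1 ∨ (Function.fixedPoints ⇑τ).Finite) :
    σ * τ * σ⁻¹ = 1 ∨ (Function.fixedPoints ⇑(σ * τ * σ⁻¹)).Finite := by
  rcases h with h | h
  · left; rw [h]; group
  · right
    have key : Function.fixedPoints ⇑(σ * τ * σ⁻¹) = ⇑σ '' Function.fixedPoints ⇑τ := by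
      ext x
      constructor
      · intro hx
        have hx' : σ (τ (σ⁻¹ x)) = x := by
          simpa [Equiv.Perm.mul_apply, Function.IsFixedPt] using hx
        refine ⟨σ⁻¹ x, ?_, by simp⟩
        show τ (σ⁻¹ x) = σ⁻¹ x
        conv_rhs => rw [← hx']
        simp
      · rintro ⟨y, hy, rfl⟩
        show (σ * τ * σ⁻¹) (σ y) = σ y
        have hy' : τ y = y := hy
        simp [Equiv.Perm.mul_apply, hy']
    rw [key]
    exact h.image _

theorem exists_rep (w : FreeGroup (A ⊕ Unit)) :
    ∃ ps : List (FreeGroup A × ℤ), pl ps = w := by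
  induction w using FreeGroup.induction_on with
  | C1 => exact ⟨[], rfl⟩
  | of a =>
    rcases a with a | u
    · refine ⟨[(FreeGroup.of a, 0)], ?_⟩
      simp [pl, blk, embA, FreeGroup.map.of]
    · refine ⟨[(1, 1)], ?_⟩
      cases u
      simp [pl, blk, xgen, embA]
  | inv_of a ih =>
    rcases a with a | u
    · refine ⟨[((FreeGroup.of a)⁻¹, 0)], ?_⟩
      simp [pl, blk, embA, FreeGroup.map.of]
    · refine ⟨[(1, -1)], ?_⟩
      cases u
      simp [pl, blk, xgen, embA]
  | mul x y ihx ihy =>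
    obtain ⟨px, hx⟩ := ihx
    obtain ⟨py, hy⟩ := ihy
    exact ⟨px ++ py, by rw [pl_append, hx, hy]⟩

theorem main_induction (ρ : A → Equiv.Perm ℕ) (f : Equiv.Perm ℕ) (hρ : IsCofinitaryRep ρ)
    (hnice : ∀ w : FreeGroup (A ⊕ Unit), NiceWord ρ w →
      (Function.fixedPoints ⇑(FreeGroup.lift (extendRep ρ f) w)).Finite) :
    ∀ (n : ℕ) (ps : List (FreeGroup A × ℤ)), ps.length ≤ n →
      FreeGroup.lift (extendRep ρ f) (pl ps) = 1 ∨
      (Function.fixedPoints ⇑(FreeGroup.lift (extendRep ρ f) (pl ps))).Finite := by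
  intro n
  induction n with
  | zero =>
    intro ps hps
    rw [List.length_eq_zero_iff.mp (Nat.le_zero.mp hps)]
    left
    rw [pl_nil, _root_.map_one]
  | succ n ih =>
    intro ps hps
    by_cases hgood : ∀ p ∈ ps, FreeGroup.lift ρ p.1 ≠ 1 ∧ p.2 ≠ 0
    · cases ps with
      | nil => left; rw [pl_nil, _root_.map_one]
      | cons p ps' =>
        exact Or.inr (hnice _ (nice_pl ρ p ps'
          (fun q hq => (hgood q hq).1) (fun q hq => (hgood q hq).2)))
    · push_neg at hgood
      obtain ⟨p, hp, hbad⟩ := hgood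
      obtain ⟨ps₁, ps₂, rfl⟩ := List.append_of_mem hp
      have hlen : ps₁.length + (ps₂.length + 1) ≤ n + 1 := by
        simpa [List.length_append] using hps
      by_cases hk : FreeGroup.lift ρ p.1 = 1
      · -- p is in the kernel: delete it (merging exponents), possibly after rotation
        rcases List.eq_nil_or_concat ps₁ with rfl | ⟨ps₁', r, rfl⟩
        · rcases List.eq_nil_or_concat ps₂ with rfl | ⟨ps₂', r, rfl⟩
          · -- single block u x^k with u in the kernel
            have hφ : FreeGroup.lift (extendRep ρ f) (pl ([] ++ p :: [])) =
                FreeGroup.lift (extendRep ρ f) (xgen A ^ p.2) := by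
              rw [List.nil_append, pl_cons, pl_nil, mul_one, blk, _root_.map_mul, lift_embA, hk,
                one_mul]
            by_cases hk2 : p.2 = 0
            · left
              rw [hφ, hk2, zpow_zero, _root_.map_one]
            · right
              rw [hφ]
              exact hnice _ (Or.inl ⟨p.2, hk2, rfl⟩)
          · -- rotate x^k to the back and merge exponents
            simp only [List.concat_eq_append] at hlen ⊢
            have key : FreeGroup.lift (extendRep ρ f) (pl ([] ++ p :: (ps₂' ++ [r]))) =
                (f ^ p.2) * FreeGroup.lift (extendRep ρ f) (pl (ps₂' ++ [(r.1, r.2 + p.2)])) *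
                  (f ^ p.2)⁻¹ := by
              simp only [List.nil_append, pl_cons, pl_append, pl_nil, blk, _root_.map_mul, _root_.map_zpow,
                lift_embA, lift_xgen, hk, mul_one, one_mul, zpow_add]
              group
            rw [key]
            refine P_conj _ _ (ih (ps₂' ++ [(r.1, r.2 + p.2)]) ?_)
            simp only [List.length_append, List.length_cons, List.length_nil] at hlen ⊢
            omega
        · -- merge x^k into the previous block
          simp only [List.concat_eq_append] at hlen ⊢
          have key : FreeGroup.lift (extendRep ρ f) (pl ((ps₁' ++ [r]) ++ p :: ps₂)) =
              FreeGroup.lift (extendRep ρ f) (pl (ps₁' ++ (r.1, r.2 + p.2) :: ps₂)) := by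
            simp only [pl_cons, pl_append, pl_nil, blk, _root_.map_mul, _root_.map_zpow, lift_embA,
              lift_xgen, hk, mul_one, one_mul, zpow_add]
            group
          rw [key]
          refine ih (ps₁' ++ (r.1, r.2 + p.2) :: ps₂) ?_
          simp only [List.length_append, List.length_cons, List.length_nil] at hlen ⊢
          omega
      · -- then the exponent is zero: merge u into the next block, possibly after rotation
        have hp2 : p.2 = 0 := hbad hk
        rcases ps₂ with _ | ⟨q, ps₂'⟩
        · rcases ps₁ with _ | ⟨r, ps₁'⟩
          · -- single block u x^0 = u: a word from F_A
            have hφ : FreeGroup.lift (extendRep ρ f) (pl ([] ++ p :: [])) =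
                FreeGroup.lift ρ p.1 := by
              rw [List.nil_append, pl_cons, pl_nil, mul_one, blk, hp2, zpow_zero, mul_one,
                lift_embA]
            rw [hφ]
            exact hρ p.1
          · -- rotate u to the front and merge into the first block
            have key : FreeGroup.lift (extendRep ρ f) (pl ((r :: ps₁') ++ p :: [])) =
                (FreeGroup.lift (extendRep ρ f) (embA A p.1))⁻¹ *
                  FreeGroup.lift (extendRep ρ f) (pl ((p.1 * r.1, r.2) :: ps₁')) *
                  ((FreeGroup.lift (extendRep ρ f) (embA A p.1))⁻¹)⁻¹ := by
              simp only [pl_cons, pl_append, pl_nil, blk, hp2, zpow_zero, _root_.map_mul, _root_.map_one,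
                mul_one, one_mul]
              group
            rw [key]
            refine P_conj _ _ (ih ((p.1 * r.1, r.2) :: ps₁') ?_)
            simp only [List.length_append, List.length_cons, List.length_nil] at hlen ⊢
            omega
        · -- merge u into the next block
          have key : FreeGroup.lift (extendRep ρ f) (pl (ps₁ ++ p :: q :: ps₂')) =
              FreeGroup.lift (extendRep ρ f) (pl (ps₁ ++ (p.1 * q.1, q.2) :: ps₂')) := by
            simp only [pl_cons, pl_append, pl_nil, blk, hp2, zpow_zero, _root_.map_mul, _root_.map_one,
              mul_one, one_mul]
            group
          rw [key]
          refine ih (ps₁ ++ (p.1 * q.1, q.2) :: ps₂') ?_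
          simp only [List.length_append, List.length_cons, List.length_nil] at hlen ⊢
          omega

end CofAux

/-- If `ρ` induces a cofinitary representation and `fix(ρ[f]̂(w))` is finite for every nice
word `w` with respect to `ρ`, then `ρ[f]` induces a cofinitary representation: every
element of the range of `ρ[f]̂ : F_{A ∪ {x}} → Sym(ℕ)` is the identity or has only
finitely many fixed points. -/
theorem cofinitary_of_nice_words {A : Type*} [DecidableEq A] (ρ : A → Equiv.Perm ℕ)
    (hρ : IsCofinitaryRep ρ) (f : Equiv.Perm ℕ)
    (hnice : ∀ w : FreeGroup (A ⊕ Unit), NiceWord ρ w →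
      (Function.fixedPoints ⇑(FreeGroup.lift (extendRep ρ f) w)).Finite) :
    ∀ w : FreeGroup (A ⊕ Unit),
      FreeGroup.lift (extendRep ρ f) w = 1 ∨
      (Function.fixedPoints ⇑(FreeGroup.lift (extendRep ρ f) w)).Finite := by
  intro w
  obtain ⟨ps, rfl⟩ := exists_rep w
  exact main_induction ρ f hρ hnice ps.length ps le_rfl
end

section
/- Let A be a set, x ∉ A, let ρ : A → Sym(ℕ) induce a cofinitary representation, let s be a finite partial injection on ℕ and let W_0 be a finite set of nice words with respect to ρ. Then: (1) if n ∈ ω \ dom(s), then for all but finitely many m ∈ ω the extension t := s ∪ {(n,m)} is a finite partial injection and fix(ρ[s](w)) = fix(ρ[t](w)) for every w ∈ W_0; (2) if m ∈ ω \ ran(s), then for all but finitely many n ∈ ω the extension t := s ∪ {(n,m)} is a finite partial injection and fix(ρ[s](w)) = fix(ρ[t](w)) for every w ∈ W_0. -/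
/-- Evaluation of a single letter of a word over `A ∪ {x}` as a partial injection of `ℕ`:
a letter `a` (resp. `a⁻¹`) with `a ∈ A` evaluates to `ρ(a)` (resp. `ρ(a)⁻¹`), and the
letter `x` (resp. `x⁻¹`) evaluates to the finite partial injection `s` (resp. `s⁻¹`). -/
def evalLetter {A : Type*} (ρ : A → Equiv.Perm ℕ) (s : ℕ ≃. ℕ) :
    (A ⊕ Unit) × Bool → (ℕ ≃. ℕ)
  | (Sum.inl a, true) => (ρ a).toPEquiv
  | (Sum.inl a, false) => (ρ a).symm.toPEquiv
  | (Sum.inr _, true) => s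
  | (Sum.inr _, false) => s.symm

/-- `ρ[s](w)`: evaluation of the reduced word of `w ∈ F_{A ∪ {x}}` as a partial injection
of `ℕ`, substituting `ρ(a)` for `a ∈ A` and `s` for `x` and composing (the rightmost
letter is applied first). -/
def wordEval {A : Type*} [DecidableEq A] (ρ : A → Equiv.Perm ℕ) (s : ℕ ≃. ℕ)
    (w : FreeGroup (A ⊕ Unit)) : ℕ ≃. ℕ :=
  w.toWord.foldr (fun l acc => acc.trans (evalLetter ρ s l)) (PEquiv.refl ℕ)

/-- The set of fixed points of a partial map. -/
def pFix (h : ℕ ≃. ℕ) : Set ℕ := {n | h n = some n}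

set_option linter.unusedSectionVars false
set_option maxHeartbeats 1000000
section L1

variable {A : Type*} [DecidableEq A] (ρ : A → Equiv.Perm ℕ) (s : ℕ ≃. ℕ)

/-- evaluation of a list of letters -/
def evalList (L : List ((A ⊕ Unit) × Bool)) : ℕ ≃. ℕ :=
  L.foldr (fun l acc => acc.trans (evalLetter ρ s l)) (PEquiv.refl ℕ)

lemma evalList_nil : evalList ρ s [] = PEquiv.refl ℕ := rfl

lemma evalList_cons (l L) :
    evalList ρ s (l :: L) = (evalList ρ s L).trans (evalLetter ρ s l) := rfl

lemma evalList_append (L₁ L₂) :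
    evalList ρ s (L₁ ++ L₂) = (evalList ρ s L₂).trans (evalList ρ s L₁) := by
  induction L₁ with
  | nil => rw [List.nil_append, evalList_nil, PEquiv.trans_refl]
  | cons l L ih =>
      rw [List.cons_append, evalList_cons, evalList_cons, ih, PEquiv.trans_assoc]

/-- `u` composed with itself `j` times (as a partial injection). -/
def natPow (u : ℕ ≃. ℕ) : ℕ → (ℕ ≃. ℕ)
  | 0 => PEquiv.refl ℕ
  | j+1 => (natPow u j).trans u

/-- integer powers of a partial injection. -/
def zPow (u : ℕ ≃. ℕ) (k : ℤ) : ℕ ≃. ℕ :=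
  if 0 ≤ k then natPow u k.toNat else natPow u.symm (-k).toNat

lemma natPow_succ' (u : ℕ ≃. ℕ) (j : ℕ) : natPow u (j+1) = u.trans (natPow u j) := by
  induction j with
  | zero => show (PEquiv.refl ℕ).trans u = u.trans (PEquiv.refl ℕ); rw [PEquiv.refl_trans, PEquiv.trans_refl]
  | succ j ih =>
      show (natPow u (j+1)).trans u = u.trans (natPow u (j+1))
      conv_lhs => rw [ih]
      rw [PEquiv.trans_assoc]; rfl

lemma zPow_symm_neg (u : ℕ ≃. ℕ) (k : ℤ) : zPow u.symm (-k) = zPow u k := by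
  rcases lt_trichotomy k 0 with h | h | h
  · rw [zPow, if_pos (by omega : (0:ℤ) ≤ -k), zPow, if_neg (not_le.2 h)]
  · subst h; rfl
  · rw [zPow, if_neg (by omega), zPow, if_pos h.le, PEquiv.symm_symm, neg_neg]

lemma evalList_replicate_true (j : ℕ) :
    evalList ρ s (List.replicate j ((Sum.inr () : A ⊕ Unit), true)) = natPow s j := by
  induction j with
  | zero => rfl
  | succ j ih => rw [List.replicate_succ, evalList_cons, ih]; rfl

lemma evalList_replicate_false (j : ℕ) :
    evalList ρ s (List.replicate j ((Sum.inr () : A ⊕ Unit), false)) = natPow s.symm j := by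
  induction j with
  | zero => rfl
  | succ j ih => rw [List.replicate_succ, evalList_cons, ih]; rfl

lemma xgen_zpow_toWord_pos (k : ℤ) (hk : 0 ≤ k) :
    (xgen A ^ k).toWord = List.replicate k.toNat ((Sum.inr () : A ⊕ Unit), true) := by
  conv_lhs => rw [show k = (k.toNat : ℤ) by omega]
  rw [zpow_natCast, xgen, FreeGroup.toWord_of_pow]

lemma xgen_zpow_toWord_neg (k : ℤ) (hk : k < 0) :
    (xgen A ^ k).toWord = List.replicate (-k).toNat ((Sum.inr () : A ⊕ Unit), false) := by
  conv_lhs => rw [show k = -((-k).toNat : ℤ) by omega]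
  rw [zpow_neg, zpow_natCast, FreeGroup.toWord_inv, xgen, FreeGroup.toWord_of_pow]
  simp [FreeGroup.invRev]

lemma evalList_xpow (k : ℤ) :
    evalList ρ s ((xgen A ^ k).toWord) = zPow s k := by
  rcases le_or_gt 0 k with h | h
  · rw [xgen_zpow_toWord_pos k h, evalList_replicate_true, zPow, if_pos h]
  · rw [xgen_zpow_toWord_neg k h, evalList_replicate_false, zPow, if_neg (by omega)]

end L1

section L2
variable {A : Type*} [DecidableEq A] (ρ : A → Equiv.Perm ℕ) (s : ℕ ≃. ℕ)

lemma reduce_map_inl (L : List (A × Bool)) :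
    FreeGroup.reduce (L.map fun p => ((Sum.inl p.1 : A ⊕ Unit), p.2)) =
      (FreeGroup.reduce L).map fun p => ((Sum.inl p.1 : A ⊕ Unit), p.2) := by
  induction L with
  | nil => simp
  | cons x L ih =>
    rw [List.map_cons, FreeGroup.reduce.cons, FreeGroup.reduce.cons, ih]
    cases h : FreeGroup.reduce L with
    | nil => simp
    | cons hd tl =>
      simp only [List.map_cons]
      by_cases hc : x.1 = hd.1 ∧ x.2 = !hd.2
      · rw [if_pos (by simpa using hc), if_pos hc]
      · rw [if_neg (by simpa using hc), if_neg hc, List.map_cons, List.map_cons]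
end L2

section L2b
variable {A : Type*} [DecidableEq A] (ρ : A → Equiv.Perm ℕ) (s : ℕ ≃. ℕ)

lemma toWord_embA (u : FreeGroup A) :
    (embA A u).toWord = u.toWord.map fun p => ((Sum.inl p.1 : A ⊕ Unit), p.2) := by
  conv_lhs => rw [embA, ← FreeGroup.mk_toWord (x := u)]
  rw [FreeGroup.map.mk, FreeGroup.toWord_mk, reduce_map_inl, FreeGroup.reduce_toWord]

lemma evalList_map_inl (M : List (A × Bool)) :
    evalList ρ s (M.map fun p => ((Sum.inl p.1 : A ⊕ Unit), p.2)) =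
      ((M.map fun x => cond x.2 (ρ x.1) (ρ x.1)⁻¹).prod).toPEquiv := by
  induction M with
  | nil => rfl
  | cons p M ih =>
    rw [List.map_cons, evalList_cons, ih, List.map_cons, List.prod_cons,
      Equiv.Perm.mul_def, Equiv.toPEquiv_trans]
    rcases p with ⟨a, b⟩
    cases b
    · rw [show (cond false (ρ a) (ρ a)⁻¹) = (ρ a)⁻¹ from rfl, Equiv.Perm.inv_def]; rfl
    · rfl

lemma evalList_embA (u : FreeGroup A) :
    evalList ρ s ((embA A u).toWord) = (FreeGroup.lift ρ u).toPEquiv := by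
  rw [toWord_embA, evalList_map_inl]
  congr 1
  conv_rhs => rw [← FreeGroup.mk_toWord (x := u)]
  rw [FreeGroup.lift_mk]

/-- a block: a permutation (from a subword over `A`) together with an `x`-power. -/
def evalBlock (v : ℕ ≃. ℕ) (b : Equiv.Perm ℕ × ℤ) : ℕ ≃. ℕ :=
  (zPow v b.2).trans b.1.toPEquiv

/-- evaluation of a list of blocks, first block applied first. -/
def evalBlocks (v : ℕ ≃. ℕ) : List (Equiv.Perm ℕ × ℤ) → (ℕ ≃. ℕ)
  | [] => PEquiv.refl ℕ
  | b :: bs => (evalBlock v b).trans (evalBlocks v bs)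

lemma evalBlocks_append (v : ℕ ≃. ℕ) (bs₁ bs₂ : List (Equiv.Perm ℕ × ℤ)) :
    evalBlocks v (bs₁ ++ bs₂) = (evalBlocks v bs₁).trans (evalBlocks v bs₂) := by
  induction bs₁ with
  | nil => rw [List.nil_append]; exact (PEquiv.refl_trans _).symm
  | cons b bs ih =>
      rw [List.cons_append]
      show (evalBlock v b).trans (evalBlocks v (bs ++ bs₂)) = _
      rw [ih, ← PEquiv.trans_assoc]; rfl

lemma evalList_flatten (ps : List (FreeGroup A × ℤ)) :
    evalList ρ s ((ps.map fun p => (embA A p.1).toWord ++ (xgen A ^ p.2).toWord).flatten) =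
      evalBlocks s ((ps.map fun p => ((FreeGroup.lift ρ p.1), p.2)).reverse) := by
  induction ps with
  | nil => rfl
  | cons p ps ih =>
    rw [List.map_cons, List.flatten_cons, evalList_append, ih, List.map_cons,
      List.reverse_cons, evalBlocks_append, evalList_append, evalList_xpow, evalList_embA]
    have : evalBlocks s [((FreeGroup.lift ρ) p.1, p.2)] =
        (zPow s p.2).trans (Equiv.toPEquiv ((FreeGroup.lift ρ) p.1)) := by
      show (evalBlock s _).trans (PEquiv.refl ℕ) = _
      rw [PEquiv.trans_refl]; rfl
    rw [this]

lemma evalBlocks_symm_neg (v : ℕ ≃. ℕ) (bs : List (Equiv.Perm ℕ × ℤ)) :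
    evalBlocks v.symm (bs.map fun b => (b.1, -b.2)) = evalBlocks v bs := by
  induction bs with
  | nil => rfl
  | cons b bs ih =>
    rw [List.map_cons]
    show (evalBlock v.symm (b.1, -b.2)).trans _ = (evalBlock v b).trans _
    rw [ih, evalBlock, evalBlock]
    simp only [zPow_symm_neg]

lemma zPow_symm_neg' (v : ℕ ≃. ℕ) (k : ℤ) : zPow v k = zPow v.symm (-k) :=
  (zPow_symm_neg v k).symm

end L2b
section Core

lemma optionEq {o₁ o₂ : Option ℕ} (h : ∀ j, o₁ = some j ↔ o₂ = some j) : o₁ = o₂ := by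
  cases o₁ with
  | some a => exact ((h a).1 rfl).symm
  | none =>
    cases o₂ with
    | none => rfl
    | some a => exact absurd ((h a).2 rfl) (by simp)

lemma ptrans_some {f g : ℕ ≃. ℕ} {a c : ℕ} :
    (f.trans g) a = some c ↔ ∃ b, f a = some b ∧ g b = some c := by
  show (f a).bind g = some c ↔ _
  cases h : f a <;> simp

lemma natPow_succ_some {u : ℕ ≃. ℕ} {j q r} :
    natPow u (j+1) q = some r ↔ ∃ v, natPow u j q = some v ∧ u v = some r :=
  ptrans_some

lemma natPow_succ_some' {u : ℕ ≃. ℕ} {j q r} :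
    natPow u (j+1) q = some r ↔ ∃ v, u q = some v ∧ natPow u j v = some r := by
  rw [natPow_succ']; exact ptrans_some

lemma natPow_zero_some {u : ℕ ≃. ℕ} {q r} : natPow u 0 q = some r ↔ r = q := by
  show (PEquiv.refl ℕ) q = some r ↔ _
  rw [PEquiv.refl_apply]
  exact ⟨fun h => (Option.some_inj.1 h).symm, fun h => by rw [h]⟩

lemma natPow_mono {u u' : ℕ ≃. ℕ} (hm : ∀ q r, u q = some r → u' q = some r) :
    ∀ j q r, natPow u j q = some r → natPow u' j q = some r := by
  intro j
  induction j with
  | zero => exact fun q r h => h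
  | succ j ih =>
    intro q r h
    obtain ⟨v, h1, h2⟩ := natPow_succ_some.1 h
    exact natPow_succ_some.2 ⟨v, ih _ _ h1, hm _ _ h2⟩

lemma natPow_none {u : ℕ ≃. ℕ} {q} (h : u q = none) (j : ℕ) : natPow u (j+1) q = none := by
  cases hh : natPow u (j+1) q with
  | none => rfl
  | some r =>
    obtain ⟨v, hv, _⟩ := natPow_succ_some'.1 hh
    rw [h] at hv; cases hv

/-- All data for a one-point extension `t = s ∪ {(n,m)}` of a partial injection `s`,
with `m` fresh. -/
structure ExtData where
  s : ℕ ≃. ℕ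
  t : ℕ ≃. ℕ
  n : ℕ
  m : ℕ
  hsn : s n = none
  hsm : s m = none
  hssm : s.symm m = none
  hmn : m ≠ n
  ht : ∀ k, t k = if k = n then some m else s k

namespace ExtData
variable (E : ExtData)

def inDom (v : ℕ) : Prop := (E.s v).isSome = true
def inRan (v : ℕ) : Prop := (E.s.symm v).isSome = true
def Good (v : ℕ) : Prop := E.inDom v ∨ E.inRan v ∨ v = E.n
def Bad (v : ℕ) : Prop := ¬ E.inDom v ∧ ¬ E.inRan v ∧ v ≠ E.n ∧ v ≠ E.m
def Cond (g : Equiv.Perm ℕ) : Prop :=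
  (∀ v, E.Good v → g v ≠ E.m) ∧ ¬ E.Good (g E.m) ∧ g E.m ≠ E.m

lemma bad_of (v : ℕ) (h1 : ¬ E.Good v) (h2 : v ≠ E.m) : E.Bad v := by
  rw [Good] at h1; push_neg at h1
  exact ⟨h1.1, h1.2.1, h1.2.2, h2⟩

lemma hts (k : ℕ) : E.t.symm k = if k = E.m then some E.n else E.s.symm k := by
  by_cases hk : k = E.m
  · subst hk
    rw [if_pos rfl]
    apply E.t.eq_some_iff.2
    rw [E.ht, if_pos rfl]
  · rw [if_neg hk]
    apply optionEq
    intro j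
    rw [E.t.eq_some_iff, E.ht j, E.s.eq_some_iff]
    constructor
    · intro h
      by_cases hj : j = E.n
      · rw [if_pos hj] at h; exact absurd (Option.some_inj.1 h).symm hk
      · rwa [if_neg hj] at h
    · intro h
      have hj : j ≠ E.n := fun hj => by rw [hj, E.hsn] at h; cases h
      rwa [if_neg hj]

lemma t_m_none : E.t E.m = none := by rw [E.ht, if_neg E.hmn, E.hsm]

lemma tstep {q r : ℕ} (h : E.t q = some r) :
    (E.s q = some r ∧ E.inRan r ∧ r ≠ E.m) ∨ (q = E.n ∧ r = E.m) := by
  rw [E.ht] at h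
  by_cases hq : q = E.n
  · right; rw [if_pos hq] at h; exact ⟨hq, (Option.some_inj.1 h).symm⟩
  · left
    rw [if_neg hq] at h
    have hran : E.s.symm r = some q := E.s.eq_some_iff.2 h
    refine ⟨h, by simp [inRan, hran], fun hrm => ?_⟩
    rw [hrm, E.hssm] at hran; cases hran

lemma tsteps {q r : ℕ} (h : E.t.symm q = some r) :
    (E.s.symm q = some r ∧ q ≠ E.m ∧ E.inDom r ∧ r ≠ E.m) ∨ (q = E.m ∧ r = E.n) := by
  rw [E.hts] at h
  by_cases hq : q = E.m
  · right; rw [if_pos hq] at h; exact ⟨hq, (Option.some_inj.1 h).symm⟩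
  · left
    rw [if_neg hq] at h
    have hdom : E.s r = some q := E.s.eq_some_iff.1 h
    refine ⟨h, hq, by simp [inDom, hdom], fun hrm => ?_⟩
    rw [hrm, E.hsm] at hdom; cases hdom

lemma mono {q r : ℕ} (h : E.s q = some r) : E.t q = some r := by
  rw [E.ht, if_neg (fun hq => by rw [hq, E.hsn] at h; cases h)]; exact h

lemma monos {q r : ℕ} (h : E.s.symm q = some r) : E.t.symm q = some r := by
  rw [E.hts, if_neg (fun hq => by rw [hq, E.hssm] at h; cases h)]; exact h

lemma pos : ∀ (j : ℕ) {q r : ℕ}, natPow E.t (j+1) q = some r →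
    (natPow E.s (j+1) q = some r ∧ E.inRan r ∧ r ≠ E.m) ∨
    (r = E.m ∧ natPow E.s j q = some E.n) := by
  intro j
  induction j with
  | zero =>
    intro q r h
    obtain ⟨v, hv, htv⟩ := natPow_succ_some.1 h
    have hvq : v = q := natPow_zero_some.1 hv
    subst hvq
    rcases E.tstep htv with ⟨h1, h2, h3⟩ | ⟨h1, h2⟩
    · exact Or.inl ⟨natPow_succ_some.2 ⟨v, natPow_zero_some.2 rfl, h1⟩, h2, h3⟩
    · exact Or.inr ⟨h2, natPow_zero_some.2 h1.symm⟩
  | succ j ih =>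
    intro q r h
    obtain ⟨v, hv, htv⟩ := natPow_succ_some.1 h
    rcases ih hv with ⟨h1, h2, h3⟩ | ⟨h1, h2⟩
    · rcases E.tstep htv with ⟨g1, g2, g3⟩ | ⟨g1, g2⟩
      · exact Or.inl ⟨natPow_succ_some.2 ⟨v, h1, g1⟩, g2, g3⟩
      · exact Or.inr ⟨g2, by rw [← g1]; exact h1⟩
    · rw [h1, E.t_m_none] at htv; cases htv

lemma neg1 : ∀ (j : ℕ) {q r : ℕ}, q ≠ E.m → natPow E.t.symm j q = some r →
    natPow E.s.symm j q = some r ∧ r ≠ E.m ∧ (j = 0 → r = q) ∧ (j ≠ 0 → E.inDom r) := by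
  intro j
  induction j with
  | zero =>
    intro q r hq h
    have := natPow_zero_some.1 h
    subst this
    exact ⟨h, hq, fun _ => rfl, fun h0 => absurd rfl h0⟩
  | succ j ih =>
    intro q r hq h
    obtain ⟨v, hv, hrest⟩ := natPow_succ_some'.1 h
    rcases E.tsteps hv with ⟨h1, _, h3, h4⟩ | ⟨h1, _⟩
    · obtain ⟨p1, p2, p3, p4⟩ := ih h4 hrest
      refine ⟨natPow_succ_some'.2 ⟨v, h1, p1⟩, p2, fun h0 => absurd h0 (Nat.succ_ne_zero j), fun _ => ?_⟩
      by_cases hj : j = 0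
      · rw [p3 hj]; exact h3
      · exact p4 hj
    · exact absurd h1 hq

lemma neg2 {j r : ℕ} (h : natPow E.t.symm (j+1) E.m = some r) :
    natPow E.s.symm j E.n = some r ∧ r ≠ E.m ∧ E.Good r := by
  obtain ⟨v, hv, hrest⟩ := natPow_succ_some'.1 h
  have hvn : v = E.n := by
    rw [E.hts, if_pos rfl] at hv; exact (Option.some_inj.1 hv).symm
  subst hvn
  obtain ⟨p1, p2, p3, p4⟩ := E.neg1 j (fun hh => E.hmn hh.symm) hrest
  refine ⟨p1, p2, ?_⟩
  by_cases hj : j = 0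
  · exact Or.inr (Or.inr (p3 hj))
  · exact Or.inl (p4 hj)

lemma not_inDom_none {v : ℕ} (h : ¬ E.inDom v) : E.s v = none :=
  Option.not_isSome_iff_eq_none.1 (by simpa [inDom] using h)

lemma not_inRan_none {v : ℕ} (h : ¬ E.inRan v) : E.s.symm v = none :=
  Option.not_isSome_iff_eq_none.1 (by simpa [inRan] using h)

lemma zPow_bad_none {k : ℤ} (hk : k ≠ 0) {v : ℕ} (hv : E.Bad v) : zPow E.t k v = none := by
  obtain ⟨h1, h2, h3, h4⟩ := hv
  rcases le_or_gt 0 k with h | h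
  · obtain ⟨j, hj⟩ : ∃ j, k.toNat = j + 1 := ⟨k.toNat - 1, by omega⟩
    rw [zPow, if_pos h, hj]
    apply natPow_none
    rw [E.ht, if_neg h3]
    exact E.not_inDom_none (fun hd => h1 hd)
  · obtain ⟨j, hj⟩ : ∃ j, (-k).toNat = j + 1 := ⟨(-k).toNat - 1, by omega⟩
    rw [zPow, if_neg (not_le.2 h), hj]
    apply natPow_none
    rw [E.hts, if_neg h4]
    exact E.not_inRan_none (fun hd => h2 hd)

end ExtData

lemma evalBlock_some {v : ℕ ≃. ℕ} {g : Equiv.Perm ℕ} {k : ℤ} {q r : ℕ} :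
    evalBlock v (g, k) q = some r ↔ ∃ w, zPow v k q = some w ∧ r = g w := by
  show ((zPow v k).trans g.toPEquiv) q = some r ↔ _
  rw [ptrans_some]
  constructor
  · rintro ⟨b, h1, h2⟩
    rw [Equiv.toPEquiv_apply] at h2
    exact ⟨b, h1, (Option.some_inj.1 h2).symm⟩
  · rintro ⟨b, h1, rfl⟩
    exact ⟨b, h1, by rw [Equiv.toPEquiv_apply]⟩

lemma evalBlocks_cons_some {v : ℕ ≃. ℕ} {b} {bs : List (Equiv.Perm ℕ × ℤ)} {q r : ℕ} :
    evalBlocks v (b :: bs) q = some r ↔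
      ∃ w, evalBlock v b q = some w ∧ evalBlocks v bs w = some r :=
  ptrans_some

lemma evalBlocks_nil_some {v : ℕ ≃. ℕ} {q r : ℕ} :
    evalBlocks v [] q = some r ↔ r = q :=
  natPow_zero_some (u := v)

namespace ExtData
variable (E : ExtData)

lemma bl1 {g : Equiv.Perm ℕ} {k : ℤ} {q r : ℕ} (hg : E.Cond g) (hk : k ≠ 0) (hq : q ≠ E.m)
    (h : evalBlock E.t (g, k) q = some r) :
    (evalBlock E.s (g, k) q = some r ∧ r ≠ E.m) ∨ (E.Bad r ∧ r = g E.m) := by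
  obtain ⟨w, hw, rfl⟩ := evalBlock_some.1 h
  rcases le_or_gt 0 k with hk0 | hk0
  · obtain ⟨j, hj⟩ : ∃ j, k.toNat = j + 1 := ⟨k.toNat - 1, by omega⟩
    rw [zPow, if_pos hk0, hj] at hw
    rcases E.pos j hw with ⟨h1, h2, _⟩ | ⟨h1, _⟩
    · left
      refine ⟨evalBlock_some.2 ⟨w, ?_, rfl⟩, hg.1 w (Or.inr (Or.inl h2))⟩
      rw [zPow, if_pos hk0, hj]; exact h1
    · subst h1
      exact Or.inr ⟨E.bad_of _ hg.2.1 hg.2.2, rfl⟩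
  · obtain ⟨j, hj⟩ : ∃ j, (-k).toNat = j + 1 := ⟨(-k).toNat - 1, by omega⟩
    rw [zPow, if_neg (not_le.2 hk0), hj] at hw
    obtain ⟨p1, p2, _, p4⟩ := E.neg1 (j+1) hq hw
    left
    refine ⟨evalBlock_some.2 ⟨w, ?_, rfl⟩, hg.1 w (Or.inl (p4 (Nat.succ_ne_zero j)))⟩
    rw [zPow, if_neg (not_le.2 hk0), hj]; exact p1

lemma bl2 {g : Equiv.Perm ℕ} {k : ℤ} {r : ℕ} (hg : E.Cond g) (hk : k ≠ 0)
    (h : evalBlock E.t (g, k) E.m = some r) : r ≠ E.m := by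
  obtain ⟨w, hw, rfl⟩ := evalBlock_some.1 h
  rcases le_or_gt 0 k with hk0 | hk0
  · obtain ⟨j, hj⟩ : ∃ j, k.toNat = j + 1 := ⟨k.toNat - 1, by omega⟩
    rw [zPow, if_pos hk0, hj, natPow_none E.t_m_none j] at hw
    cases hw
  · obtain ⟨j, hj⟩ : ∃ j, (-k).toNat = j + 1 := ⟨(-k).toNat - 1, by omega⟩
    rw [zPow, if_neg (not_le.2 hk0), hj] at hw
    obtain ⟨_, _, hgood⟩ := E.neg2 hw
    exact hg.1 w hgood

lemma zmono {k : ℤ} {q r : ℕ} (h : zPow E.s k q = some r) : zPow E.t k q = some r := by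
  rcases le_or_gt 0 k with h0 | h0
  · rw [zPow, if_pos h0] at h ⊢
    exact natPow_mono (fun _ _ hh => E.mono hh) _ _ _ h
  · rw [zPow, if_neg (not_le.2 h0)] at h ⊢
    exact natPow_mono (fun _ _ hh => E.monos hh) _ _ _ h

lemma bsmono {bs : List (Equiv.Perm ℕ × ℤ)} :
    ∀ {q r : ℕ}, evalBlocks E.s bs q = some r → evalBlocks E.t bs q = some r := by
  induction bs with
  | nil => exact fun h => h
  | cons b bs ih =>
    intro q r h
    obtain ⟨w, hw, hrest⟩ := evalBlocks_cons_some.1 h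
    rcases b with ⟨g, k⟩
    obtain ⟨w', hw', rfl⟩ := evalBlock_some.1 hw
    exact evalBlocks_cons_some.2 ⟨g w', evalBlock_some.2 ⟨w', E.zmono hw', rfl⟩, ih hrest⟩

lemma chain : ∀ (bs : List (Equiv.Perm ℕ × ℤ)), (∀ b ∈ bs, E.Cond b.1 ∧ b.2 ≠ 0) →
    ∀ {q r : ℕ}, q ≠ E.m → evalBlocks E.t bs q = some r →
    (evalBlocks E.s bs q = some r ∧ r ≠ E.m) ∨ (E.Bad r ∧ bs ≠ []) := by
  intro bs
  induction bs with
  | nil =>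
    intro _ q r hq h
    have := evalBlocks_nil_some.1 h
    subst this
    exact Or.inl ⟨evalBlocks_nil_some.2 rfl, hq⟩
  | cons b bs ih =>
    intro hbs q r hq h
    obtain ⟨w, hw, hrest⟩ := evalBlocks_cons_some.1 h
    obtain ⟨hc, hk⟩ := hbs b (List.mem_cons_self)
    rcases b with ⟨g, kk⟩
    rcases E.bl1 hc hk hq hw with ⟨hws, hwm⟩ | ⟨hbad, -⟩
    · rcases ih (fun b hb => hbs b (List.mem_cons_of_mem _ hb)) hwm hrest with ⟨h1, h2⟩ | ⟨h1, _⟩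
      · exact Or.inl ⟨evalBlocks_cons_some.2 ⟨w, hws, h1⟩, h2⟩
      · exact Or.inr ⟨h1, by simp⟩
    · cases bs with
      | nil =>
        have := evalBlocks_nil_some.1 hrest
        subst this
        exact Or.inr ⟨hbad, by simp⟩
      | cons b' bs' =>
        exfalso
        obtain ⟨w', hw', _⟩ := evalBlocks_cons_some.1 hrest
        rcases b' with ⟨g', k'⟩
        obtain ⟨w'', hww, _⟩ := evalBlock_some.1 hw'
        have hnone : zPow E.t k' w = none :=
          E.zPow_bad_none (hbs (g', k') (by simp)).2 hbad
        rw [hnone] at hww; cases hww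

lemma pFix_blocks {bs : List (Equiv.Perm ℕ × ℤ)}
    (hbs : ∀ b ∈ bs, E.Cond b.1 ∧ b.2 ≠ 0) (hne : bs ≠ []) :
    pFix (evalBlocks E.s bs) = pFix (evalBlocks E.t bs) := by
  ext p
  simp only [pFix, Set.mem_setOf_eq]
  constructor
  · exact fun h => E.bsmono h
  · intro hp
    by_cases hpm : p = E.m
    · exfalso
      subst hpm
      cases bs with
      | nil => exact hne rfl
      | cons b bs' =>
        obtain ⟨w, hw, hrest⟩ := evalBlocks_cons_some.1 hp
        rcases b with ⟨g, k⟩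
        have hwm : w ≠ E.m :=
          E.bl2 (hbs _ (List.mem_cons_self)).1 (hbs _ (List.mem_cons_self)).2 hw
        rcases E.chain bs' (fun b hb => hbs b (List.mem_cons_of_mem _ hb)) hwm hrest with
          ⟨_, h2⟩ | ⟨hbad, _⟩
        · exact h2 rfl
        · exact hbad.2.2.2 rfl
    · rcases E.chain bs hbs hpm hp with ⟨h1, _⟩ | ⟨hbad, _⟩
      · exact h1
      · exfalso
        cases bs with
        | nil => exact hne rfl
        | cons b bs' =>
          obtain ⟨w, hw, _⟩ := evalBlocks_cons_some.1 hp
          rcases b with ⟨g, k⟩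
          obtain ⟨w', hww, _⟩ := evalBlock_some.1 hw
          have hnone : zPow E.t k p = none :=
            E.zPow_bad_none (hbs _ (List.mem_cons_self)).2 hbad
          rw [hnone] at hww; cases hww

lemma pFix_zpow {k : ℤ} (hk : k ≠ 0) : pFix (zPow E.s k) = pFix (zPow E.t k) := by
  ext p
  simp only [pFix, Set.mem_setOf_eq]
  constructor
  · exact fun h => E.zmono h
  · intro hp
    rcases le_or_gt 0 k with h0 | h0
    · obtain ⟨j, hj⟩ : ∃ j, k.toNat = j + 1 := ⟨k.toNat - 1, by omega⟩
      rw [zPow, if_pos h0, hj] at hp ⊢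
      rcases E.pos j hp with ⟨h1, _, _⟩ | ⟨h1, _⟩
      · exact h1
      · exfalso
        rw [h1, natPow_none E.t_m_none j] at hp
        cases hp
    · obtain ⟨j, hj⟩ : ∃ j, (-k).toNat = j + 1 := ⟨(-k).toNat - 1, by omega⟩
      rw [zPow, if_neg (not_le.2 h0), hj] at hp ⊢
      by_cases hpm : p = E.m
      · exfalso
        rw [hpm] at hp
        obtain ⟨_, p2, _⟩ := E.neg2 hp
        exact p2 rfl
      · obtain ⟨p1, _, _, _⟩ := E.neg1 (j+1) hpm hp
        exact p1

end ExtData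
end Core
section Assemble

lemma symm_formula (s t : ℕ ≃. ℕ) (n m : ℕ) (hsn : s n = none)
    (ht : ∀ k, t k = if k = n then some m else s k) :
    ∀ k, t.symm k = if k = m then some n else s.symm k := by
  intro k
  by_cases hk : k = m
  · subst hk
    rw [if_pos rfl]
    apply t.eq_some_iff.2
    rw [ht, if_pos rfl]
  · rw [if_neg hk]
    apply optionEq
    intro j
    rw [t.eq_some_iff, ht j, s.eq_some_iff]
    constructor
    · intro h
      by_cases hj : j = n
      · rw [if_pos hj] at h; exact absurd (Option.some_inj.1 h).symm hk
      · rwa [if_neg hj] at h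
    · intro h
      have hj : j ≠ n := fun hj => by rw [hj, hsn] at h; cases h
      rwa [if_neg hj]

lemma exists_extension (s : ℕ ≃. ℕ) (hs : {k : ℕ | (s k).isSome = true}.Finite)
    (n m : ℕ) (hsn : s n = none) (hssm : s.symm m = none) :
    ∃ t : ℕ ≃. ℕ, {k : ℕ | (t k).isSome = true}.Finite ∧
      (∀ k, t k = if k = n then some m else s k) := by
  refine ⟨⟨fun kk => if kk = n then some m else s kk,
          fun kk => if kk = m then some n else s.symm kk, ?_⟩, ?_, fun kk => rfl⟩
  · intro a b
    by_cases hb : b = m <;> by_cases ha : a = n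
    · subst hb; subst ha; simp
    · subst hb
      rw [if_pos rfl, if_neg ha]
      constructor
      · intro h; exact absurd (Option.some_inj.1 h).symm ha
      · intro h
        have := s.eq_some_iff.2 h
        rw [hssm] at this; cases this
    · subst ha
      rw [if_neg hb, if_pos rfl]
      constructor
      · intro h
        have := s.eq_some_iff.1 h
        rw [hsn] at this; cases this
      · intro h; exact absurd (Option.some_inj.1 h).symm hb
    · rw [if_neg hb, if_neg ha]
      exact s.eq_some_iff
  · apply (hs.insert n).subset
    intro kk hkk
    rw [Set.mem_insert_iff]
    by_cases h : kk = n
    · exact Or.inl h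
    · right
      have hkk' : (if kk = n then some m else s kk).isSome = true := hkk
      rwa [if_neg h] at hkk'

lemma ran_finite {s : ℕ ≃. ℕ} (hs : {k : ℕ | (s k).isSome = true}.Finite) :
    {k : ℕ | (s.symm k).isSome = true}.Finite := by
  apply (hs.image (fun j => (s j).getD 0)).subset
  intro kk hk
  obtain ⟨j, hj⟩ := Option.isSome_iff_exists.1 hk
  have hsj : s j = some kk := s.eq_some_iff.1 hj
  exact ⟨j, by simp [hsj], by simp [hsj]⟩

/-- the set of values of `m` that can interfere with the permutation `g`. -/
def gBad (S : Set ℕ) (g : Equiv.Perm ℕ) : Set ℕ :=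
  (g '' S) ∪ (⇑g ⁻¹' S) ∪ Function.fixedPoints ⇑g

lemma gBad_finite {S : Set ℕ} (hS : S.Finite) {g : Equiv.Perm ℕ}
    (hg : (Function.fixedPoints ⇑g).Finite) : (gBad S g).Finite :=
  ((hS.image _).union (hS.preimage g.injective.injOn)).union hg

lemma ExtData.cond_of_notMem (E : ExtData) (S : Set ℕ) (hsub : ∀ v, E.Good v → v ∈ S)
    (g : Equiv.Perm ℕ) (h : E.m ∉ gBad S g) : E.Cond g := by
  rw [gBad] at h
  simp only [Set.mem_union, not_or] at h
  refine ⟨fun v hv hgv => h.1.1 ⟨v, hsub v hv, hgv⟩,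
    fun hgood => h.1.2 (hsub _ hgood), fun hfix => h.2 hfix⟩

section Words
variable {A : Type*} [DecidableEq A] (ρ : A → Equiv.Perm ℕ)

lemma wordEval_xpow (s : ℕ ≃. ℕ) (k : ℤ) :
    wordEval ρ s (xgen A ^ k) = zPow s k :=
  evalList_xpow ρ s k

lemma wordEval_blocks (s : ℕ ≃. ℕ) (w : FreeGroup (A ⊕ Unit)) {l : ℕ}
    (u : Fin (l+1) → FreeGroup A) (k : Fin (l+1) → ℤ)
    (hword : w.toWord = (List.ofFn fun i : Fin (l + 1) =>
      (embA A (u i)).toWord ++ (xgen A ^ k i).toWord).flatten) :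
    wordEval ρ s w =
      evalBlocks s (((List.ofFn fun i : Fin (l+1) => (u i, k i)).map
        fun p => ((FreeGroup.lift ρ p.1), p.2)).reverse) := by
  have h1 : (List.ofFn fun i : Fin (l + 1) => (embA A (u i)).toWord ++ (xgen A ^ k i).toWord)
      = (List.ofFn fun i : Fin (l+1) => (u i, k i)).map
          (fun p => (embA A p.1).toWord ++ (xgen A ^ p.2).toWord) := by
    rw [List.map_ofFn]; rfl
  show evalList ρ s w.toWord = _
  rw [hword, h1, evalList_flatten]

lemma ExtData.pFix_word1 (E : ExtData) (w : FreeGroup (A ⊕ Unit)) {l : ℕ}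
    (u : Fin (l+1) → FreeGroup A) (k : Fin (l+1) → ℤ)
    (hk : ∀ i, k i ≠ 0) (hcond : ∀ i, E.Cond (FreeGroup.lift ρ (u i)))
    (hword : w.toWord = (List.ofFn fun i : Fin (l + 1) =>
      (embA A (u i)).toWord ++ (xgen A ^ k i).toWord).flatten) :
    pFix (wordEval ρ E.s w) = pFix (wordEval ρ E.t w) := by
  rw [wordEval_blocks ρ E.s w u k hword, wordEval_blocks ρ E.t w u k hword]
  apply E.pFix_blocks
  · intro b hb
    rw [List.mem_reverse, List.mem_map] at hb
    obtain ⟨p, hp, rfl⟩ := hb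
    rw [List.mem_ofFn] at hp
    obtain ⟨i, rfl⟩ := hp
    exact ⟨hcond i, hk i⟩
  · intro hnil
    apply_fun List.length at hnil
    simp at hnil

lemma ExtData.pFix_xpow1 (E : ExtData) {k : ℤ} (hk : k ≠ 0) :
    pFix (wordEval ρ E.s (xgen A ^ k)) = pFix (wordEval ρ E.t (xgen A ^ k)) := by
  rw [wordEval_xpow, wordEval_xpow]
  exact E.pFix_zpow hk

lemma ExtData.pFix_word_dual (E : ExtData) (s0 t0 : ℕ ≃. ℕ)
    (hEs : E.s = s0.symm) (hEt : E.t = t0.symm)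
    (w : FreeGroup (A ⊕ Unit)) {l : ℕ}
    (u : Fin (l+1) → FreeGroup A) (k : Fin (l+1) → ℤ)
    (hk : ∀ i, k i ≠ 0) (hcond : ∀ i, E.Cond (FreeGroup.lift ρ (u i)))
    (hword : w.toWord = (List.ofFn fun i : Fin (l + 1) =>
      (embA A (u i)).toWord ++ (xgen A ^ k i).toWord).flatten) :
    pFix (wordEval ρ s0 w) = pFix (wordEval ρ t0 w) := by
  rw [wordEval_blocks ρ s0 w u k hword, wordEval_blocks ρ t0 w u k hword,
    ← evalBlocks_symm_neg s0, ← evalBlocks_symm_neg t0, ← hEs, ← hEt]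
  apply E.pFix_blocks
  · intro b hb
    rw [List.mem_map] at hb
    obtain ⟨b0, hb0, rfl⟩ := hb
    rw [List.mem_reverse, List.mem_map] at hb0
    obtain ⟨p, hp, rfl⟩ := hb0
    rw [List.mem_ofFn] at hp
    obtain ⟨i, rfl⟩ := hp
    exact ⟨hcond i, neg_ne_zero.2 (hk i)⟩
  · intro hnil
    apply_fun List.length at hnil
    simp at hnil

lemma ExtData.pFix_xpow_dual (E : ExtData) (s0 t0 : ℕ ≃. ℕ)
    (hEs : E.s = s0.symm) (hEt : E.t = t0.symm) {k : ℤ} (hk : k ≠ 0) :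
    pFix (wordEval ρ s0 (xgen A ^ k)) = pFix (wordEval ρ t0 (xgen A ^ k)) := by
  rw [wordEval_xpow, wordEval_xpow, zPow_symm_neg' s0, zPow_symm_neg' t0, ← hEs, ← hEt]
  exact E.pFix_zpow (neg_ne_zero.2 hk)

end Words

/-- Domain/range extension for finite partial injections: if `ρ` induces a cofinitary
representation, `s` is a finite partial injection and `W₀` is a finite set of nice words,
then (1) for `n ∉ dom(s)` and all but finitely many `m`, `t := s ∪ {(n, m)}` is a finite
partial injection with `fix(ρ[s](w)) = fix(ρ[t](w))` for all `w ∈ W₀`; and (2) for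
`m ∉ ran(s)` and all but finitely many `n`, the same holds. -/
theorem extend_domain_range {A : Type*} [DecidableEq A] (ρ : A → Equiv.Perm ℕ)
    (hρ : IsCofinitaryRep ρ) (s : ℕ ≃. ℕ)
    (hs : {k : ℕ | (s k).isSome = true}.Finite)
    (W₀ : Set (FreeGroup (A ⊕ Unit))) (hW₀fin : W₀.Finite)
    (hW₀ : ∀ w ∈ W₀, NiceWord ρ w) :
    (∀ n : ℕ, s n = none →
      ∀ᶠ m in Filter.cofinite, ∃ t : ℕ ≃. ℕ,
        {k : ℕ | (t k).isSome = true}.Finite ∧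
        (∀ k, t k = if k = n then some m else s k) ∧
        ∀ w ∈ W₀, pFix (wordEval ρ s w) = pFix (wordEval ρ t w)) ∧
    (∀ m : ℕ, s.symm m = none →
      ∀ᶠ n in Filter.cofinite, ∃ t : ℕ ≃. ℕ,
        {k : ℕ | (t k).isSome = true}.Finite ∧
        (∀ k, t k = if k = n then some m else s k) ∧
        ∀ w ∈ W₀, pFix (wordEval ρ s w) = pFix (wordEval ρ t w)) := by
  have hran := ran_finite hs
  constructor
  · -- part (1): extend the domain at n
    intro n hn
    set GS : Set ℕ :=
      {v | (s v).isSome = true ∨ (s.symm v).isSome = true ∨ v = n} with hGSdef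
    have hGSfin : GS.Finite := by
      apply ((hs.union hran).union (Set.finite_singleton n)).subset
      rintro v (h1 | h2 | h3)
      · exact Or.inl (Or.inl h1)
      · exact Or.inl (Or.inr h2)
      · exact Or.inr h3
    have hword : ∀ w ∈ W₀, ∀ᶠ (m : ℕ) in Filter.cofinite,
        m ∉ GS → ∀ t : ℕ ≃. ℕ, (∀ kk, t kk = if kk = n then some m else s kk) →
          pFix (wordEval ρ s w) = pFix (wordEval ρ t w) := by
      intro w hw
      rcases hW₀ w hw with ⟨kk, hkk, hwpow⟩ | ⟨l, u, k, hu, hk, hwblocks⟩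
      · apply Filter.Eventually.of_forall
        intro m hmGS t ht
        have hsm : s m = none :=
          Option.not_isSome_iff_eq_none.1 (fun h => hmGS (Or.inl h))
        have hssm : s.symm m = none :=
          Option.not_isSome_iff_eq_none.1 (fun h => hmGS (Or.inr (Or.inl h)))
        have hmn : m ≠ n := fun h => hmGS (Or.inr (Or.inr h))
        rw [hwpow]
        exact (ExtData.mk s t n m hn hsm hssm hmn ht).pFix_xpow1 ρ hkk
      · have hBfin : (⋃ i, gBad GS (FreeGroup.lift ρ (u i))).Finite :=
          Set.finite_iUnion fun i => gBad_finite hGSfin ((hρ (u i)).resolve_left (hu i))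
        filter_upwards [hBfin.eventually_cofinite_notMem] with m hmB
        intro hmGS t ht
        have hsm : s m = none :=
          Option.not_isSome_iff_eq_none.1 (fun h => hmGS (Or.inl h))
        have hssm : s.symm m = none :=
          Option.not_isSome_iff_eq_none.1 (fun h => hmGS (Or.inr (Or.inl h)))
        have hmn : m ≠ n := fun h => hmGS (Or.inr (Or.inr h))
        have hcond : ∀ i,
            (ExtData.mk s t n m hn hsm hssm hmn ht).Cond (FreeGroup.lift ρ (u i)) := by
          intro i
          apply ExtData.cond_of_notMem (ExtData.mk s t n m hn hsm hssm hmn ht) GS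
            (fun v hv => hv)
          exact fun hmem => hmB (Set.mem_iUnion.2 ⟨i, hmem⟩)
        exact (ExtData.mk s t n m hn hsm hssm hmn ht).pFix_word1 ρ w u k hk hcond hwblocks
    have hall := (Filter.eventually_all_finite hW₀fin).2 hword
    filter_upwards [hall, hGSfin.eventually_cofinite_notMem] with m hm1 hm2
    have hssm : s.symm m = none :=
      Option.not_isSome_iff_eq_none.1 (fun h => hm2 (Or.inr (Or.inl h)))
    obtain ⟨t, htfin, htform⟩ := exists_extension s hs n m hn hssm
    exact ⟨t, htfin, htform, fun w hw => hm1 w hw hm2 t htform⟩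
  · -- part (2): extend the range at m
    intro m hm
    set GS : Set ℕ :=
      {v | (s v).isSome = true ∨ (s.symm v).isSome = true ∨ v = m} with hGSdef
    have hGSfin : GS.Finite := by
      apply ((hs.union hran).union (Set.finite_singleton m)).subset
      rintro v (h1 | h2 | h3)
      · exact Or.inl (Or.inl h1)
      · exact Or.inl (Or.inr h2)
      · exact Or.inr h3
    have hsub : ∀ (t : ℕ ≃. ℕ) (n : ℕ) hsn hsm hssm hmn ht, ∀ v,
        (ExtData.mk s.symm t.symm m n hsn hsm hssm hmn ht).Good v → v ∈ GS := by
      intro t n hsn hsm hssm hmn ht v hv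
      rcases hv with h1 | h2 | h3
      · exact Or.inr (Or.inl h1)
      · rw [ExtData.inRan, PEquiv.symm_symm] at h2
        exact Or.inl h2
      · exact Or.inr (Or.inr h3)
    have hword : ∀ w ∈ W₀, ∀ᶠ (n : ℕ) in Filter.cofinite,
        n ∉ GS → ∀ t : ℕ ≃. ℕ, (∀ kk, t kk = if kk = n then some m else s kk) →
          pFix (wordEval ρ s w) = pFix (wordEval ρ t w) := by
      intro w hw
      rcases hW₀ w hw with ⟨kk, hkk, hwpow⟩ | ⟨l, u, k, hu, hk, hwblocks⟩
      · apply Filter.Eventually.of_forall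
        intro n hnGS t ht
        have hsn : s n = none :=
          Option.not_isSome_iff_eq_none.1 (fun h => hnGS (Or.inl h))
        have hssn : s.symm n = none :=
          Option.not_isSome_iff_eq_none.1 (fun h => hnGS (Or.inr (Or.inl h)))
        have hnm : n ≠ m := fun h => hnGS (Or.inr (Or.inr h))
        rw [hwpow]
        exact (ExtData.mk s.symm t.symm m n hm hssn
          (by rw [PEquiv.symm_symm]; exact hsn) hnm
          (symm_formula s t n m hsn ht)).pFix_xpow_dual ρ s t rfl rfl hkk
      · have hBfin : (⋃ i, gBad GS (FreeGroup.lift ρ (u i))).Finite :=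
          Set.finite_iUnion fun i => gBad_finite hGSfin ((hρ (u i)).resolve_left (hu i))
        filter_upwards [hBfin.eventually_cofinite_notMem] with n hnB
        intro hnGS t ht
        have hsn : s n = none :=
          Option.not_isSome_iff_eq_none.1 (fun h => hnGS (Or.inl h))
        have hssn : s.symm n = none :=
          Option.not_isSome_iff_eq_none.1 (fun h => hnGS (Or.inr (Or.inl h)))
        have hnm : n ≠ m := fun h => hnGS (Or.inr (Or.inr h))
        have hcond : ∀ i,
            (ExtData.mk s.symm t.symm m n hm hssn
              (by rw [PEquiv.symm_symm]; exact hsn) hnm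
              (symm_formula s t n m hsn ht)).Cond (FreeGroup.lift ρ (u i)) := by
          intro i
          apply ExtData.cond_of_notMem _ GS (hsub t n _ _ _ _ _)
          exact fun hmem => hnB (Set.mem_iUnion.2 ⟨i, hmem⟩)
        exact (ExtData.mk s.symm t.symm m n hm hssn
          (by rw [PEquiv.symm_symm]; exact hsn) hnm
          (symm_formula s t n m hsn ht)).pFix_word_dual ρ s t rfl rfl w u k hk hcond hwblocks
    have hall := (Filter.eventually_all_finite hW₀fin).2 hword
    filter_upwards [hall, hGSfin.eventually_cofinite_notMem] with n hn1 hn2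
    have hsn : s n = none :=
      Option.not_isSome_iff_eq_none.1 (fun h => hn2 (Or.inl h))
    obtain ⟨t, htfin, htform⟩ := exists_extension s hs n m hsn hm
    exact ⟨t, htfin, htform, fun w hw => hn1 w hw hn2 t htform⟩
end Assemble
end
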